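/- Let G be a cograph that is in-partitionable and such that every proper induced subgraph of G is partitionable. If G has a universal vertex v such that the graph G \ v obtained by deleting v is connected, then G contains one of the following graphs as an induced subgraph: H1 = 2K1 ⊕ 2K1 ⊕ 2K1 ⊕ K1, H2 = P3 ⊕ K1 ⊕ 2K2, H4 = P3 ⊕ (K2 ∪ P3), H5 = (K2 ∪ K1) ⊕ K1 ⊕ 2K2, H13 = K2 ⊕ (P3 ∪ 2K3), H14 = K2 ⊕ (K3 ∪ (P3 ⊕ K1)), H15 = K2 ⊕ (K3 ∪ (K1 ⊕ (K1 ∪ K2))), H17 = K3 ⊕ 2K3. -/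

import Mathlib

open SimpleGraph

/-- The disjoint union `G ∪ H` of two vertex-disjoint graphs. -/
def gUnion {α β : Type*} (G : SimpleGraph α) (H : SimpleGraph β) : SimpleGraph (α ⊕ β) where
  Adj x y :=
    match x, y with
    | Sum.inl a, Sum.inl b => G.Adj a b
    | Sum.inr a, Sum.inr b => H.Adj a b
    | _, _ => False
  symm := by
    constructor
    rintro (a | a) (b | b) h
    · exact G.adj_symm h
    · exact h.elim
    · exact h.elim
    · exact H.adj_symm h
  loopless := by
    constructor
    rintro (a | a) h
    · exact G.loopless.irrefl a h
    · exact H.loopless.irrefl a h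

/-- The join `G ⊕ H` of two vertex-disjoint graphs: disjoint union plus all edges across. -/
def gJoin {α β : Type*} (G : SimpleGraph α) (H : SimpleGraph β) : SimpleGraph (α ⊕ β) where
  Adj x y :=
    match x, y with
    | Sum.inl a, Sum.inl b => G.Adj a b
    | Sum.inr a, Sum.inr b => H.Adj a b
    | _, _ => True
  symm := by
    constructor
    rintro (a | a) (b | b) h
    · exact G.adj_symm h
    · trivial
    · trivial
    · exact H.adj_symm h
  loopless := by
    constructor
    rintro (a | a) h
    · exact G.loopless.irrefl a h
    · exact H.loopless.irrefl a h

/-- The complete graph `Kₙ`. -/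
def KG (n : ℕ) : SimpleGraph (Fin n) := ⊤

/-- The edgeless graph `nK₁` on `n` vertices. -/
def EG (n : ℕ) : SimpleGraph (Fin n) := ⊥

/-- `G` contains `H`, i.e. `H` is isomorphic to an induced subgraph of `G`. -/
def Contains {α β : Type*} (G : SimpleGraph α) (H : SimpleGraph β) : Prop :=
  Nonempty (H ↪g G)

/-- A cograph is a `P₄`-free graph. -/
def IsCograph {α : Type*} (G : SimpleGraph α) : Prop :=
  ¬ Contains G (pathGraph 4)

/-- `G` is partitionable: its vertex set splits into a part inducing a triangle-free
graph and a part inducing a `P₃`-free graph. -/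
def Partitionable {α : Type*} (G : SimpleGraph α) : Prop :=
  ∃ A : Set α, (G.induce A).CliqueFree 3 ∧ ¬ Contains (G.induce Aᶜ) (pathGraph 3)

/-- `G` is monopolar: its vertex set splits into an independent set and a part
inducing a `P₃`-free graph. -/
def Monopolar {α : Type*} (G : SimpleGraph α) : Prop :=
  ∃ A : Set α, (G.induce A).CliqueFree 2 ∧ ¬ Contains (G.induce Aᶜ) (pathGraph 3)

/-- `G` is (1,2)-partitionable: its vertex set can be partitioned into at most one
clique and at most two independent sets (equivalently, covered by them). -/
def OneTwoPartitionable {α : Type*} (G : SimpleGraph α) : Prop :=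
  ∃ C S₁ S₂ : Set α, C ∪ S₁ ∪ S₂ = Set.univ ∧ G.IsClique C ∧
    (G.induce S₁).CliqueFree 2 ∧ (G.induce S₂).CliqueFree 2

/-- A threshold graph is a `(2K₂, C₄, P₄)`-free graph. -/
def IsThreshold {α : Type*} (G : SimpleGraph α) : Prop :=
  ¬ Contains G (gUnion (KG 2) (KG 2)) ∧ ¬ Contains G (cycleGraph 4) ∧
    ¬ Contains G (pathGraph 4)

/-- The diamond `K₂ ⊕ 2K₁`. -/
def diamond := gJoin (KG 2) (EG 2)

/-- The paw `K₁ ⊕ (K₁ ∪ K₂)`. -/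
def paw := gJoin (KG 1) (gUnion (KG 1) (KG 2))

/-- The butterfly `K₁ ⊕ 2K₂`. -/
def butterfly := gJoin (KG 1) (gUnion (KG 2) (KG 2))

def twoK2 := gUnion (KG 2) (KG 2)

def twoK3 := gUnion (KG 3) (KG 3)

def K2uK1 := gUnion (KG 2) (KG 1)


def H1 := gJoin (EG 2) (gJoin (EG 2) (gJoin (EG 2) (KG 1)))
def H2 := gJoin (pathGraph 3) (gJoin (KG 1) twoK2)
def H3 := gJoin (EG 2) (gJoin K2uK1 K2uK1)
def H4 := gJoin (pathGraph 3) (gUnion (KG 2) (pathGraph 3))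
def H5 := gJoin K2uK1 (gJoin (KG 1) twoK2)
def H6 := gJoin K2uK1 (gUnion (KG 3) (pathGraph 3))
def H7 := gJoin K2uK1 (gUnion (KG 2) (gJoin (pathGraph 3) (KG 1)))
def H8 := gJoin K2uK1 (gUnion (KG 2) (gJoin (KG 1) K2uK1))
def H9 := gJoin (KG 1) (gUnion (KG 3) (gJoin (cycleGraph 4) (KG 1)))
def H10 := gJoin (KG 1) (gUnion (KG 3) (gJoin (KG 1) (gUnion (pathGraph 3) (KG 2))))
def H11 := gJoin (KG 1) (gUnion (KG 3) (gJoin (KG 2) twoK2))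
def H12 := gJoin (KG 1) (gUnion (KG 3) (gJoin K2uK1 K2uK1))
def H13 := gJoin (KG 2) (gUnion (pathGraph 3) twoK3)
def H14 := gJoin (KG 2) (gUnion (KG 3) (gJoin (pathGraph 3) (KG 1)))
def H15 := gJoin (KG 2) (gUnion (KG 3) (gJoin (KG 1) (gUnion (KG 1) (KG 2))))
def H16 := gJoin (gUnion (KG 3) (KG 2)) (gUnion (KG 3) (KG 1))
def H17 := gJoin (KG 3) twoK3


namespace PartAux
variable {α β γ δ : Type*}


variable {α β γ δ : Type*}

@[simp] lemma gJoin_adj_ll (G : SimpleGraph α) (H : SimpleGraph β) (a b : α) :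
    (gJoin G H).Adj (Sum.inl a) (Sum.inl b) ↔ G.Adj a b := Iff.rfl
@[simp] lemma gJoin_adj_rr (G : SimpleGraph α) (H : SimpleGraph β) (a b : β) :
    (gJoin G H).Adj (Sum.inr a) (Sum.inr b) ↔ H.Adj a b := Iff.rfl
@[simp] lemma gJoin_adj_lr (G : SimpleGraph α) (H : SimpleGraph β) (a : α) (b : β) :
    (gJoin G H).Adj (Sum.inl a) (Sum.inr b) ↔ True := Iff.rfl
@[simp] lemma gJoin_adj_rl (G : SimpleGraph α) (H : SimpleGraph β) (a : β) (b : α) :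
    (gJoin G H).Adj (Sum.inr a) (Sum.inl b) ↔ True := Iff.rfl
@[simp] lemma gUnion_adj_ll (G : SimpleGraph α) (H : SimpleGraph β) (a b : α) :
    (gUnion G H).Adj (Sum.inl a) (Sum.inl b) ↔ G.Adj a b := Iff.rfl
@[simp] lemma gUnion_adj_rr (G : SimpleGraph α) (H : SimpleGraph β) (a b : β) :
    (gUnion G H).Adj (Sum.inr a) (Sum.inr b) ↔ H.Adj a b := Iff.rfl
@[simp] lemma gUnion_adj_lr (G : SimpleGraph α) (H : SimpleGraph β) (a : α) (b : β) :
    (gUnion G H).Adj (Sum.inl a) (Sum.inr b) ↔ False := Iff.rfl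
@[simp] lemma gUnion_adj_rl (G : SimpleGraph α) (H : SimpleGraph β) (a : β) (b : α) :
    (gUnion G H).Adj (Sum.inr a) (Sum.inl b) ↔ False := Iff.rfl

/-- An embedding of `H` into `X` whose range lies in `S`. -/
def EmbIn (X : SimpleGraph β) (H : SimpleGraph γ) (S : Set β) : Prop :=
  ∃ f : γ → β, (∀ a, f a ∈ S) ∧ Function.Injective f ∧
    ∀ a b, X.Adj (f a) (f b) ↔ H.Adj a b

lemma EmbIn.mono {X : SimpleGraph β} {H : SimpleGraph γ} {S S' : Set β}
    (hS : S ⊆ S') (h : EmbIn X H S) : EmbIn X H S' := by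
  obtain ⟨f, hf, hinj, hadj⟩ := h
  exact ⟨f, fun a => hS (hf a), hinj, hadj⟩

lemma EmbIn.contains {X : SimpleGraph β} {H : SimpleGraph γ} {S : Set β}
    (h : EmbIn X H S) : Contains X H := by
  obtain ⟨f, _, hinj, hadj⟩ := h
  exact ⟨⟨⟨f, hinj⟩, fun {a b} => hadj a b⟩⟩

lemma embIn_gJoin {X : SimpleGraph β} {H1 : SimpleGraph γ} {H2 : SimpleGraph δ}
    {S1 S2 : Set β} (h1 : EmbIn X H1 S1) (h2 : EmbIn X H2 S2)
    (hcr : ∀ x ∈ S1, ∀ y ∈ S2, X.Adj x y) :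
    EmbIn X (gJoin H1 H2) (S1 ∪ S2) := by
  obtain ⟨f, hf, hfinj, hfadj⟩ := h1
  obtain ⟨g, hg, hginj, hgadj⟩ := h2
  refine ⟨Sum.elim f g, ?_, ?_, ?_⟩
  · rintro (a | a)
    · exact Or.inl (hf a)
    · exact Or.inr (hg a)
  · have hne : ∀ a b, f a ≠ g b := by
      intro a b he
      exact X.loopless.irrefl (g b) (he ▸ hcr (f a) (hf a) (g b) (hg b))
    rintro (a | a) (b | b) he <;> simp only [Sum.elim_inl, Sum.elim_inr] at he
    · exact congrArg Sum.inl (hfinj he)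
    · exact absurd he (hne a b)
    · exact absurd he.symm (hne b a)
    · exact congrArg Sum.inr (hginj he)
  · rintro (a | a) (b | b) <;>
      simp only [Sum.elim_inl, Sum.elim_inr, gJoin_adj_ll, gJoin_adj_rr, gJoin_adj_lr,
        gJoin_adj_rl, iff_true]
    · exact hfadj a b
    · exact hcr _ (hf a) _ (hg b)
    · exact (hcr _ (hf b) _ (hg a)).symm
    · exact hgadj a b

lemma embIn_gUnion {X : SimpleGraph β} {H1 : SimpleGraph γ} {H2 : SimpleGraph δ}
    {S1 S2 : Set β} (h1 : EmbIn X H1 S1) (h2 : EmbIn X H2 S2)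
    (hcr : ∀ x ∈ S1, ∀ y ∈ S2, ¬ X.Adj x y ∧ x ≠ y) :
    EmbIn X (gUnion H1 H2) (S1 ∪ S2) := by
  obtain ⟨f, hf, hfinj, hfadj⟩ := h1
  obtain ⟨g, hg, hginj, hgadj⟩ := h2
  refine ⟨Sum.elim f g, ?_, ?_, ?_⟩
  · rintro (a | a)
    · exact Or.inl (hf a)
    · exact Or.inr (hg a)
  · rintro (a | a) (b | b) he <;> simp only [Sum.elim_inl, Sum.elim_inr] at he
    · exact congrArg Sum.inl (hfinj he)
    · exact absurd he (hcr _ (hf a) _ (hg b)).2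
    · exact absurd he.symm (hcr _ (hf b) _ (hg a)).2
    · exact congrArg Sum.inr (hginj he)
  · rintro (a | a) (b | b) <;>
      simp only [Sum.elim_inl, Sum.elim_inr, gUnion_adj_ll, gUnion_adj_rr, gUnion_adj_lr,
        gUnion_adj_rl, iff_false]
    · exact hfadj a b
    · exact (hcr _ (hf a) _ (hg b)).1
    · exact fun h => (hcr _ (hf b) _ (hg a)).1 h.symm
    · exact hgadj a b

lemma embIn_K1 {X : SimpleGraph β} {x : β} {S : Set β} (hx : x ∈ S) :
    EmbIn X (KG 1) S := by
  refine ⟨fun _ => x, fun _ => hx, fun a b _ => Subsingleton.elim a b, ?_⟩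
  intro a b
  have : a = b := Subsingleton.elim a b
  subst this
  simp [KG]

lemma embIn_K2 {X : SimpleGraph β} {x y : β} {S : Set β} (hx : x ∈ S) (hy : y ∈ S)
    (hadj : X.Adj x y) : EmbIn X (KG 2) S := by
  have h1 := hadj.ne
  have h1' := hadj.ne'
  have s1 := hadj.symm
  have l := X.loopless
  refine ⟨![x, y], ?_, ?_, ?_⟩
  · intro a; fin_cases a <;> assumption
  · intro a b; fin_cases a <;> fin_cases b <;> simp_all [Fin.ext_iff]
  · intro a b; fin_cases a <;> fin_cases b <;> simp_all [KG] <;> decide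

lemma embIn_K3 {X : SimpleGraph β} {x y z : β} {S : Set β} (hx : x ∈ S) (hy : y ∈ S)
    (hz : z ∈ S) (hxy : X.Adj x y) (hxz : X.Adj x z) (hyz : X.Adj y z) :
    EmbIn X (KG 3) S := by
  have h1 := hxy.ne
  have h2 := hxz.ne
  have h3 := hyz.ne
  have h1' := hxy.ne'
  have h2' := hxz.ne'
  have h3' := hyz.ne' 
  have s1 := hxy.symm
  have s2 := hxz.symm
  have s3 := hyz.symm
  have l := X.loopless
  refine ⟨![x, y, z], ?_, ?_, ?_⟩
  · intro a; fin_cases a <;> assumption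
  · intro a b; fin_cases a <;> fin_cases b <;> simp_all [Fin.ext_iff]
  · intro a b; fin_cases a <;> fin_cases b <;> simp_all [KG] <;> decide

lemma embIn_E2 {X : SimpleGraph β} {x y : β} {S : Set β} (hx : x ∈ S) (hy : y ∈ S)
    (hne : x ≠ y) (hadj : ¬ X.Adj x y) : EmbIn X (EG 2) S := by
  have n1 : ¬ X.Adj y x := fun h => hadj h.symm
  have hne' : y ≠ x := fun h => hne h.symm
  have l := X.loopless
  refine ⟨![x, y], ?_, ?_, ?_⟩
  · intro a; fin_cases a <;> assumption
  · intro a b; fin_cases a <;> fin_cases b <;> simp_all [Fin.ext_iff]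
  · intro a b; fin_cases a <;> fin_cases b <;> simp_all [EG]

lemma embIn_P3 {X : SimpleGraph β} {x y z : β} {S : Set β} (hx : x ∈ S) (hy : y ∈ S)
    (hz : z ∈ S) (hxy : X.Adj x y) (hyz : X.Adj y z) (hxz : ¬ X.Adj x z) (hxz' : x ≠ z) :
    EmbIn X (pathGraph 3) S := by
  have h1 := hxy.ne
  have h2 := hyz.ne
  have h1' := hxy.ne'
  have h2' := hyz.ne'
  have s1 := hxy.symm
  have s2 := hyz.symm
  have n1 : ¬ X.Adj z x := fun h => hxz h.symm
  have hzx' : z ≠ x := fun h => hxz' h.symm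
  have l := X.loopless
  refine ⟨![x, y, z], ?_, ?_, ?_⟩
  · intro a; fin_cases a <;> assumption
  · intro a b; fin_cases a <;> fin_cases b <;> simp_all [Fin.ext_iff]
  · intro a b; fin_cases a <;> fin_cases b <;> simp_all [pathGraph_adj] <;> decide

lemma embIn_P4 {X : SimpleGraph β} {a b c d : β} {S : Set β} (ha : a ∈ S) (hb : b ∈ S)
    (hc : c ∈ S) (hd : d ∈ S) (hab : X.Adj a b) (hbc : X.Adj b c) (hcd : X.Adj c d)
    (hac : ¬ X.Adj a c) (hbd : ¬ X.Adj b d) (had : ¬ X.Adj a d)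
    (hac' : a ≠ c) (hbd' : b ≠ d) (had' : a ≠ d) :
    EmbIn X (pathGraph 4) S := by
  have h1 := hab.ne
  have h2 := hbc.ne
  have h3 := hcd.ne
  have h1' := hab.ne'
  have h2' := hbc.ne'
  have h3' := hcd.ne' 
  have s1 := hab.symm
  have s2 := hbc.symm
  have s3 := hcd.symm
  have n1 : ¬ X.Adj c a := fun h => hac h.symm
  have n2 : ¬ X.Adj d b := fun h => hbd h.symm
  have n3 : ¬ X.Adj d a := fun h => had h.symm
  have m1 : c ≠ a := fun h => hac' h.symm
  have m2 : d ≠ b := fun h => hbd' h.symm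
  have m3 : d ≠ a := fun h => had' h.symm
  have l := X.loopless
  refine ⟨![a, b, c, d], ?_, ?_, ?_⟩
  · intro i; fin_cases i <;> assumption
  · intro i j; fin_cases i <;> fin_cases j <;> simp_all [Fin.ext_iff]
  · intro i j; fin_cases i <;> fin_cases j <;> simp_all [pathGraph_adj] <;> decide


variable {G : SimpleGraph α}

lemma contains_H1 (a1 a2 b1 b2 c1 c2 v : α)
    (h0 : a1 ≠ a2) (h1 : ¬ G.Adj a1 a2) (h2 : b1 ≠ b2) (h3 : ¬ G.Adj b1 b2) (h4 : c1 ≠ c2) (h5 : ¬ G.Adj c1 c2) (h6 : G.Adj c1 v) (h7 : G.Adj c2 v) (h8 : G.Adj b1 c1) (h9 : G.Adj b1 c2) (h10 : G.Adj b1 v) (h11 : G.Adj b2 c1) (h12 : G.Adj b2 c2) (h13 : G.Adj b2 v) (h14 : G.Adj a1 b1) (h15 : G.Adj a1 b2) (h16 : G.Adj a1 c1) (h17 : G.Adj a1 c2) (h18 : G.Adj a1 v) (h19 : G.Adj a2 b1) (h20 : G.Adj a2 b2) (h21 : G.Adj a2 c1) (h22 : G.Adj a2 c2) (h23 : G.Adj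 a2 v) :
    Contains G H1 := by
  have e2 : EmbIn G (EG 2) ({a1, a2} : Set α) := embIn_E2 (x := a1) (y := a2) (by simp) (by simp) (by assumption) (by assumption)
  have e4 : EmbIn G (EG 2) ({b1, b2} : Set α) := embIn_E2 (x := b1) (y := b2) (by simp) (by simp) (by assumption) (by assumption)
  have e6 : EmbIn G (EG 2) ({c1, c2} : Set α) := embIn_E2 (x := c1) (y := c2) (by simp) (by simp) (by assumption) (by assumption)
  have e7 : EmbIn G (KG 1) ({v} : Set α) := embIn_K1 (X := G) (show v ∈ ({v} : Set α) by simp)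
  have e5 : EmbIn G (gJoin (EG 2) (KG 1)) (({c1, c2} : Set α) ∪ ({v} : Set α)) :=
    embIn_gJoin e6 e7
      (by intro x hx y hy; simp only [Set.mem_union, Set.mem_insert_iff, Set.mem_singleton_iff] at hx hy; rcases hx with rfl|rfl <;> rcases hy with rfl <;> assumption)
  have e3 : EmbIn G (gJoin (EG 2) (gJoin (EG 2) (KG 1))) (({b1, b2} : Set α) ∪ (({c1, c2} : Set α) ∪ ({v} : Set α))) :=
    embIn_gJoin e4 e5
      (by intro x hx y hy; simp only [Set.mem_union, Set.mem_insert_iff, Set.mem_singleton_iff] at hx hy; rcases hx with rfl|rfl <;> rcases hy with (rfl|rfl) | (rfl) <;> assumption)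
  have e1 : EmbIn G (gJoin (EG 2) (gJoin (EG 2) (gJoin (EG 2) (KG 1)))) (({a1, a2} : Set α) ∪ (({b1, b2} : Set α) ∪ (({c1, c2} : Set α) ∪ ({v} : Set α)))) :=
    embIn_gJoin e2 e3
      (by intro x hx y hy; simp only [Set.mem_union, Set.mem_insert_iff, Set.mem_singleton_iff] at hx hy; rcases hx with rfl|rfl <;> rcases hy with (rfl|rfl) | ((rfl|rfl) | (rfl)) <;> assumption)
  exact EmbIn.contains e1

lemma contains_H2 (p1 p2 p3 v q1 q2 r1 r2 : α)
    (h0 : G.Adj p1 p2) (h1 : G.Adj p2 p3) (h2 : ¬ G.Adj p1 p3) (h3 : p1 ≠ p3) (h4 : G.Adj q1 q2) (h5 : G.Adj r1 r2) (h6 : ¬ G.Adj q1 r1) (h7 : q1 ≠ r1) (h8 : ¬ G.Adj q1 r2) (h9 : q1 ≠ r2) (h10 : ¬ G.Adj q2 r1) (h11 : q2 ≠ r1) (h12 : ¬ G.Adj q2 r2) (h13 : q2 ≠ r2) (h14 : G.Adj v q1) (h15 : G.Adj v q2) (h16 : G.Adj v r1) (h17 : G.Adj v r2) (h18 : G.Adj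 p1 v) (h19 : G.Adj p1 q1) (h20 : G.Adj p1 q2) (h21 : G.Adj p1 r1) (h22 : G.Adj p1 r2) (h23 : G.Adj p2 v) (h24 : G.Adj p2 q1) (h25 : G.Adj p2 q2) (h26 : G.Adj p2 r1) (h27 : G.Adj p2 r2) (h28 : G.Adj p3 v) (h29 : G.Adj p3 q1) (h30 : G.Adj p3 q2) (h31 : G.Adj p3 r1) (h32 : G.Adj p3 r2) :
    Contains G H2 := by
  have e2 : EmbIn G (pathGraph 3) ({p1, p2, p3} : Set α) := embIn_P3 (x := p1) (y := p2) (z := p3) (by simp) (by simp) (by simp) (by assumption) (by assumption) (by assumption) (by assumption)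
  have e4 : EmbIn G (KG 1) ({v} : Set α) := embIn_K1 (X := G) (show v ∈ ({v} : Set α) by simp)
  have e6 : EmbIn G (KG 2) ({q1, q2} : Set α) := embIn_K2 (x := q1) (y := q2) (by simp) (by simp) (by assumption)
  have e7 : EmbIn G (KG 2) ({r1, r2} : Set α) := embIn_K2 (x := r1) (y := r2) (by simp) (by simp) (by assumption)
  have e5 : EmbIn G (gUnion (KG 2) (KG 2)) (({q1, q2} : Set α) ∪ ({r1, r2} : Set α)) :=
    embIn_gUnion e6 e7
      (by intro x hx y hy; simp only [Set.mem_union, Set.mem_insert_iff, Set.mem_singleton_iff] at hx hy; rcases hx with rfl|rfl <;> rcases hy with rfl|rfl <;> exact ⟨by assumption, by assumption⟩)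
  have e3 : EmbIn G (gJoin (KG 1) (gUnion (KG 2) (KG 2))) (({v} : Set α) ∪ (({q1, q2} : Set α) ∪ ({r1, r2} : Set α))) :=
    embIn_gJoin e4 e5
      (by intro x hx y hy; simp only [Set.mem_union, Set.mem_insert_iff, Set.mem_singleton_iff] at hx hy; rcases hx with rfl <;> rcases hy with (rfl|rfl) | (rfl|rfl) <;> assumption)
  have e1 : EmbIn G (gJoin (pathGraph 3) (gJoin (KG 1) (gUnion (KG 2) (KG 2)))) (({p1, p2, p3} : Set α) ∪ (({v} : Set α) ∪ (({q1, q2} : Set α) ∪ ({r1, r2} : Set α)))) :=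
    embIn_gJoin e2 e3
      (by intro x hx y hy; simp only [Set.mem_union, Set.mem_insert_iff, Set.mem_singleton_iff] at hx hy; rcases hx with rfl|rfl|rfl <;> rcases hy with (rfl) | ((rfl|rfl) | (rfl|rfl)) <;> assumption)
  exact EmbIn.contains e1

lemma contains_H4 (p1 p2 p3 k1 k2 s1 s2 s3 : α)
    (h0 : G.Adj p1 p2) (h1 : G.Adj p2 p3) (h2 : ¬ G.Adj p1 p3) (h3 : p1 ≠ p3) (h4 : G.Adj k1 k2) (h5 : G.Adj s1 s2) (h6 : G.Adj s2 s3) (h7 : ¬ G.Adj s1 s3) (h8 : s1 ≠ s3) (h9 : ¬ G.Adj k1 s1) (h10 : k1 ≠ s1) (h11 : ¬ G.Adj k1 s2) (h12 : k1 ≠ s2) (h13 : ¬ G.Adj k1 s3) (h14 : k1 ≠ s3) (h15 : ¬ G.Adj k2 s1) (h16 : k2 ≠ s1) (h17 : ¬ G.Adj k2 s2) (h18 : k2 ≠ s2) (h19 : ¬ G.Adj k2 s3) (h20 : k2 ≠ s3) (h21 : G.Adj p1 k1) (h22 : G.Adj p1 k2) (h23 : G.Adj p1 s1) (h24 : G.Adj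 p1 s2) (h25 : G.Adj p1 s3) (h26 : G.Adj p2 k1) (h27 : G.Adj p2 k2) (h28 : G.Adj p2 s1) (h29 : G.Adj p2 s2) (h30 : G.Adj p2 s3) (h31 : G.Adj p3 k1) (h32 : G.Adj p3 k2) (h33 : G.Adj p3 s1) (h34 : G.Adj p3 s2) (h35 : G.Adj p3 s3) :
    Contains G H4 := by
  have e2 : EmbIn G (pathGraph 3) ({p1, p2, p3} : Set α) := embIn_P3 (x := p1) (y := p2) (z := p3) (by simp) (by simp) (by simp) (by assumption) (by assumption) (by assumption) (by assumption)
  have e4 : EmbIn G (KG 2) ({k1, k2} : Set α) := embIn_K2 (x := k1) (y := k2) (by simp) (by simp) (by assumption)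
  have e5 : EmbIn G (pathGraph 3) ({s1, s2, s3} : Set α) := embIn_P3 (x := s1) (y := s2) (z := s3) (by simp) (by simp) (by simp) (by assumption) (by assumption) (by assumption) (by assumption)
  have e3 : EmbIn G (gUnion (KG 2) (pathGraph 3)) (({k1, k2} : Set α) ∪ ({s1, s2, s3} : Set α)) :=
    embIn_gUnion e4 e5
      (by intro x hx y hy; simp only [Set.mem_union, Set.mem_insert_iff, Set.mem_singleton_iff] at hx hy; rcases hx with rfl|rfl <;> rcases hy with rfl|rfl|rfl <;> exact ⟨by assumption, by assumption⟩)
  have e1 : EmbIn G (gJoin (pathGraph 3) (gUnion (KG 2) (pathGraph 3))) (({p1, p2, p3} : Set α) ∪ (({k1, k2} : Set α) ∪ ({s1, s2, s3} : Set α))) :=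
    embIn_gJoin e2 e3
      (by intro x hx y hy; simp only [Set.mem_union, Set.mem_insert_iff, Set.mem_singleton_iff] at hx hy; rcases hx with rfl|rfl|rfl <;> rcases hy with (rfl|rfl) | (rfl|rfl|rfl) <;> assumption)
  exact EmbIn.contains e1

lemma contains_H5 (s1 s2 s3 v q1 q2 r1 r2 : α)
    (h0 : G.Adj s1 s2) (h1 : ¬ G.Adj s1 s3) (h2 : s1 ≠ s3) (h3 : ¬ G.Adj s2 s3) (h4 : s2 ≠ s3) (h5 : G.Adj q1 q2) (h6 : G.Adj r1 r2) (h7 : ¬ G.Adj q1 r1) (h8 : q1 ≠ r1) (h9 : ¬ G.Adj q1 r2) (h10 : q1 ≠ r2) (h11 : ¬ G.Adj q2 r1) (h12 : q2 ≠ r1) (h13 : ¬ G.Adj q2 r2) (h14 : q2 ≠ r2) (h15 : G.Adj v q1) (h16 : G.Adj v q2) (h17 : G.Adj v r1) (h18 : G.Adj v r2) (h19 : G.Adj s1 v) (h20 : G.Adj s1 q1) (h21 : G.Adj s1 q2) (h22 : G.Adj s1 r1) (h23 : G.Adj s1 r2) (h24 : G.Adj s2 v) (h25 : G.Adj s2 q1)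 (h26 : G.Adj s2 q2) (h27 : G.Adj s2 r1) (h28 : G.Adj s2 r2) (h29 : G.Adj s3 v) (h30 : G.Adj s3 q1) (h31 : G.Adj s3 q2) (h32 : G.Adj s3 r1) (h33 : G.Adj s3 r2) :
    Contains G H5 := by
  have e3 : EmbIn G (KG 2) ({s1, s2} : Set α) := embIn_K2 (x := s1) (y := s2) (by simp) (by simp) (by assumption)
  have e4 : EmbIn G (KG 1) ({s3} : Set α) := embIn_K1 (X := G) (show s3 ∈ ({s3} : Set α) by simp)
  have e2 : EmbIn G (gUnion (KG 2) (KG 1)) (({s1, s2} : Set α) ∪ ({s3} : Set α)) :=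
    embIn_gUnion e3 e4
      (by intro x hx y hy; simp only [Set.mem_union, Set.mem_insert_iff, Set.mem_singleton_iff] at hx hy; rcases hx with rfl|rfl <;> rcases hy with rfl <;> exact ⟨by assumption, by assumption⟩)
  have e6 : EmbIn G (KG 1) ({v} : Set α) := embIn_K1 (X := G) (show v ∈ ({v} : Set α) by simp)
  have e8 : EmbIn G (KG 2) ({q1, q2} : Set α) := embIn_K2 (x := q1) (y := q2) (by simp) (by simp) (by assumption)
  have e9 : EmbIn G (KG 2) ({r1, r2} : Set α) := embIn_K2 (x := r1) (y := r2) (by simp) (by simp) (by assumption)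
  have e7 : EmbIn G (gUnion (KG 2) (KG 2)) (({q1, q2} : Set α) ∪ ({r1, r2} : Set α)) :=
    embIn_gUnion e8 e9
      (by intro x hx y hy; simp only [Set.mem_union, Set.mem_insert_iff, Set.mem_singleton_iff] at hx hy; rcases hx with rfl|rfl <;> rcases hy with rfl|rfl <;> exact ⟨by assumption, by assumption⟩)
  have e5 : EmbIn G (gJoin (KG 1) (gUnion (KG 2) (KG 2))) (({v} : Set α) ∪ (({q1, q2} : Set α) ∪ ({r1, r2} : Set α))) :=
    embIn_gJoin e6 e7
      (by intro x hx y hy; simp only [Set.mem_union, Set.mem_insert_iff, Set.mem_singleton_iff] at hx hy; rcases hx with rfl <;> rcases hy with (rfl|rfl) | (rfl|rfl) <;> assumption)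
  have e1 : EmbIn G (gJoin (gUnion (KG 2) (KG 1)) (gJoin (KG 1) (gUnion (KG 2) (KG 2)))) ((({s1, s2} : Set α) ∪ ({s3} : Set α)) ∪ (({v} : Set α) ∪ (({q1, q2} : Set α) ∪ ({r1, r2} : Set α)))) :=
    embIn_gJoin e2 e5
      (by intro x hx y hy; simp only [Set.mem_union, Set.mem_insert_iff, Set.mem_singleton_iff] at hx hy; rcases hx with (rfl|rfl) | (rfl) <;> rcases hy with (rfl) | ((rfl|rfl) | (rfl|rfl)) <;> assumption)
  exact EmbIn.contains e1

lemma contains_H13 (v u p1 p2 p3 a1 a2 a3 b1 b2 b3 : α)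
    (h0 : G.Adj v u) (h1 : G.Adj p1 p2) (h2 : G.Adj p2 p3) (h3 : ¬ G.Adj p1 p3) (h4 : p1 ≠ p3) (h5 : G.Adj a1 a2) (h6 : G.Adj a1 a3) (h7 : G.Adj a2 a3) (h8 : G.Adj b1 b2) (h9 : G.Adj b1 b3) (h10 : G.Adj b2 b3) (h11 : ¬ G.Adj a1 b1) (h12 : a1 ≠ b1) (h13 : ¬ G.Adj a1 b2) (h14 : a1 ≠ b2) (h15 : ¬ G.Adj a1 b3) (h16 : a1 ≠ b3) (h17 : ¬ G.Adj a2 b1) (h18 : a2 ≠ b1) (h19 : ¬ G.Adj a2 b2) (h20 : a2 ≠ b2) (h21 : ¬ G.Adj a2 b3) (h22 : a2 ≠ b3) (h23 : ¬ G.Adj a3 b1) (h24 : a3 ≠ b1) (h25 : ¬ G.Adj a3 b2) (h26 : a3 ≠ b2) (h27 : ¬ G.Adj a3 b3) (h28 : a3 ≠ b3) (h29 : ¬ G.Adj p1 a1) (h30 : p1 ≠ a1) (h31 : ¬ G.Adj p1 a2) (h32 : p1 ≠ a2) (h33 : ¬ G.Adj p1 a3) (h34 : p1 ≠ a3) (h35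 : ¬ G.Adj p1 b1) (h36 : p1 ≠ b1) (h37 : ¬ G.Adj p1 b2) (h38 : p1 ≠ b2) (h39 : ¬ G.Adj p1 b3) (h40 : p1 ≠ b3) (h41 : ¬ G.Adj p2 a1) (h42 : p2 ≠ a1) (h43 : ¬ G.Adj p2 a2) (h44 : p2 ≠ a2) (h45 : ¬ G.Adj p2 a3) (h46 : p2 ≠ a3) (h47 : ¬ G.Adj p2 b1) (h48 : p2 ≠ b1) (h49 : ¬ G.Adj p2 b2) (h50 : p2 ≠ b2) (h51 : ¬ G.Adj p2 b3) (h52 : p2 ≠ b3) (h53 : ¬ G.Adj p3 a1) (h54 : p3 ≠ a1) (h55 : ¬ G.Adj p3 a2) (h56 : p3 ≠ a2) (h57 : ¬ G.Adj p3 a3) (h58 : p3 ≠ a3) (h59 : ¬ G.Adj p3 b1) (h60 : p3 ≠ b1) (h61 : ¬ G.Adj p3 b2) (h62 : p3 ≠ b2) (h63 : ¬ G.Adj p3 b3) (h64 : p3 ≠ b3) (h65 : G.Adj v p1) (h66 : G.Adj v p2) (h67 : G.Adj v p3) (h68 : G.Adj v a1) (h69 : G.Adj v a2) (h70 : G.Adj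 v a3) (h71 : G.Adj v b1) (h72 : G.Adj v b2) (h73 : G.Adj v b3) (h74 : G.Adj u p1) (h75 : G.Adj u p2) (h76 : G.Adj u p3) (h77 : G.Adj u a1) (h78 : G.Adj u a2) (h79 : G.Adj u a3) (h80 : G.Adj u b1) (h81 : G.Adj u b2) (h82 : G.Adj u b3) :
    Contains G H13 := by
  have e2 : EmbIn G (KG 2) ({v, u} : Set α) := embIn_K2 (x := v) (y := u) (by simp) (by simp) (by assumption)
  have e4 : EmbIn G (pathGraph 3) ({p1, p2, p3} : Set α) := embIn_P3 (x := p1) (y := p2) (z := p3) (by simp) (by simp) (by simp) (by assumption) (by assumption) (by assumption) (by assumption)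
  have e6 : EmbIn G (KG 3) ({a1, a2, a3} : Set α) := embIn_K3 (x := a1) (y := a2) (z := a3) (by simp) (by simp) (by simp) (by assumption) (by assumption) (by assumption)
  have e7 : EmbIn G (KG 3) ({b1, b2, b3} : Set α) := embIn_K3 (x := b1) (y := b2) (z := b3) (by simp) (by simp) (by simp) (by assumption) (by assumption) (by assumption)
  have e5 : EmbIn G (gUnion (KG 3) (KG 3)) (({a1, a2, a3} : Set α) ∪ ({b1, b2, b3} : Set α)) :=
    embIn_gUnion e6 e7
      (by intro x hx y hy; simp only [Set.mem_union, Set.mem_insert_iff, Set.mem_singleton_iff] at hx hy; rcases hx with rfl|rfl|rfl <;> rcases hy with rfl|rfl|rfl <;> exact ⟨by assumption, by assumption⟩)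
  have e3 : EmbIn G (gUnion (pathGraph 3) (gUnion (KG 3) (KG 3))) (({p1, p2, p3} : Set α) ∪ (({a1, a2, a3} : Set α) ∪ ({b1, b2, b3} : Set α))) :=
    embIn_gUnion e4 e5
      (by intro x hx y hy; simp only [Set.mem_union, Set.mem_insert_iff, Set.mem_singleton_iff] at hx hy; rcases hx with rfl|rfl|rfl <;> rcases hy with (rfl|rfl|rfl) | (rfl|rfl|rfl) <;> exact ⟨by assumption, by assumption⟩)
  have e1 : EmbIn G (gJoin (KG 2) (gUnion (pathGraph 3) (gUnion (KG 3) (KG 3)))) (({v, u} : Set α) ∪ (({p1, p2, p3} : Set α) ∪ (({a1, a2, a3} : Set α) ∪ ({b1, b2, b3} : Set α)))) :=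
    embIn_gJoin e2 e3
      (by intro x hx y hy; simp only [Set.mem_union, Set.mem_insert_iff, Set.mem_singleton_iff] at hx hy; rcases hx with rfl|rfl <;> rcases hy with (rfl|rfl|rfl) | ((rfl|rfl|rfl) | (rfl|rfl|rfl)) <;> assumption)
  exact EmbIn.contains e1

lemma contains_H14 (v u a1 a2 a3 p1 p2 p3 w : α)
    (h0 : G.Adj v u) (h1 : G.Adj a1 a2) (h2 : G.Adj a1 a3) (h3 : G.Adj a2 a3) (h4 : G.Adj p1 p2) (h5 : G.Adj p2 p3) (h6 : ¬ G.Adj p1 p3) (h7 : p1 ≠ p3) (h8 : G.Adj p1 w) (h9 : G.Adj p2 w) (h10 : G.Adj p3 w) (h11 : ¬ G.Adj a1 p1) (h12 : a1 ≠ p1) (h13 : ¬ G.Adj a1 p2) (h14 : a1 ≠ p2) (h15 : ¬ G.Adj a1 p3) (h16 : a1 ≠ p3) (h17 : ¬ G.Adj a1 w) (h18 : a1 ≠ w) (h19 : ¬ G.Adj a2 p1) (h20 : a2 ≠ p1) (h21 : ¬ G.Adj a2 p2) (h22 : a2 ≠ p2) (h23 : ¬ G.Adj a2 p3) (h24 :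 a2 ≠ p3) (h25 : ¬ G.Adj a2 w) (h26 : a2 ≠ w) (h27 : ¬ G.Adj a3 p1) (h28 : a3 ≠ p1) (h29 : ¬ G.Adj a3 p2) (h30 : a3 ≠ p2) (h31 : ¬ G.Adj a3 p3) (h32 : a3 ≠ p3) (h33 : ¬ G.Adj a3 w) (h34 : a3 ≠ w) (h35 : G.Adj v a1) (h36 : G.Adj v a2) (h37 : G.Adj v a3) (h38 : G.Adj v p1) (h39 : G.Adj v p2) (h40 : G.Adj v p3) (h41 : G.Adj v w) (h42 : G.Adj u a1) (h43 : G.Adj u a2) (h44 : G.Adj u a3) (h45 : G.Adj u p1) (h46 : G.Adj u p2) (h47 : G.Adj u p3) (h48 : G.Adj u w) :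
    Contains G H14 := by
  have e2 : EmbIn G (KG 2) ({v, u} : Set α) := embIn_K2 (x := v) (y := u) (by simp) (by simp) (by assumption)
  have e4 : EmbIn G (KG 3) ({a1, a2, a3} : Set α) := embIn_K3 (x := a1) (y := a2) (z := a3) (by simp) (by simp) (by simp) (by assumption) (by assumption) (by assumption)
  have e6 : EmbIn G (pathGraph 3) ({p1, p2, p3} : Set α) := embIn_P3 (x := p1) (y := p2) (z := p3) (by simp) (by simp) (by simp) (by assumption) (by assumption) (by assumption) (by assumption)
  have e7 : EmbIn G (KG 1) ({w} : Set α) := embIn_K1 (X := G) (show w ∈ ({w} : Set α) by simp)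
  have e5 : EmbIn G (gJoin (pathGraph 3) (KG 1)) (({p1, p2, p3} : Set α) ∪ ({w} : Set α)) :=
    embIn_gJoin e6 e7
      (by intro x hx y hy; simp only [Set.mem_union, Set.mem_insert_iff, Set.mem_singleton_iff] at hx hy; rcases hx with rfl|rfl|rfl <;> rcases hy with rfl <;> assumption)
  have e3 : EmbIn G (gUnion (KG 3) (gJoin (pathGraph 3) (KG 1))) (({a1, a2, a3} : Set α) ∪ (({p1, p2, p3} : Set α) ∪ ({w} : Set α))) :=
    embIn_gUnion e4 e5
      (by intro x hx y hy; simp only [Set.mem_union, Set.mem_insert_iff, Set.mem_singleton_iff] at hx hy; rcases hx with rfl|rfl|rfl <;> rcases hy with (rfl|rfl|rfl) | (rfl) <;> exact ⟨by assumption, by assumption⟩)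
  have e1 : EmbIn G (gJoin (KG 2) (gUnion (KG 3) (gJoin (pathGraph 3) (KG 1)))) (({v, u} : Set α) ∪ (({a1, a2, a3} : Set α) ∪ (({p1, p2, p3} : Set α) ∪ ({w} : Set α)))) :=
    embIn_gJoin e2 e3
      (by intro x hx y hy; simp only [Set.mem_union, Set.mem_insert_iff, Set.mem_singleton_iff] at hx hy; rcases hx with rfl|rfl <;> rcases hy with (rfl|rfl|rfl) | ((rfl|rfl|rfl) | (rfl)) <;> assumption)
  exact EmbIn.contains e1

lemma contains_H15 (v u a1 a2 a3 w k q1 q2 : α)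
    (h0 : G.Adj v u) (h1 : G.Adj a1 a2) (h2 : G.Adj a1 a3) (h3 : G.Adj a2 a3) (h4 : G.Adj q1 q2) (h5 : ¬ G.Adj k q1) (h6 : k ≠ q1) (h7 : ¬ G.Adj k q2) (h8 : k ≠ q2) (h9 : G.Adj w k) (h10 : G.Adj w q1) (h11 : G.Adj w q2) (h12 : ¬ G.Adj a1 w) (h13 : a1 ≠ w) (h14 : ¬ G.Adj a1 k) (h15 : a1 ≠ k) (h16 : ¬ G.Adj a1 q1) (h17 : a1 ≠ q1) (h18 : ¬ G.Adj a1 q2) (h19 : a1 ≠ q2) (h20 : ¬ G.Adj a2 w) (h21 : a2 ≠ w) (h22 : ¬ G.Adj a2 k) (h23 : a2 ≠ k) (h24 : ¬ G.Adj a2 q1) (h25 : a2 ≠ q1) (h26 : ¬ G.Adj a2 q2) (h27 : a2 ≠ q2) (h28 : ¬ G.Adj a3 w) (h29 : a3 ≠ w) (h30 : ¬ G.Adj a3 k) (h31 : a3 ≠ k) (h32 : ¬ G.Adj a3 q1) (h33 : a3 ≠ q1) (h34 : ¬ G.Adj a3 q2) (h35 : a3 ≠ q2) (h36 : G.Adj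 v a1) (h37 : G.Adj v a2) (h38 : G.Adj v a3) (h39 : G.Adj v w) (h40 : G.Adj v k) (h41 : G.Adj v q1) (h42 : G.Adj v q2) (h43 : G.Adj u a1) (h44 : G.Adj u a2) (h45 : G.Adj u a3) (h46 : G.Adj u w) (h47 : G.Adj u k) (h48 : G.Adj u q1) (h49 : G.Adj u q2) :
    Contains G H15 := by
  have e2 : EmbIn G (KG 2) ({v, u} : Set α) := embIn_K2 (x := v) (y := u) (by simp) (by simp) (by assumption)
  have e4 : EmbIn G (KG 3) ({a1, a2, a3} : Set α) := embIn_K3 (x := a1) (y := a2) (z := a3) (by simp) (by simp) (by simp) (by assumption) (by assumption) (by assumption)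
  have e6 : EmbIn G (KG 1) ({w} : Set α) := embIn_K1 (X := G) (show w ∈ ({w} : Set α) by simp)
  have e8 : EmbIn G (KG 1) ({k} : Set α) := embIn_K1 (X := G) (show k ∈ ({k} : Set α) by simp)
  have e9 : EmbIn G (KG 2) ({q1, q2} : Set α) := embIn_K2 (x := q1) (y := q2) (by simp) (by simp) (by assumption)
  have e7 : EmbIn G (gUnion (KG 1) (KG 2)) (({k} : Set α) ∪ ({q1, q2} : Set α)) :=
    embIn_gUnion e8 e9
      (by intro x hx y hy; simp only [Set.mem_union, Set.mem_insert_iff, Set.mem_singleton_iff] at hx hy; rcases hx with rfl <;> rcases hy with rfl|rfl <;> exact ⟨by assumption, by assumption⟩)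
  have e5 : EmbIn G (gJoin (KG 1) (gUnion (KG 1) (KG 2))) (({w} : Set α) ∪ (({k} : Set α) ∪ ({q1, q2} : Set α))) :=
    embIn_gJoin e6 e7
      (by intro x hx y hy; simp only [Set.mem_union, Set.mem_insert_iff, Set.mem_singleton_iff] at hx hy; rcases hx with rfl <;> rcases hy with (rfl) | (rfl|rfl) <;> assumption)
  have e3 : EmbIn G (gUnion (KG 3) (gJoin (KG 1) (gUnion (KG 1) (KG 2)))) (({a1, a2, a3} : Set α) ∪ (({w} : Set α) ∪ (({k} : Set α) ∪ ({q1, q2} : Set α)))) :=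
    embIn_gUnion e4 e5
      (by intro x hx y hy; simp only [Set.mem_union, Set.mem_insert_iff, Set.mem_singleton_iff] at hx hy; rcases hx with rfl|rfl|rfl <;> rcases hy with (rfl) | ((rfl) | (rfl|rfl)) <;> exact ⟨by assumption, by assumption⟩)
  have e1 : EmbIn G (gJoin (KG 2) (gUnion (KG 3) (gJoin (KG 1) (gUnion (KG 1) (KG 2))))) (({v, u} : Set α) ∪ (({a1, a2, a3} : Set α) ∪ (({w} : Set α) ∪ (({k} : Set α) ∪ ({q1, q2} : Set α))))) :=
    embIn_gJoin e2 e3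
      (by intro x hx y hy; simp only [Set.mem_union, Set.mem_insert_iff, Set.mem_singleton_iff] at hx hy; rcases hx with rfl|rfl <;> rcases hy with (rfl|rfl|rfl) | ((rfl) | ((rfl) | (rfl|rfl))) <;> assumption)
  exact EmbIn.contains e1

lemma contains_H17 (x1 x2 x3 a1 a2 a3 b1 b2 b3 : α)
    (h0 : G.Adj x1 x2) (h1 : G.Adj x1 x3) (h2 : G.Adj x2 x3) (h3 : G.Adj a1 a2) (h4 : G.Adj a1 a3) (h5 : G.Adj a2 a3) (h6 : G.Adj b1 b2) (h7 : G.Adj b1 b3) (h8 : G.Adj b2 b3) (h9 : ¬ G.Adj a1 b1) (h10 : a1 ≠ b1) (h11 : ¬ G.Adj a1 b2) (h12 : a1 ≠ b2) (h13 : ¬ G.Adj a1 b3) (h14 : a1 ≠ b3) (h15 : ¬ G.Adj a2 b1) (h16 : a2 ≠ b1) (h17 : ¬ G.Adj a2 b2) (h18 : a2 ≠ b2) (h19 : ¬ G.Adj a2 b3) (h20 : a2 ≠ b3) (h21 : ¬ G.Adj a3 b1) (h22 : a3 ≠ b1) (h23 : ¬ G.Adj a3 b2) (h24 : a3 ≠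 b2) (h25 : ¬ G.Adj a3 b3) (h26 : a3 ≠ b3) (h27 : G.Adj x1 a1) (h28 : G.Adj x1 a2) (h29 : G.Adj x1 a3) (h30 : G.Adj x1 b1) (h31 : G.Adj x1 b2) (h32 : G.Adj x1 b3) (h33 : G.Adj x2 a1) (h34 : G.Adj x2 a2) (h35 : G.Adj x2 a3) (h36 : G.Adj x2 b1) (h37 : G.Adj x2 b2) (h38 : G.Adj x2 b3) (h39 : G.Adj x3 a1) (h40 : G.Adj x3 a2) (h41 : G.Adj x3 a3) (h42 : G.Adj x3 b1) (h43 : G.Adj x3 b2) (h44 : G.Adj x3 b3) :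
    Contains G H17 := by
  have e2 : EmbIn G (KG 3) ({x1, x2, x3} : Set α) := embIn_K3 (x := x1) (y := x2) (z := x3) (by simp) (by simp) (by simp) (by assumption) (by assumption) (by assumption)
  have e4 : EmbIn G (KG 3) ({a1, a2, a3} : Set α) := embIn_K3 (x := a1) (y := a2) (z := a3) (by simp) (by simp) (by simp) (by assumption) (by assumption) (by assumption)
  have e5 : EmbIn G (KG 3) ({b1, b2, b3} : Set α) := embIn_K3 (x := b1) (y := b2) (z := b3) (by simp) (by simp) (by simp) (by assumption) (by assumption) (by assumption)
  have e3 : EmbIn G (gUnion (KG 3) (KG 3)) (({a1, a2, a3} : Set α) ∪ ({b1, b2, b3} : Set α)) :=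
    embIn_gUnion e4 e5
      (by intro x hx y hy; simp only [Set.mem_union, Set.mem_insert_iff, Set.mem_singleton_iff] at hx hy; rcases hx with rfl|rfl|rfl <;> rcases hy with rfl|rfl|rfl <;> exact ⟨by assumption, by assumption⟩)
  have e1 : EmbIn G (gJoin (KG 3) (gUnion (KG 3) (KG 3))) (({x1, x2, x3} : Set α) ∪ (({a1, a2, a3} : Set α) ∪ ({b1, b2, b3} : Set α))) :=
    embIn_gJoin e2 e3
      (by intro x hx y hy; simp only [Set.mem_union, Set.mem_insert_iff, Set.mem_singleton_iff] at hx hy; rcases hx with rfl|rfl|rfl <;> rcases hy with (rfl|rfl|rfl) | (rfl|rfl|rfl) <;> assumption)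
  exact EmbIn.contains e1




section Defs
variable (G : SimpleGraph α) (S : Set α)

def IndS : Prop := ∀ ⦃x⦄, x ∈ S → ∀ ⦃y⦄, y ∈ S → ¬ G.Adj x y
def ClqS : Prop := ∀ ⦃x⦄, x ∈ S → ∀ ⦃y⦄, y ∈ S → x ≠ y → G.Adj x y
def TFS : Prop :=
  ∀ ⦃x⦄, x ∈ S → ∀ ⦃y⦄, y ∈ S → ∀ ⦃z⦄, z ∈ S → G.Adj x y → G.Adj y z → G.Adj x z → False
def CLS : Prop :=
  ∀ ⦃x⦄, x ∈ S → ∀ ⦃y⦄, y ∈ S → ∀ ⦃z⦄, z ∈ S → G.Adj x y → G.Adj y z → x ≠ z → G.Adj x z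
def SPs : Prop := ∃ Q ⊆ S, ClqS G Q ∧ IndS G (S \ Q)
def TCs : Prop := ∃ Q ⊆ S, ClqS G Q ∧ TFS G (S \ Q)
def MPs : Prop := ∃ I ⊆ S, IndS G I ∧ CLS G (S \ I)

/-- 2K2 configuration -/
def Conf2K2 : Prop :=
  ∃ a b c d, a ∈ S ∧ b ∈ S ∧ c ∈ S ∧ d ∈ S ∧ G.Adj a b ∧ G.Adj c d ∧
    ¬ G.Adj a c ∧ ¬ G.Adj a d ∧ ¬ G.Adj b c ∧ ¬ G.Adj b d ∧
    a ≠ c ∧ a ≠ d ∧ b ≠ c ∧ b ≠ d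
/-- C4 configuration : pairs {p,q} and {r,s} fully joined -/
def ConfC4 : Prop :=
  ∃ p q r s, p ∈ S ∧ q ∈ S ∧ r ∈ S ∧ s ∈ S ∧ ¬ G.Adj p q ∧ ¬ G.Adj r s ∧
    G.Adj p r ∧ G.Adj p s ∧ G.Adj q r ∧ G.Adj q s ∧ p ≠ q ∧ r ≠ s
/-- K2 ∪ K1 configuration -/
def ConfK2K1 : Prop :=
  ∃ a b c, a ∈ S ∧ b ∈ S ∧ c ∈ S ∧ G.Adj a b ∧ ¬ G.Adj a c ∧ ¬ G.Adj b c ∧ c ≠ a ∧ c ≠ b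
/-- P3 configuration -/
def ConfP3 : Prop :=
  ∃ x y z, x ∈ S ∧ y ∈ S ∧ z ∈ S ∧ G.Adj x y ∧ G.Adj y z ∧ ¬ G.Adj x z ∧ x ≠ z
/-- K3 configuration -/
def ConfK3 : Prop :=
  ∃ x y z, x ∈ S ∧ y ∈ S ∧ z ∈ S ∧ G.Adj x y ∧ G.Adj x z ∧ G.Adj y z
/-- 2K3 configuration -/
def Conf2K3 : Prop :=
  ∃ a1 a2 a3 b1 b2 b3, a1 ∈ S ∧ a2 ∈ S ∧ a3 ∈ S ∧ b1 ∈ S ∧ b2 ∈ S ∧ b3 ∈ S ∧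
    G.Adj a1 a2 ∧ G.Adj a1 a3 ∧ G.Adj a2 a3 ∧ G.Adj b1 b2 ∧ G.Adj b1 b3 ∧ G.Adj b2 b3 ∧
    (∀ x ∈ ({a1,a2,a3} : Set α), ∀ y ∈ ({b1,b2,b3} : Set α), ¬ G.Adj x y ∧ x ≠ y)
/-- K2 ∪ P3 configuration -/
def ConfK2P3 : Prop :=
  ∃ k1 k2 x y z, k1 ∈ S ∧ k2 ∈ S ∧ x ∈ S ∧ y ∈ S ∧ z ∈ S ∧ G.Adj k1 k2 ∧
    G.Adj x y ∧ G.Adj y z ∧ ¬ G.Adj x z ∧ x ≠ z ∧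
    (∀ a ∈ ({k1,k2} : Set α), ∀ b ∈ ({x,y,z} : Set α), ¬ G.Adj a b ∧ a ≠ b)
/-- 2K2 plus a common neighbor -/
def Conf2K2b : Prop :=
  ∃ a b c d e, a ∈ S ∧ b ∈ S ∧ c ∈ S ∧ d ∈ S ∧ e ∈ S ∧ G.Adj a b ∧ G.Adj c d ∧
    ¬ G.Adj a c ∧ ¬ G.Adj a d ∧ ¬ G.Adj b c ∧ ¬ G.Adj b d ∧
    a ≠ c ∧ a ≠ d ∧ b ≠ c ∧ b ≠ d ∧ G.Adj e a ∧ G.Adj e b ∧ G.Adj e c ∧ G.Adj e d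
/-- paw configuration : w joined to k, e1, e2 ; edge e1e2 ; k isolated from e1,e2 -/
def ConfPaw : Prop :=
  ∃ w k e1 e2, w ∈ S ∧ k ∈ S ∧ e1 ∈ S ∧ e2 ∈ S ∧ G.Adj w k ∧ G.Adj w e1 ∧ G.Adj w e2 ∧
    G.Adj e1 e2 ∧ ¬ G.Adj k e1 ∧ ¬ G.Adj k e2 ∧ k ≠ e1 ∧ k ≠ e2
/-- P3 ⊕ K1 configuration -/
def ConfP3K1 : Prop :=
  ∃ x y z w, x ∈ S ∧ y ∈ S ∧ z ∈ S ∧ w ∈ S ∧ G.Adj x y ∧ G.Adj y z ∧ ¬ G.Adj x z ∧ x ≠ z ∧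
    G.Adj w x ∧ G.Adj w y ∧ G.Adj w z
/-- P3 ∪ K3 configuration -/
def ConfP3K3 : Prop :=
  ∃ x y z t1 t2 t3, x ∈ S ∧ y ∈ S ∧ z ∈ S ∧ t1 ∈ S ∧ t2 ∈ S ∧ t3 ∈ S ∧
    G.Adj x y ∧ G.Adj y z ∧ ¬ G.Adj x z ∧ x ≠ z ∧
    G.Adj t1 t2 ∧ G.Adj t1 t3 ∧ G.Adj t2 t3 ∧
    (∀ a ∈ ({x,y,z} : Set α), ∀ b ∈ ({t1,t2,t3} : Set α), ¬ G.Adj a b ∧ a ≠ b)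
end Defs

variable {G : SimpleGraph α}

section Mono
variable {S S' : Set α}
lemma IndS.mono (h : IndS G S) (hs : S' ⊆ S) : IndS G S' := fun _ hx _ hy => h (hs hx) (hs hy)
lemma ClqS.mono (h : ClqS G S) (hs : S' ⊆ S) : ClqS G S' := fun _ hx _ hy => h (hs hx) (hs hy)
lemma TFS.mono (h : TFS G S) (hs : S' ⊆ S) : TFS G S' :=
  fun _ hx _ hy _ hz => h (hs hx) (hs hy) (hs hz)
lemma CLS.mono (h : CLS G S) (hs : S' ⊆ S) : CLS G S' :=
  fun _ hx _ hy _ hz => h (hs hx) (hs hy) (hs hz)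
lemma MPs.mono (h : MPs G S) (hs : S' ⊆ S) : MPs G S' := by
  obtain ⟨I, hIS, hI, hC⟩ := h
  refine ⟨I ∩ S', Set.inter_subset_right, hI.mono Set.inter_subset_left, hC.mono ?_⟩
  intro x hx
  exact ⟨hs hx.1, fun hI' => hx.2 ⟨hI', hx.1⟩⟩
lemma Conf2K2.mono (h : Conf2K2 G S') (hs : S' ⊆ S) : Conf2K2 G S := by
  obtain ⟨a,b,c,d,h1,h2,h3,h4,hr⟩ := h
  exact ⟨a,b,c,d, hs h1, hs h2, hs h3, hs h4, hr⟩
lemma ConfC4.mono (h : ConfC4 G S') (hs : S' ⊆ S) : ConfC4 G S := by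
  obtain ⟨a,b,c,d,h1,h2,h3,h4,hr⟩ := h
  exact ⟨a,b,c,d, hs h1, hs h2, hs h3, hs h4, hr⟩
lemma ConfK2K1.mono (h : ConfK2K1 G S') (hs : S' ⊆ S) : ConfK2K1 G S := by
  obtain ⟨a,b,c,h1,h2,h3,hr⟩ := h
  exact ⟨a,b,c, hs h1, hs h2, hs h3, hr⟩
lemma ConfP3.mono (h : ConfP3 G S') (hs : S' ⊆ S) : ConfP3 G S := by
  obtain ⟨a,b,c,h1,h2,h3,hr⟩ := h
  exact ⟨a,b,c, hs h1, hs h2, hs h3, hr⟩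
lemma Conf2K2b.mono (h : Conf2K2b G S') (hs : S' ⊆ S) : Conf2K2b G S := by
  obtain ⟨a,b,c,d,e,h1,h2,h3,h4,h5,hr⟩ := h
  exact ⟨a,b,c,d,e, hs h1, hs h2, hs h3, hs h4, hs h5, hr⟩
lemma ConfK2P3.mono (h : ConfK2P3 G S') (hs : S' ⊆ S) : ConfK2P3 G S := by
  obtain ⟨a,b,c,d,e,h1,h2,h3,h4,h5,hr⟩ := h
  exact ⟨a,b,c,d,e, hs h1, hs h2, hs h3, hs h4, hs h5, hr⟩
lemma ConfPaw.mono (h : ConfPaw G S') (hs : S' ⊆ S) : ConfPaw G S := by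
  obtain ⟨a,b,c,d,h1,h2,h3,h4,hr⟩ := h
  exact ⟨a,b,c,d, hs h1, hs h2, hs h3, hs h4, hr⟩
lemma ConfP3K1.mono (h : ConfP3K1 G S') (hs : S' ⊆ S) : ConfP3K1 G S := by
  obtain ⟨a,b,c,d,h1,h2,h3,h4,hr⟩ := h
  exact ⟨a,b,c,d, hs h1, hs h2, hs h3, hs h4, hr⟩
lemma ConfP3K3.mono (h : ConfP3K3 G S') (hs : S' ⊆ S) : ConfP3K3 G S := by
  obtain ⟨a,b,c,d,e,f,h1,h2,h3,h4,h5,h6,hr⟩ := h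
  exact ⟨a,b,c,d,e,f, hs h1, hs h2, hs h3, hs h4, hs h5, hs h6, hr⟩
lemma Conf2K3.mono (h : Conf2K3 G S') (hs : S' ⊆ S) : Conf2K3 G S := by
  obtain ⟨a,b,c,d,e,f,h1,h2,h3,h4,h5,h6,hr⟩ := h
  exact ⟨a,b,c,d,e,f, hs h1, hs h2, hs h3, hs h4, hs h5, hs h6, hr⟩
end Mono

section Basic
variable {S : Set α}
lemma IndS.tfs (h : IndS G S) : TFS G S := fun _ hx _ hy _ _ hxy _ _ => h hx hy hxy
lemma ClqS.cls (h : ClqS G S) : CLS G S := fun _ hx _ _ _ hz _ _ hne => h hx hz hne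
lemma IndS.sps (h : IndS G S) : SPs G S :=
  ⟨∅, Set.empty_subset _, fun _ hx => absurd hx (Set.notMem_empty _), h.mono Set.diff_subset⟩
lemma TFS.tcs (h : TFS G S) : TCs G S :=
  ⟨∅, Set.empty_subset _, fun _ hx => absurd hx (Set.notMem_empty _), h.mono Set.diff_subset⟩
lemma SPs.tcs (h : SPs G S) : TCs G S := by
  obtain ⟨Q, hQS, hQ, hI⟩ := h
  exact ⟨Q, hQS, hQ, hI.tfs⟩

lemma not_cls_iff_confP3 : ¬ CLS G S ↔ ConfP3 G S := by
  constructor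
  · intro h
    rw [CLS] at h
    push_neg at h
    obtain ⟨x, hx, y, hy, z, hz, hxy, hyz, hne, hnadj⟩ := h
    exact ⟨x, y, z, hx, hy, hz, hxy, hyz, hnadj, hne⟩
  · rintro ⟨x, y, z, hx, hy, hz, hxy, hyz, hnadj, hne⟩ h
    exact hnadj (h hx hy hz hxy hyz hne)

lemma not_tfs_iff_confK3 : ¬ TFS G S ↔ ConfK3 G S := by
  constructor
  · intro h
    rw [TFS] at h
    push_neg at h
    obtain ⟨x, hx, y, hy, z, hz, hxy, hyz, hxz⟩ := h
    exact ⟨x, y, z, hx, hy, hz, hxy, hxz.1, hyz⟩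
  · rintro ⟨x, y, z, hx, hy, hz, hxy, hxz, hyz⟩ h
    exact h hx hy hz hxy hyz hxz

lemma not_ind_iff_edge : ¬ IndS G S ↔ ∃ a ∈ S, ∃ b ∈ S, G.Adj a b := by
  constructor
  · intro h
    rw [IndS] at h
    push_neg at h
    obtain ⟨x, hx, y, hy, h⟩ := h
    exact ⟨x, hx, y, hy, h⟩
  · rintro ⟨a, ha, b, hb, hadj⟩ h
    exact h ha hb hadj

lemma not_clq_iff_pair : ¬ ClqS G S ↔ ∃ a ∈ S, ∃ b ∈ S, a ≠ b ∧ ¬ G.Adj a b := by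
  constructor
  · intro h
    rw [ClqS] at h
    push_neg at h
    obtain ⟨x, hx, y, hy, hne, hnadj⟩ := h
    exact ⟨x, hx, y, hy, hne, hnadj⟩
  · rintro ⟨a, ha, b, hb, hne, hnadj⟩ h
    exact hnadj (h ha hb hne)

lemma ind_union {A B : Set α} (hA : IndS G A) (hB : IndS G B)
    (hanti : ∀ ⦃x⦄, x ∈ A → ∀ ⦃y⦄, y ∈ B → ¬ G.Adj x y) : IndS G (A ∪ B) := by
  intro x hx y hy hadj
  rcases hx with hx | hx <;> rcases hy with hy | hy
  · exact hA hx hy hadj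
  · exact hanti hx hy hadj
  · exact hanti hy hx hadj.symm
  · exact hB hx hy hadj

lemma tfs_union_ind {A B : Set α} (hA : IndS G A) (hB : IndS G B) : TFS G (A ∪ B) := by
  intro x hx y hy z hz hxy hyz hxz
  rcases hx with hx | hx <;> rcases hy with hy | hy <;> rcases hz with hz | hz
  · exact hA hx hy hxy
  · exact hA hx hy hxy
  · exact hA hx hz hxz
  · exact hB hy hz hyz
  · exact hA hy hz hyz
  · exact hB hx hz hxz
  · exact hB hx hy hxy
  · exact hB hx hy hxy

lemma tfs_union_anti {A B : Set α} (hA : TFS G A) (hB : TFS G B)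
    (hanti : ∀ ⦃x⦄, x ∈ A → ∀ ⦃y⦄, y ∈ B → ¬ G.Adj x y) : TFS G (A ∪ B) := by
  intro x hx y hy z hz hxy hyz hxz
  rcases hx with hx | hx <;> rcases hy with hy | hy <;> rcases hz with hz | hz
  · exact hA hx hy hz hxy hyz hxz
  · exact hanti hx hz hxz
  · exact hanti hx hy hxy
  · exact hanti hx hy hxy
  · exact hanti hy hx hxy.symm
  · exact hanti hy hx hxy.symm
  · exact hanti hz hx hxz.symm
  · exact hB hx hy hz hxy hyz hxz

lemma clq_union_join {A B : Set α} (hA : ClqS G A) (hB : ClqS G B)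
    (hj : ∀ ⦃x⦄, x ∈ A → ∀ ⦃y⦄, y ∈ B → G.Adj x y) : ClqS G (A ∪ B) := by
  intro x hx y hy hne
  rcases hx with hx | hx <;> rcases hy with hy | hy
  · exact hA hx hy hne
  · exact hj hx hy
  · exact (hj hy hx).symm
  · exact hB hx hy hne

/-- L1 : a cluster with an edge and a non-adjacent pair contains K2 ∪ K1 -/
lemma cluster_k2k1 {S : Set α} (hS : CLS G S) {a b x y : α} (ha : a ∈ S) (hb : b ∈ S)
    (hab : G.Adj a b) (hx : x ∈ S) (hy : y ∈ S) (hxy : x ≠ y) (hnxy : ¬ G.Adj x y) :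
    ConfK2K1 G S := by
  classical
  by_cases hxnb : ∃ x' ∈ S, G.Adj x x'
  · obtain ⟨x', hx', hadj⟩ := hxnb
    refine ⟨x, x', y, hx, hx', hy, hadj, hnxy, ?_, hxy.symm, ?_⟩
    · intro h
      exact hnxy (hS hx hx' hy hadj h hxy)
    · intro h
      exact hnxy (by rw [h]; exact hadj)
  · push_neg at hxnb
    refine ⟨a, b, x, ha, hb, hx, hab, ?_, ?_, ?_, ?_⟩
    · exact fun h => hxnb a ha h.symm
    · exact fun h => hxnb b hb h.symm
    · rintro rfl
      exact hxnb b hb hab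
    · rintro rfl
      exact hxnb a ha hab.symm

/-- L2 : a cluster that is not split contains 2K2 -/
lemma cluster_not_sps {S : Set α} (hS : CLS G S) (h2 : ¬ Conf2K2 G S) : SPs G S := by
  classical
  by_cases hedge : ∃ a ∈ S, ∃ b ∈ S, G.Adj a b
  · obtain ⟨a, ha, b, hb, hab⟩ := hedge
    refine ⟨{x | x ∈ S ∧ (x = a ∨ G.Adj x a)}, fun z hz => hz.1, ?_, ?_⟩
    · rintro x ⟨hxS, hxa⟩ y ⟨hyS, hya⟩ hne
      rcases hxa with rfl | hxa
      · rcases hya with rfl | hya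
        · exact absurd rfl hne
        · exact hya.symm
      · rcases hya with rfl | hya
        · exact hxa
        · exact hS hxS ha hyS hxa hya.symm hne
    · rintro c ⟨hcS, hcQ⟩ d ⟨hdS, hdQ⟩ hcd
      simp only [Set.mem_setOf_eq, not_and_or, not_or] at hcQ hdQ
      have hcQ' : ¬ (c = a ∨ G.Adj c a) := by tauto
      have hdQ' : ¬ (d = a ∨ G.Adj d a) := by tauto
      push_neg at hcQ' hdQ'
      obtain ⟨hca, hcadj⟩ := hcQ'
      obtain ⟨hda, hdadj⟩ := hdQ'
      -- derive a 2K2 : edge ab, edge cd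
      have hcb : ¬ G.Adj c b := fun h => hcadj (hS hcS hb ha h hab.symm hca)
      have hdb : ¬ G.Adj d b := fun h => hdadj (hS hdS hb ha h hab.symm hda)
      refine h2 ⟨a, b, c, d, ha, hb, hcS, hdS, hab, hcd, ?_, ?_, ?_, ?_, ?_, ?_, ?_, ?_⟩
      · exact fun h => hcadj h.symm
      · exact fun h => hdadj h.symm
      · exact fun h => hcb h.symm
      · exact fun h => hdb h.symm
      · exact fun h => hca h.symm
      · exact fun h => hda h.symm
      · rintro rfl; exact hcadj hab.symm
      · rintro rfl; exact hdadj hab.symm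
  · push_neg at hedge
    exact IndS.sps (fun x hx y hy => hedge x hx y hy)

/-- L3 : a cluster with no TF+clique split contains 2K3 -/
lemma cluster_not_tcs {S : Set α} (hS : CLS G S) (h2 : ¬ Conf2K3 G S) : TCs G S := by
  classical
  by_cases htri : ∃ a ∈ S, ∃ b ∈ S, ∃ c ∈ S, G.Adj a b ∧ G.Adj a c ∧ G.Adj b c
  · obtain ⟨a, ha, b, hb, c, hc, hab, hac, hbc⟩ := htri
    refine ⟨{x | x ∈ S ∧ (x = a ∨ G.Adj x a)}, fun z hz => hz.1, ?_, ?_⟩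
    · rintro x ⟨hxS, hxa⟩ y ⟨hyS, hya⟩ hne
      rcases hxa with rfl | hxa
      · rcases hya with rfl | hya
        · exact absurd rfl hne
        · exact hya.symm
      · rcases hya with rfl | hya
        · exact hxa
        · exact hS hxS ha hyS hxa hya.symm hne
    · rintro x ⟨hxS, hxQ⟩ y ⟨hyS, hyQ⟩ z ⟨hzS, hzQ⟩ hxy hyz hxz
      simp only [Set.mem_setOf_eq, not_and_or, not_or] at hxQ hyQ hzQ
      have hx' : x ≠ a ∧ ¬ G.Adj x a := by tauto
      have hy' : y ≠ a ∧ ¬ G.Adj y a := by tauto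
      have hz' : z ≠ a ∧ ¬ G.Adj z a := by tauto
      have key : ∀ w ∈ S, w ≠ a → ¬ G.Adj w a →
          (¬ G.Adj w b ∧ ¬ G.Adj w c ∧ w ≠ b ∧ w ≠ c) := by
        intro w hwS hwa hwadj
        refine ⟨fun h => hwadj (hS hwS hb ha h hab.symm hwa),
          fun h => hwadj (hS hwS hc ha h hac.symm hwa), ?_, ?_⟩
        · rintro rfl; exact hwadj hab.symm
        · rintro rfl; exact hwadj hac.symm
      obtain ⟨hxb, hxc, hxb', hxc'⟩ := key x hxS hx'.1 hx'.2
      obtain ⟨hyb, hyc, hyb', hyc'⟩ := key y hyS hy'.1 hy'.2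
      obtain ⟨hzb, hzc, hzb', hzc'⟩ := key z hzS hz'.1 hz'.2
      refine h2 ⟨a, b, c, x, y, z, ha, hb, hc, hxS, hyS, hzS, hab, hac, hbc, hxy, hxz, hyz, ?_⟩
      intro p hp q hq
      simp only [Set.mem_insert_iff, Set.mem_singleton_iff] at hp hq
      rcases hp with rfl | rfl | rfl <;> rcases hq with rfl | rfl | rfl
      · exact ⟨fun h => hx'.2 h.symm, fun h => hx'.1 h.symm⟩
      · exact ⟨fun h => hy'.2 h.symm, fun h => hy'.1 h.symm⟩
      · exact ⟨fun h => hz'.2 h.symm, fun h => hz'.1 h.symm⟩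
      · exact ⟨fun h => hxb h.symm, fun h => hxb' h.symm⟩
      · exact ⟨fun h => hyb h.symm, fun h => hyb' h.symm⟩
      · exact ⟨fun h => hzb h.symm, fun h => hzb' h.symm⟩
      · exact ⟨fun h => hxc h.symm, fun h => hxc' h.symm⟩
      · exact ⟨fun h => hyc h.symm, fun h => hyc' h.symm⟩
      · exact ⟨fun h => hzc h.symm, fun h => hzc' h.symm⟩
  · push_neg at htri
    refine ⟨∅, Set.empty_subset _, fun _ hx => absurd hx (Set.notMem_empty _), ?_⟩
    intro x hx y hy z hz hxy hyz hxz
    exact htri x hx.1 y hy.1 z hz.1 hxy hxz hyz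

/-- L5 : a triangle-free set with an edge where every vertex has a non-neighbor
contains K2∪K1 or C4 -/
lemma tf_k2k1_or_c4 {S : Set α} (hS : TFS G S) {a b : α} (ha : a ∈ S) (hb : b ∈ S)
    (hab : G.Adj a b) (hnn : ∀ x ∈ S, ∃ y ∈ S, y ≠ x ∧ ¬ G.Adj x y) :
    ConfK2K1 G S ∨ ConfC4 G S := by
  classical
  by_cases hiso : ∃ c ∈ S, c ≠ a ∧ c ≠ b ∧ ¬ G.Adj a c ∧ ¬ G.Adj b c
  · obtain ⟨c, hc, hca, hcb, h1, h2⟩ := hiso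
    exact Or.inl ⟨a, b, c, ha, hb, hc, hab, h1, h2, hca, hcb⟩
  · push_neg at hiso
    obtain ⟨c, hc, hca, hcadj⟩ := hnn a ha
    obtain ⟨d, hd, hdb, hdadj⟩ := hnn b hb
    have hcb : c ≠ b := by rintro rfl; exact hcadj hab
    have hbc : G.Adj b c := by
      rcases (by tauto : c = a ∨ c = b ∨ G.Adj a c ∨ G.Adj b c) with h | h | h | h
      · exact absurd h hca
      · exact absurd h hcb
      · exact absurd h (fun h' => hcadj h')
      · exact h
    have hda : d ≠ a := by rintro rfl; exact hdadj hab.symm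
    have had : G.Adj a d := by
      have hdadj' : ¬ G.Adj a d → G.Adj b d → False := fun _ h => hdadj h
      rcases (by tauto : d = a ∨ d = b ∨ G.Adj a d ∨ G.Adj b d) with h | h | h | h
      · exact absurd h hda
      · exact absurd h hdb
      · exact h
      · exact absurd h (fun h' => hdadj h')
    have hcd' : c ≠ d := by
      rintro rfl; exact hdadj hbc
    by_cases hcd : G.Adj c d
    · -- C4 : a-b-c-d-a ; pairs {a,c},{b,d}
      exact Or.inr ⟨a, c, b, d, ha, hc, hb, hd, hcadj, hdadj, hab, had, hbc.symm, hcd,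
        hca.symm, hdb.symm⟩
    · -- K2∪K1 : edge (b,c), isolated d
      exact Or.inl ⟨b, c, d, hb, hc, hd, hbc, hdadj, hcd, hdb, hcd'.symm⟩

/-- L7 : monopolar joins -/
lemma mp_join {A B : Set α} (hA : A.Nonempty) (hB : B.Nonempty)
    (hcross : ∀ ⦃x⦄, x ∈ A → ∀ ⦃y⦄, y ∈ B → G.Adj x y)
    (h : MPs G (A ∪ B)) :
    (IndS G A ∧ CLS G B) ∨ (IndS G B ∧ CLS G A) ∨
      (SPs G A ∧ ClqS G B) ∨ (SPs G B ∧ ClqS G A) := by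
  classical
  obtain ⟨I, hIS, hInd, hCls⟩ := h
  -- I is contained in A or in B
  have hI : (I ⊆ A) ∨ (I ⊆ B) := by
    by_cases h1 : ∃ x ∈ I, x ∈ A ∧ x ∉ B
    · obtain ⟨x, hxI, hxA, hxB⟩ := h1
      left
      intro y hyI
      rcases hIS hyI with hyA | hyB
      · exact hyA
      · rcases eq_or_ne x y with rfl | hne
        · exact hxA
        · exact absurd (hcross hxA hyB) (hInd hxI hyI)
    · push_neg at h1
      right
      intro y hyI
      rcases hIS hyI with hyA | hyB
      · exact h1 y hyI hyA
      · exact hyB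
  -- symmetric main argument
  have main : ∀ (P Q : Set α), P.Nonempty → Q.Nonempty →
      (∀ ⦃x⦄, x ∈ P → ∀ ⦃y⦄, y ∈ Q → G.Adj x y) → I ⊆ P →
      IndS G I → CLS G ((P ∪ Q) \ I) →
      (IndS G P ∧ CLS G Q) ∨ (SPs G P ∧ ClqS G Q) := by
    intro P Q hPne hQne hcr hIP hInd' hCls'
    by_cases hPI : ∀ x ∈ P, x ∈ I
    · left
      refine ⟨hInd'.mono hPI, hCls'.mono ?_⟩
      intro y hy
      refine ⟨Or.inr hy, fun hyI => ?_⟩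
      obtain ⟨p0, hp0⟩ := hPne
      exact hInd' (hPI p0 hp0) hyI (hcr hp0 hy)
    · push_neg at hPI
      obtain ⟨a0, ha0P, ha0I⟩ := hPI
      have ha0C : a0 ∈ (P ∪ Q) \ I := ⟨Or.inl ha0P, ha0I⟩
      have hQC : ∀ y ∈ Q, y ∈ (P ∪ Q) \ I := by
        intro y hy
        refine ⟨Or.inr hy, fun hyI => ?_⟩
        exact G.loopless.irrefl y (hcr (hIP hyI) hy)
      -- C := (P∪Q)\I is a clique
      obtain ⟨q0, hq0⟩ := hQne
      have hclq : ClqS G ((P ∪ Q) \ I) := by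
        intro x hx y hy hne
        rcases hx.1 with hxP | hxQ <;> rcases hy.1 with hyP | hyQ
        · exact hCls' hx (hQC q0 hq0) hy (hcr hxP hq0) ((hcr hyP hq0).symm) hne
        · exact hcr hxP hyQ
        · exact (hcr hyP hxQ).symm
        · exact hCls' hx ha0C hy ((hcr ha0P hxQ).symm) (hcr ha0P hyQ) hne
      right
      constructor
      · refine ⟨P \ I, Set.diff_subset, hclq.mono ?_, ?_⟩
        · intro z hz; exact ⟨Or.inl hz.1, hz.2⟩
        · intro x hx y hy
          have hxI : x ∈ I := by
            by_contra hxI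
            exact hx.2 ⟨hx.1, hxI⟩
          have hyI : y ∈ I := by
            by_contra hyI
            exact hy.2 ⟨hy.1, hyI⟩
          exact hInd' hxI hyI
      · intro x hx y hy hne
        exact hclq (hQC x hx) (hQC y hy) hne
  rcases hI with hIA | hIB
  · rcases main A B hA hB hcross hIA hInd hCls with h | h
    · exact Or.inl h
    · exact Or.inr (Or.inr (Or.inl h))
  · have hcross' : ∀ ⦃x⦄, x ∈ B → ∀ ⦃y⦄, y ∈ A → G.Adj x y :=
      fun x hx y hy => (hcross hy hx).symm
    have hCls' : CLS G ((B ∪ A) \ I) := by rwa [Set.union_comm]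
    rcases main B A hB hA hcross' hIB hInd hCls' with h | h
    · exact Or.inr (Or.inl h)
    · exact Or.inr (Or.inr (Or.inr h))

end Basic



/-- P4-free at the level of vertex configurations. -/
def NoP4 (G : SimpleGraph α) : Prop :=
  ∀ ⦃a b c d : α⦄, G.Adj a b → G.Adj b c → G.Adj c d →
    ¬ G.Adj a c → ¬ G.Adj b d → ¬ G.Adj a d → False

/-- connectivity of an induced set -/
def ConnS (G : SimpleGraph α) (S : Set α) : Prop := (G.induce S).Connected

variable {G : SimpleGraph α}

lemma induce_adj_iff {S : Set α} (x y : ↥S) : (G.induce S).Adj x y ↔ G.Adj x y := by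
  simp [comap_adj]

private lemma walk_cross_aux {S A : Set α} :
    ∀ {p q : ↥S} (_ : (G.induce S).Walk p q), p.val ∈ A → q.val ∉ A →
      ∃ x ∈ A, ∃ y ∈ S \ A, G.Adj x y := by
  intro p q w
  induction w with
  | nil => intro hp hq; exact absurd hp hq
  | @cons u v r hadj w ih =>
      intro hp hq
      by_cases hv : v.val ∈ A
      · exact ih hv hq
      · exact ⟨u.val, hp, v.val, ⟨v.prop, hv⟩, (induce_adj_iff u v).1 hadj⟩

/-- in a connected set, any nonempty proper "part" has an edge leaving it -/
lemma conn_cross {S A : Set α} (hconn : ConnS G S) (hAS : A ⊆ S)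
    {a r : α} (ha : a ∈ A) (hr : r ∈ S \ A) :
    ∃ x ∈ A, ∃ y ∈ S \ A, G.Adj x y := by
  obtain ⟨w⟩ := hconn.preconnected ⟨a, hAS ha⟩ ⟨r, hr.1⟩
  exact walk_cross_aux w ha hr.2

/-- a nonempty disconnected set splits into two anticomplete nonempty parts -/
lemma not_conn_split {S : Set α} (hne : S.Nonempty) (h : ¬ ConnS G S) :
    ∃ A ⊆ S, A.Nonempty ∧ (S \ A).Nonempty ∧
      ∀ x ∈ A, ∀ y ∈ S \ A, ¬ G.Adj x y := by
  rw [ConnS, connected_iff] at h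
  have hS : Nonempty ↥S := hne.to_subtype
  have hpc : ¬ (G.induce S).Preconnected := fun hp => h ⟨hp, hS⟩
  rw [Preconnected] at hpc
  push_neg at hpc
  obtain ⟨u, w, huw⟩ := hpc
  refine ⟨{z | ∃ hz : z ∈ S, (G.induce S).Reachable u ⟨z, hz⟩}, ?_, ⟨u.val, u.prop, Reachable.refl _⟩,
    ⟨w.val, w.prop, ?_⟩, ?_⟩
  · intro z hz; exact hz.1
  · intro hzz
    obtain ⟨hw, hre⟩ := hzz
    exact huw (by convert hre)
  · rintro x ⟨hxS, hre⟩ y ⟨hyS, hy⟩ hadj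
    exact hy ⟨hyS, hre.trans (Adj.reachable ((induce_adj_iff ⟨x, hxS⟩ ⟨y, hyS⟩).2 hadj))⟩

/-- helper for Seinsche's theorem -/
private lemma seinsche_aux (hP4 : NoP4 G) {S X Y : Set α} {v0 : α}
    (hv0S : v0 ∈ S) (hv0X : v0 ∉ X) (hv0Y : v0 ∉ Y)
    (hXS : X ⊆ S) (hYS : Y ⊆ S)
    (hcover : ∀ z ∈ S, z ≠ v0 → z ∈ X ∨ z ∈ Y)
    (hdisj : ∀ z, z ∈ X → z ∈ Y → False)
    (hcross : ∀ x ∈ X, ∀ y ∈ Y, G.Adj x y)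
    (hX0 : ∃ x ∈ X, ¬ G.Adj v0 x) (hY0 : ∃ y ∈ Y, ¬ G.Adj v0 y)
    (hw : ∃ w ∈ X, G.Adj v0 w) :
    ∃ Z ⊆ S, Z.Nonempty ∧ (S \ Z).Nonempty ∧ ∀ x ∈ Z, ∀ y ∈ S \ Z, G.Adj x y := by
  classical
  obtain ⟨y0, hy0Y, hy0n⟩ := hY0
  obtain ⟨w, hwX, hwadj⟩ := hw
  -- all pairs (x ∈ X nonneighbor of v0, x' ∈ X neighbor of v0) are adjacent
  have key : ∀ x ∈ X, ¬ G.Adj v0 x → ∀ x' ∈ X, G.Adj v0 x' → G.Adj x' x := by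
    intro x hxX hxn x' hx'X hx'adj
    by_contra hnadj
    -- P4 : v0 - x' - y0 - x
    exact hP4 hx'adj (hcross x' hx'X y0 hy0Y) ((hcross x hxX y0 hy0Y).symm)
      hy0n hnadj hxn
  refine ⟨{x ∈ X | G.Adj v0 x}, fun z hz => hXS hz.1, ⟨w, hwX, hwadj⟩,
    ⟨v0, hv0S, fun h => hv0X h.1⟩, ?_⟩
  rintro x ⟨hxX, hxadj⟩ y ⟨hyS, hy⟩
  rcases eq_or_ne y v0 with rfl | hne
  · exact hxadj.symm
  · rcases hcover y hyS hne with hyX | hyY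
    · -- y ∈ X but not a neighbor of v0
      have : ¬ G.Adj v0 y := fun h => hy ⟨hyX, h⟩
      exact key y hyX this x hxX hxadj
    · exact hcross x hxX y hyY

/-- Seinsche: a connected P4-free set with at least two elements is a join. -/
lemma seinsche (hP4 : NoP4 G) :
    ∀ n (S : Set α), S.Finite → S.ncard ≤ n → ConnS G S →
      (∃ a ∈ S, ∃ b ∈ S, a ≠ b) →
      ∃ Z ⊆ S, Z.Nonempty ∧ (S \ Z).Nonempty ∧ ∀ x ∈ Z, ∀ y ∈ S \ Z, G.Adj x y := by
  classical
  intro n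
  induction n with
  | zero =>
      intro S hfin hcard _ htwo
      obtain ⟨a, ha, _⟩ := htwo
      have : S.ncard ≠ 0 := by
        intro h
        rw [Set.ncard_eq_zero hfin] at h
        simp [h] at ha
      omega
  | succ n ih =>
      intro S hfin hcard hconn htwo
      obtain ⟨a, haS, b, hbS, hab⟩ := htwo
      set v0 := a with hv0
      set S' := S \ {v0} with hS'
      have hbS' : b ∈ S' := ⟨hbS, fun h => hab (by simpa using h.symm)⟩
      have hS'fin : S'.Finite := hfin.subset Set.diff_subset
      have hS'card : S'.ncard ≤ n := by
        have h1 : S'.ncard < S.ncard := Set.ncard_diff_singleton_lt_of_mem haS hfin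
        omega
      by_cases hconn' : ConnS G S'
      · by_cases htwo' : ∃ x ∈ S', ∃ y ∈ S', x ≠ y
        · -- S' connected: use IH split of S'
          obtain ⟨X, hXS', hXne, hXcne, hXcross⟩ := ih S' hS'fin hS'card hconn' htwo'
          set Y := S' \ X with hY
          -- v0's neighborhood vs X and Y
          by_cases hX0 : ∃ x ∈ X, ¬ G.Adj v0 x
          · by_cases hY0 : ∃ y ∈ Y, ¬ G.Adj v0 y
            · -- v0 has some neighbor in S'
              have hnbr : ∃ w ∈ S', G.Adj v0 w := by
                obtain ⟨x, hx, y, hy, hadj⟩ := conn_cross hconn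
                  (Set.singleton_subset_iff.2 haS) rfl (show b ∈ S \ {v0} from hbS')
                rcases hx with rfl
                exact ⟨y, hy, hadj⟩
              obtain ⟨w, hwS', hwadj⟩ := hnbr
              have hv0S' : v0 ∉ S' := fun h => h.2 rfl
              have hdisj : ∀ z, z ∈ X → z ∈ Y → False := fun z h1 h2 => h2.2 h1
              have hcover : ∀ z ∈ S, z ≠ v0 → z ∈ X ∨ z ∈ Y := by
                intro z hz hnz
                by_cases hzX : z ∈ X
                · exact Or.inl hzX
                · exact Or.inr ⟨⟨hz, by simpa using hnz⟩, hzX⟩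
              rcases (by_cases (fun h : w ∈ X => Or.inl h) (fun h => Or.inr h) :
                  w ∈ X ∨ w ∉ X) with hwX | hwX
              · exact seinsche_aux hP4 haS (fun h => (hXS' h).2 rfl) (fun h => h.1.2 rfl)
                  (fun z hz => (hXS' hz).1) (fun z hz => hz.1.1) hcover hdisj hXcross
                  hX0 hY0 ⟨w, hwX, hwadj⟩
              · -- w ∈ Y : symmetric application
                have hsym := seinsche_aux hP4 haS (X := Y) (Y := X)
                  (fun h => h.1.2 rfl) (fun h => (hXS' h).2 rfl)
                  (fun z hz => hz.1.1) (fun z hz => (hXS' hz).1)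
                  (fun z hz hnz => (hcover z hz hnz).symm)
                  (fun z h1 h2 => hdisj z h2 h1)
                  (fun x hx y hy => (hXcross y hy x hx).symm)
                  hY0 hX0 ⟨w, ⟨hwS', hwX⟩, hwadj⟩
                exact hsym
            · -- v0 joined to all of Y : Z = Y works
              push_neg at hY0
              have hYne : Y.Nonempty := hXcne
              refine ⟨Y, fun z hz => hz.1.1, hYne, ⟨v0, haS, fun h => h.1.2 rfl⟩, ?_⟩
              intro x hx y hy
              rcases eq_or_ne y v0 with rfl | hne
              · exact (hY0 x hx).symm
              · have hyS' : y ∈ S' := ⟨hy.1, by simpa using hne⟩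
                by_cases hyX : y ∈ X
                · exact (hXcross y hyX x hx).symm
                · exact absurd (⟨hyS', hyX⟩ : y ∈ Y) hy.2
          · -- v0 joined to all of X : Z = X works
            push_neg at hX0
            refine ⟨X, fun z hz => (hXS' hz).1, hXne, ⟨v0, haS, fun h => (hXS' h).2 rfl⟩, ?_⟩
            intro x hx y hy
            rcases eq_or_ne y v0 with rfl | hne
            · exact (hX0 x hx).symm
            · exact hXcross x hx y ⟨⟨hy.1, by simpa using hne⟩, hy.2⟩
        · -- S' must be the singleton {b} : S = {v0, b}
          push_neg at htwo'
          have hS'b : S' = {b} := by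
            apply Set.eq_singleton_iff_unique_mem.2
            exact ⟨hbS', fun x hx => by
              by_contra hne
              exact hne (htwo' x hx b hbS')⟩
          have hadj : G.Adj v0 b := by
            obtain ⟨x, hx, y, hy, hadj⟩ := conn_cross hconn
              (Set.singleton_subset_iff.2 haS) rfl (show b ∈ S \ {v0} from hbS')
            rcases hx with rfl
            have : y = b := by
              have : y ∈ S' := hy
              rw [hS'b] at this; exact this
            rwa [this] at hadj
          refine ⟨{v0}, Set.singleton_subset_iff.2 haS, ⟨v0, rfl⟩, ⟨b, hbS, fun h => hab (by simpa using h.symm)⟩, ?_⟩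
          rintro x rfl y hy
          have : y ∈ S' := hy
          rw [hS'b] at this
          rcases this
          exact hadj
      · -- S' disconnected : v0 is adjacent to everything in S'
        have hS'ne : S'.Nonempty := ⟨b, hbS'⟩
        obtain ⟨A, hAS', hAne, hBne, hanti⟩ := not_conn_split hS'ne hconn'
        set B := S' \ A with hB
        -- v0 has a neighbor in A and in B
        have hnbr : ∀ (P Q : Set α), P ∪ Q = S' → (∀ p ∈ P, ∀ q ∈ Q, ¬ G.Adj p q) →
            P.Nonempty → Q.Nonempty → ∃ x ∈ P, G.Adj v0 x := by
          intro P Q hPQ hPQanti hPne hQne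
          obtain ⟨p0, hp0⟩ := hPne
          have hp0S : p0 ∈ S := (hPQ ▸ Set.mem_union_left Q hp0 : p0 ∈ S').1
          obtain ⟨x, hx, y, hy, hadj⟩ := conn_cross hconn
            (show P ⊆ S from fun z hz => ((hPQ ▸ Set.mem_union_left Q hz : z ∈ S')).1)
            hp0 (show v0 ∈ S \ P from ⟨haS, fun h =>
              ((hPQ ▸ Set.mem_union_left Q h : v0 ∈ S')).2 rfl⟩)
          rcases eq_or_ne y v0 with rfl | hne
          · exact ⟨x, hx, hadj.symm⟩
          · exfalso
            have hyS' : y ∈ S' := ⟨hy.1, by simpa using hne⟩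
            have : y ∈ Q := by
              rcases (hPQ ▸ hyS' : y ∈ P ∪ Q) with h | h
              · exact absurd h hy.2
              · exact h
            exact hPQanti x hx y this hadj
        have hAB : A ∪ B = S' := by
          rw [hB]; exact Set.union_diff_cancel' (le_refl _) hAS'
        have hBanti : ∀ p ∈ B, ∀ q ∈ A, ¬ G.Adj p q :=
          fun p hp q hq hadj => hanti q hq p hp hadj.symm
        have hABun : B ∪ A = S' := by rw [Set.union_comm]; exact hAB
        obtain ⟨xA, hxA, hxAadj⟩ := hnbr A B hAB hanti hAne hBne
        obtain ⟨xB, hxB, hxBadj⟩ := hnbr B A hABun hBanti hBne hAne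
        -- v0 adjacent to all of S'
        have huniv : ∀ y ∈ S', G.Adj v0 y := by
          intro y hyS'
          by_contra hyn
          -- y is in A or B ; handle symmetrically
          have main : ∀ (P Q : Set α), P ∪ Q = S' → (∀ p ∈ P, ∀ q ∈ Q, ¬ G.Adj p q) →
              y ∈ P → (∃ z ∈ Q, G.Adj v0 z) → False := by
            intro P Q hPQ hPQanti hyP hzQ
            obtain ⟨z, hzQ', hzadj⟩ := hzQ
            -- no edges between P-neighbors of v0 and P-nonneighbors of v0
            have hkey : ∀ x ∈ P, G.Adj v0 x → ∀ y' ∈ P, ¬ G.Adj v0 y' → ¬ G.Adj x y' := by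
              intro x hxP hxadj y' hy'P hy'n hadj
              -- P4 : y' - x - v0 - z
              exact hP4 hadj.symm hxadj.symm hzadj
                (fun h => hy'n h.symm) (hPQanti x hxP z hzQ') (hPQanti y' hy'P z hzQ')
            -- the set P0 of nonneighbors of v0 in P is anticomplete to everything else
            set P0 := {p ∈ P | ¬ G.Adj v0 p} with hP0
            have hyP0 : y ∈ P0 := ⟨hyP, hyn⟩
            have hP0S : P0 ⊆ S := fun z' hz' =>
              ((hPQ ▸ Set.mem_union_left Q hz'.1 : z' ∈ S')).1
            obtain ⟨x, hx, y', hy', hadj⟩ := conn_cross hconn hP0S hyP0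
              (show v0 ∈ S \ P0 from ⟨haS, fun h =>
                ((hPQ ▸ Set.mem_union_left Q h.1 : v0 ∈ S')).2 rfl⟩)
            rcases eq_or_ne y' v0 with rfl | hne
            · exact hx.2 hadj.symm
            · have hy'S' : y' ∈ S' := ⟨hy'.1, by simpa using hne⟩
              rcases (hPQ ▸ hy'S' : y' ∈ P ∪ Q) with h | h
              · -- y' ∈ P \ P0 : neighbor of v0
                have hy'adj : G.Adj v0 y' := by
                  by_contra hc
                  exact hy'.2 ⟨h, hc⟩
                exact hkey y' h hy'adj x hx.1 hx.2 hadj.symm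
              · exact hPQanti x hx.1 y' h hadj
          rcases (hAB ▸ hyS' : y ∈ A ∪ B) with h | h
          · exact main A B hAB hanti h ⟨xB, hxB, hxBadj⟩
          · exact main B A hABun hBanti h ⟨xA, hxA, hxAadj⟩
        refine ⟨{v0}, Set.singleton_subset_iff.2 haS, ⟨v0, rfl⟩,
          ⟨b, hbS, fun h => hab (by simpa using h.symm)⟩, ?_⟩
        rintro x rfl y hy
        exact huniv y ⟨hy.1, fun h => hy.2 h⟩

section Inductive

lemma exists_pair_of_not_sps {S : Set α} (h : ¬ SPs G S) : ∃ a ∈ S, ∃ b ∈ S, a ≠ b := by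
  by_contra hc
  push_neg at hc
  refine h (IndS.sps ?_)
  intro x hx y hy hadj
  have := hc x hx y hy
  subst this
  exact G.loopless.irrefl x hadj

lemma ssub_ncard {S Z : Set α} (hfin : S.Finite) (hZS : Z ⊆ S) {w : α} (hwS : w ∈ S)
    (hwZ : w ∉ Z) : Z.ncard < S.ncard :=
  Set.ncard_lt_ncard ((Set.ssubset_iff_of_subset hZS).2 ⟨w, hwS, hwZ⟩) hfin

/-- L4 : split theorem for cographs -/
lemma split_thm (hP4 : NoP4 G) :
    ∀ n (S : Set α), S.Finite → S.ncard ≤ n → ¬ Conf2K2 G S → ¬ ConfC4 G S → SPs G S := by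
  classical
  intro n
  induction n with
  | zero =>
      intro S hfin hcard _ _
      have : S = ∅ := by
        rw [← Set.ncard_eq_zero hfin]
        omega
      subst this
      exact IndS.sps (fun x hx => absurd hx (Set.notMem_empty _))
  | succ n ih =>
      intro S hfin hcard h22 hC4
      by_cases htwo : ∃ a ∈ S, ∃ b ∈ S, a ≠ b
      · by_cases hconn : ConnS G S
        · obtain ⟨Z, hZS, hZne, hYne, hcross⟩ := seinsche hP4 S.ncard S hfin le_rfl hconn htwo
          by_cases hZp : ∃ a ∈ Z, ∃ b ∈ Z, a ≠ b ∧ ¬ G.Adj a b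
          · by_cases hYp : ∃ a ∈ S \ Z, ∃ b ∈ S \ Z, a ≠ b ∧ ¬ G.Adj a b
            · obtain ⟨a, ha, b, hb, hne, hnadj⟩ := hZp
              obtain ⟨c, hc, d, hd, hne', hnadj'⟩ := hYp
              exact absurd ⟨a, b, c, d, hZS ha, hZS hb, hc.1, hd.1, hnadj, hnadj',
                hcross a ha c hc, hcross a ha d hd, hcross b hb c hc, hcross b hb d hd,
                hne, hne'⟩ hC4
            · push_neg at hYp
              have hYclq : ClqS G (S \ Z) := by
                intro a ha b hb hne
                by_contra hnadj
                exact hnadj (hYp a ha b hb hne)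
              obtain ⟨y0, hy0⟩ := hYne
              have hZcard : Z.ncard ≤ n := by
                have := ssub_ncard hfin hZS hy0.1 hy0.2
                omega
              obtain ⟨Q, hQZ, hQclq, hQind⟩ := ih Z (hfin.subset hZS) hZcard
                (fun h => h22 (h.mono hZS)) (fun h => hC4 (h.mono hZS))
              refine ⟨Q ∪ (S \ Z), ?_, ?_, ?_⟩
              · intro z hz
                rcases hz with hz | hz
                · exact hZS (hQZ hz)
                · exact hz.1
              · exact clq_union_join hQclq hYclq (fun x hx y hy => hcross x (hQZ hx) y hy)
              · refine (hQind.mono ?_)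
                rintro z ⟨hzS, hz⟩
                simp only [Set.mem_union, not_or] at hz
                obtain ⟨hzQ, hzY⟩ := hz
                have hzZ : z ∈ Z := by
                  by_contra hc
                  exact hzY ⟨hzS, hc⟩
                exact ⟨hzZ, hzQ⟩
          · push_neg at hZp
            have hZclq : ClqS G Z := by
              intro a ha b hb hne
              by_contra hnadj
              exact hnadj (hZp a ha b hb hne)
            obtain ⟨z0, hz0⟩ := hZne
            have hYcard : (S \ Z).ncard ≤ n := by
              have := ssub_ncard hfin (Set.diff_subset : S \ Z ⊆ S) (hZS hz0)
                (fun h => h.2 hz0)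
              omega
            obtain ⟨Q, hQY, hQclq, hQind⟩ := ih (S \ Z) (hfin.subset Set.diff_subset) hYcard
              (fun h => h22 (h.mono Set.diff_subset)) (fun h => hC4 (h.mono Set.diff_subset))
            refine ⟨Q ∪ Z, ?_, ?_, ?_⟩
            · intro z hz
              rcases hz with hz | hz
              · exact (hQY hz).1
              · exact hZS hz
            · exact clq_union_join hQclq hZclq (fun x hx y hy => (hcross y hy x (hQY hx)).symm)
            · refine (hQind.mono ?_)
              rintro z ⟨hzS, hz⟩
              simp only [Set.mem_union, not_or] at hz
              exact ⟨⟨hzS, hz.2⟩, hz.1⟩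
        · obtain ⟨a0, ha0, _⟩ := htwo
          obtain ⟨A, hAS, hAne, hBne, hanti⟩ := not_conn_split ⟨a0, ha0⟩ hconn
          by_cases hAe : ∃ a ∈ A, ∃ b ∈ A, G.Adj a b
          · by_cases hBe : ∃ a ∈ S \ A, ∃ b ∈ S \ A, G.Adj a b
            · obtain ⟨a, ha, b, hb, hab⟩ := hAe
              obtain ⟨c, hc, d, hd, hcd⟩ := hBe
              refine absurd ⟨a, b, c, d, hAS ha, hAS hb, hc.1, hd.1, hab, hcd,
                hanti a ha c hc, hanti a ha d hd, hanti b hb c hc, hanti b hb d hd,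
                ?_, ?_, ?_, ?_⟩ h22 <;>
                (rintro rfl; first | exact hc.2 ha | exact hd.2 ha | exact hc.2 hb | exact hd.2 hb)
            · push_neg at hBe
              have hBind : IndS G (S \ A) := fun x hx y hy => hBe x hx y hy
              obtain ⟨b0, hb0⟩ := hBne
              have hAcard : A.ncard ≤ n := by
                have := ssub_ncard hfin hAS hb0.1 hb0.2
                omega
              obtain ⟨Q, hQA, hQclq, hQind⟩ := ih A (hfin.subset hAS) hAcard
                (fun h => h22 (h.mono hAS)) (fun h => hC4 (h.mono hAS))
              refine ⟨Q, fun z hz => hAS (hQA hz), hQclq, ?_⟩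
              have : S \ Q ⊆ (A \ Q) ∪ (S \ A) := by
                rintro z ⟨hzS, hzQ⟩
                by_cases hzA : z ∈ A
                · exact Or.inl ⟨hzA, hzQ⟩
                · exact Or.inr ⟨hzS, hzA⟩
              exact (ind_union hQind hBind
                (fun x hx y hy => hanti x hx.1 y hy)).mono this
          · push_neg at hAe
            have hAind : IndS G A := fun x hx y hy => hAe x hx y hy
            obtain ⟨a1, ha1⟩ := hAne
            have hBcard : (S \ A).ncard ≤ n := by
              have := ssub_ncard hfin (Set.diff_subset : S \ A ⊆ S) (hAS ha1)
                (fun h => h.2 ha1)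
              omega
            obtain ⟨Q, hQB, hQclq, hQind⟩ := ih (S \ A) (hfin.subset Set.diff_subset) hBcard
              (fun h => h22 (h.mono Set.diff_subset)) (fun h => hC4 (h.mono Set.diff_subset))
            refine ⟨Q, fun z hz => (hQB hz).1, hQclq, ?_⟩
            have : S \ Q ⊆ A ∪ ((S \ A) \ Q) := by
              rintro z ⟨hzS, hzQ⟩
              by_cases hzA : z ∈ A
              · exact Or.inl hzA
              · exact Or.inr ⟨⟨hzS, hzA⟩, hzQ⟩
            exact (ind_union hAind hQind
              (fun x hx y hy => hanti x hx y hy.1)).mono this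
      · push_neg at htwo
        refine IndS.sps ?_
        intro x hx y hy hadj
        have := htwo x hx y hy
        subst this
        exact G.loopless.irrefl x hadj

end Inductive

section Inductive2

/-- L12 : a cograph that is neither split nor a cluster contains C4, K2∪P3,
or 2K2 with a common neighbor. -/
lemma lemR (hP4 : NoP4 G) :
    ∀ n (S : Set α), S.Finite → S.ncard ≤ n → ¬ SPs G S → ¬ CLS G S →
      ConfC4 G S ∨ ConfK2P3 G S ∨ Conf2K2b G S := by
  classical
  intro n
  induction n with
  | zero =>
      intro S hfin hcard hSP _
      exfalso
      have : S = ∅ := by rw [← Set.ncard_eq_zero hfin]; omega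
      subst this
      exact hSP (IndS.sps (fun x hx => absurd hx (Set.notMem_empty _)))
  | succ n ih =>
      intro S hfin hcard hSP hCL
      have htwo := exists_pair_of_not_sps hSP
      by_cases hconn : ConnS G S
      · obtain ⟨Z, hZS, hZne, hYne, hcross⟩ := seinsche hP4 S.ncard S hfin le_rfl hconn htwo
        by_cases hZp : ∃ a ∈ Z, ∃ b ∈ Z, a ≠ b ∧ ¬ G.Adj a b
        · by_cases hYp : ∃ a ∈ S \ Z, ∃ b ∈ S \ Z, a ≠ b ∧ ¬ G.Adj a b
          · obtain ⟨a, ha, b, hb, hne, hnadj⟩ := hZp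
            obtain ⟨c, hc, d, hd, hne', hnadj'⟩ := hYp
            exact Or.inl ⟨a, b, c, d, hZS ha, hZS hb, hc.1, hd.1, hnadj, hnadj',
              hcross a ha c hc, hcross a ha d hd, hcross b hb c hc, hcross b hb d hd,
              hne, hne'⟩
          · push_neg at hYp
            have hYclq : ClqS G (S \ Z) := by
              intro a ha b hb hne
              by_contra hnadj
              exact hnadj (hYp a ha b hb hne)
            have hSPZ : ¬ SPs G Z := by
              rintro ⟨Q, hQZ, hQclq, hQind⟩
              refine hSP ⟨Q ∪ (S \ Z), ?_, ?_, ?_⟩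
              · intro z hz
                rcases hz with hz | hz
                · exact hZS (hQZ hz)
                · exact hz.1
              · exact clq_union_join hQclq hYclq (fun x hx y hy => hcross x (hQZ hx) y hy)
              · refine hQind.mono ?_
                rintro z ⟨hzS, hz⟩
                simp only [Set.mem_union, not_or] at hz
                have hzZ : z ∈ Z := by
                  by_contra hc
                  exact hz.2 ⟨hzS, hc⟩
                exact ⟨hzZ, hz.1⟩
            obtain ⟨y0, hy0⟩ := hYne
            by_cases hCLZ : CLS G Z
            · have h22 : Conf2K2 G Z := by
                by_contra h22
                exact hSPZ (cluster_not_sps hCLZ h22)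
              obtain ⟨a, b, c, d, ha, hb, hc, hd, hrest⟩ := h22
              obtain ⟨hab, hcd, hac, had, hbc, hbd, n1, n2, n3, n4⟩ := hrest
              exact Or.inr (Or.inr ⟨a, b, c, d, y0, hZS ha, hZS hb, hZS hc, hZS hd, hy0.1,
                hab, hcd, hac, had, hbc, hbd, n1, n2, n3, n4,
                (hcross a ha y0 hy0).symm, (hcross b hb y0 hy0).symm,
                (hcross c hc y0 hy0).symm, (hcross d hd y0 hy0).symm⟩)
            · have hZcard : Z.ncard ≤ n := by
                have := ssub_ncard hfin hZS hy0.1 hy0.2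
                omega
              rcases ih Z (hfin.subset hZS) hZcard hSPZ hCLZ with h | h | h
              · exact Or.inl (h.mono hZS)
              · exact Or.inr (Or.inl (h.mono hZS))
              · exact Or.inr (Or.inr (h.mono hZS))
        · push_neg at hZp
          have hZclq : ClqS G Z := by
            intro a ha b hb hne
            by_contra hnadj
            exact hnadj (hZp a ha b hb hne)
          have hSPY : ¬ SPs G (S \ Z) := by
            rintro ⟨Q, hQY, hQclq, hQind⟩
            refine hSP ⟨Q ∪ Z, ?_, ?_, ?_⟩
            · intro z hz
              rcases hz with hz | hz
              · exact (hQY hz).1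
              · exact hZS hz
            · exact clq_union_join hQclq hZclq (fun x hx y hy => (hcross y hy x (hQY hx)).symm)
            · refine hQind.mono ?_
              rintro z ⟨hzS, hz⟩
              simp only [Set.mem_union, not_or] at hz
              exact ⟨⟨hzS, hz.2⟩, hz.1⟩
          obtain ⟨z0, hz0⟩ := hZne
          by_cases hCLY : CLS G (S \ Z)
          · have h22 : Conf2K2 G (S \ Z) := by
              by_contra h22
              exact hSPY (cluster_not_sps hCLY h22)
            obtain ⟨a, b, c, d, ha, hb, hc, hd, hrest⟩ := h22
            obtain ⟨hab, hcd, hac, had, hbc, hbd, n1, n2, n3, n4⟩ := hrest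
            exact Or.inr (Or.inr ⟨a, b, c, d, z0, ha.1, hb.1, hc.1, hd.1, hZS hz0,
              hab, hcd, hac, had, hbc, hbd, n1, n2, n3, n4,
              hcross z0 hz0 a ha, hcross z0 hz0 b hb,
              hcross z0 hz0 c hc, hcross z0 hz0 d hd⟩)
          · have hYcard : (S \ Z).ncard ≤ n := by
              have := ssub_ncard hfin (Set.diff_subset : S \ Z ⊆ S) (hZS hz0)
                (fun h => h.2 hz0)
              omega
            rcases ih (S \ Z) (hfin.subset Set.diff_subset) hYcard hSPY hCLY with h | h | h
            · exact Or.inl (h.mono Set.diff_subset)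
            · exact Or.inr (Or.inl (h.mono Set.diff_subset))
            · exact Or.inr (Or.inr (h.mono Set.diff_subset))
      · obtain ⟨a0, ha0, _⟩ := htwo
        obtain ⟨A, hAS, hAne, hBne, hanti⟩ := not_conn_split ⟨a0, ha0⟩ hconn
        obtain ⟨x, y, z, hx, hy, hz, hxy, hyz, hxz, hnexz⟩ := not_cls_iff_confP3.1 hCL
        -- the P3 lies within A or within S \ A
        have hanti2 : ∀ ⦃p⦄, p ∈ A → ∀ ⦃q⦄, q ∈ S \ A → ¬ G.Adj p q ∧ p ≠ q := by
          intro p hp q hq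
          refine ⟨hanti p hp q hq, ?_⟩
          rintro rfl
          exact hq.2 hp
        have main : ∀ (P Q : Set α), P ⊆ S → Q ⊆ S → (∀ w ∈ S, w ∈ P ∨ w ∈ Q) →
            (∀ ⦃p⦄, p ∈ P → ∀ ⦃q⦄, q ∈ Q → ¬ G.Adj p q ∧ p ≠ q) → Q.Nonempty →
            x ∈ P → y ∈ P → z ∈ P →
            ConfC4 G S ∨ ConfK2P3 G S ∨ Conf2K2b G S := by
          intro P Q hPS hQS hcover hanti' hQne hxP hyP hzP
          by_cases hQe : ∃ a ∈ Q, ∃ b ∈ Q, G.Adj a b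
          · obtain ⟨k1, hk1, k2, hk2, hk⟩ := hQe
            refine Or.inr (Or.inl ⟨k1, k2, x, y, z, hQS hk1, hQS hk2, hPS hxP, hPS hyP,
              hPS hzP, hk, hxy, hyz, hxz, hnexz, ?_⟩)
            intro a ha b hb
            simp only [Set.mem_insert_iff, Set.mem_singleton_iff] at ha hb
            have haQ : a ∈ Q := by rcases ha with rfl | rfl <;> assumption
            have hbP : b ∈ P := by rcases hb with rfl | rfl | rfl <;> assumption
            have := hanti' hbP haQ
            exact ⟨fun h => this.1 h.symm, fun h => this.2 h.symm⟩
          · push_neg at hQe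
            have hQind : IndS G Q := fun a ha b hb => hQe a ha b hb
            have hSPP : ¬ SPs G P := by
              rintro ⟨Q', hQ'P, hQ'clq, hQ'ind⟩
              refine hSP ⟨Q', fun w hw => hPS (hQ'P hw), hQ'clq, ?_⟩
              have hsub : S \ Q' ⊆ (P \ Q') ∪ Q := by
                rintro w ⟨hwS, hwQ'⟩
                rcases hcover w hwS with hw | hw
                · exact Or.inl ⟨hw, hwQ'⟩
                · exact Or.inr hw
              exact (ind_union hQ'ind hQind
                (fun p hp q hq => (hanti' hp.1 hq).1)).mono hsub
            have hCLP : ¬ CLS G P :=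
              not_cls_iff_confP3.2 ⟨x, y, z, hxP, hyP, hzP, hxy, hyz, hxz, hnexz⟩
            obtain ⟨q0, hq0⟩ := hQne
            have hPcard : P.ncard ≤ n := by
              have := ssub_ncard hfin hPS (hQS hq0) (fun h => (hanti' h hq0).2 rfl)
              omega
            rcases ih P (hfin.subset hPS) hPcard hSPP hCLP with h | h | h
            · exact Or.inl (h.mono hPS)
            · exact Or.inr (Or.inl (h.mono hPS))
            · exact Or.inr (Or.inr (h.mono hPS))
        have hyAB : y ∈ A ∨ y ∈ S \ A := by
          by_cases hyA : y ∈ A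
          · exact Or.inl hyA
          · exact Or.inr ⟨hy, hyA⟩
        rcases hyAB with hyA | hyB
        · have hxA : x ∈ A := by
            by_contra hxA
            exact (hanti2 hyA (⟨hx, hxA⟩ : x ∈ S \ A)).1 hxy.symm
          have hzA : z ∈ A := by
            by_contra hzA
            exact (hanti2 hyA (⟨hz, hzA⟩ : z ∈ S \ A)).1 hyz
          exact main A (S \ A) hAS Set.diff_subset
            (fun w hw => by
              by_cases hwA : w ∈ A
              · exact Or.inl hwA
              · exact Or.inr ⟨hw, hwA⟩)
            hanti2 hBne hxA hyA hzA
        · have hxB : x ∈ S \ A := by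
            refine ⟨hx, fun hxA => ?_⟩
            exact (hanti2 hxA hyB).1 hxy
          have hzB : z ∈ S \ A := by
            refine ⟨hz, fun hzA => ?_⟩
            exact (hanti2 hzA hyB).1 hyz.symm
          exact main (S \ A) A Set.diff_subset hAS
            (fun w hw => by
              by_cases hwA : w ∈ A
              · exact Or.inr hwA
              · exact Or.inl ⟨hw, hwA⟩)
            (fun p hp q hq => ⟨fun h => (hanti2 hq hp).1 h.symm, fun h => (hanti2 hq hp).2 h.symm⟩)
            hAne hxB hyB hzB

/-- L6 : a triangle-free non-split non-cluster cograph contains C4 or K2∪P3. -/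
lemma lemS (hP4 : NoP4 G) :
    ∀ n (S : Set α), S.Finite → S.ncard ≤ n → TFS G S → ¬ SPs G S → ¬ CLS G S →
      ConfC4 G S ∨ ConfK2P3 G S := by
  classical
  intro n
  induction n with
  | zero =>
      intro S hfin hcard _ hSP _
      exfalso
      have : S = ∅ := by rw [← Set.ncard_eq_zero hfin]; omega
      subst this
      exact hSP (IndS.sps (fun x hx => absurd hx (Set.notMem_empty _)))
  | succ n ih =>
      intro S hfin hcard hTF hSP hCL
      have htwo := exists_pair_of_not_sps hSP
      by_cases hconn : ConnS G S
      · obtain ⟨Z, hZS, hZne, hYne, hcross⟩ := seinsche hP4 S.ncard S hfin le_rfl hconn htwo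
        obtain ⟨y0, hy0⟩ := hYne
        obtain ⟨z0, hz0⟩ := hZne
        have hZind : IndS G Z := by
          intro a ha b hb hab
          exact hTF (hZS ha) (hZS hb) hy0.1 hab (hcross b hb y0 hy0) (hcross a ha y0 hy0)
        have hYind : IndS G (S \ Z) := by
          intro a ha b hb hab
          exact hTF ha.1 hb.1 (hZS hz0) hab (hcross z0 hz0 b hb).symm (hcross z0 hz0 a ha).symm
        by_cases hZ2 : ∃ a ∈ Z, ∃ b ∈ Z, a ≠ b
        · by_cases hY2 : ∃ a ∈ S \ Z, ∃ b ∈ S \ Z, a ≠ b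
          · obtain ⟨a, ha, b, hb, hne⟩ := hZ2
            obtain ⟨c, hc, d, hd, hne'⟩ := hY2
            exact Or.inl ⟨a, b, c, d, hZS ha, hZS hb, hc.1, hd.1, hZind ha hb, hYind hc hd,
              hcross a ha c hc, hcross a ha d hd, hcross b hb c hc, hcross b hb d hd,
              hne, hne'⟩
          · push_neg at hY2
            exfalso
            refine hSP ⟨S \ Z, Set.diff_subset, ?_, ?_⟩
            · intro a ha b hb hne
              exact absurd (hY2 a ha b hb) hne
            · have : S \ (S \ Z) = Z := Set.diff_diff_cancel_left hZS
              rw [this]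
              exact hZind
        · push_neg at hZ2
          exfalso
          refine hSP ⟨Z, hZS, ?_, ?_⟩
          · intro a ha b hb hne
            exact absurd (hZ2 a ha b hb) hne
          · exact hYind
      · obtain ⟨a0, ha0, _⟩ := htwo
        obtain ⟨A, hAS, hAne, hBne, hanti⟩ := not_conn_split ⟨a0, ha0⟩ hconn
        obtain ⟨x, y, z, hx, hy, hz, hxy, hyz, hxz, hnexz⟩ := not_cls_iff_confP3.1 hCL
        have hanti2 : ∀ ⦃p⦄, p ∈ A → ∀ ⦃q⦄, q ∈ S \ A → ¬ G.Adj p q ∧ p ≠ q := by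
          intro p hp q hq
          refine ⟨hanti p hp q hq, ?_⟩
          rintro rfl
          exact hq.2 hp
        have main : ∀ (P Q : Set α), P ⊆ S → Q ⊆ S → (∀ w ∈ S, w ∈ P ∨ w ∈ Q) →
            (∀ ⦃p⦄, p ∈ P → ∀ ⦃q⦄, q ∈ Q → ¬ G.Adj p q ∧ p ≠ q) → Q.Nonempty →
            x ∈ P → y ∈ P → z ∈ P →
            ConfC4 G S ∨ ConfK2P3 G S := by
          intro P Q hPS hQS hcover hanti' hQne hxP hyP hzP
          by_cases hQe : ∃ a ∈ Q, ∃ b ∈ Q, G.Adj a b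
          · obtain ⟨k1, hk1, k2, hk2, hk⟩ := hQe
            refine Or.inr ⟨k1, k2, x, y, z, hQS hk1, hQS hk2, hPS hxP, hPS hyP,
              hPS hzP, hk, hxy, hyz, hxz, hnexz, ?_⟩
            intro a ha b hb
            simp only [Set.mem_insert_iff, Set.mem_singleton_iff] at ha hb
            have haQ : a ∈ Q := by rcases ha with rfl | rfl <;> assumption
            have hbP : b ∈ P := by rcases hb with rfl | rfl | rfl <;> assumption
            have := hanti' hbP haQ
            exact ⟨fun h => this.1 h.symm, fun h => this.2 h.symm⟩
          · push_neg at hQe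
            have hQind : IndS G Q := fun a ha b hb => hQe a ha b hb
            have hSPP : ¬ SPs G P := by
              rintro ⟨Q', hQ'P, hQ'clq, hQ'ind⟩
              refine hSP ⟨Q', fun w hw => hPS (hQ'P hw), hQ'clq, ?_⟩
              have hsub : S \ Q' ⊆ (P \ Q') ∪ Q := by
                rintro w ⟨hwS, hwQ'⟩
                rcases hcover w hwS with hw | hw
                · exact Or.inl ⟨hw, hwQ'⟩
                · exact Or.inr hw
              exact (ind_union hQ'ind hQind
                (fun p hp q hq => (hanti' hp.1 hq).1)).mono hsub
            have hCLP : ¬ CLS G P :=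
              not_cls_iff_confP3.2 ⟨x, y, z, hxP, hyP, hzP, hxy, hyz, hxz, hnexz⟩
            obtain ⟨q0, hq0⟩ := hQne
            have hPcard : P.ncard ≤ n := by
              have := ssub_ncard hfin hPS (hQS hq0) (fun h => (hanti' h hq0).2 rfl)
              omega
            rcases ih P (hfin.subset hPS) hPcard (hTF.mono hPS) hSPP hCLP with h | h
            · exact Or.inl (h.mono hPS)
            · exact Or.inr (h.mono hPS)
        have hyAB : y ∈ A ∨ y ∈ S \ A := by
          by_cases hyA : y ∈ A
          · exact Or.inl hyA
          · exact Or.inr ⟨hy, hyA⟩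
        rcases hyAB with hyA | hyB
        · have hxA : x ∈ A := by
            by_contra hxA
            exact (hanti2 hyA (⟨hx, hxA⟩ : x ∈ S \ A)).1 hxy.symm
          have hzA : z ∈ A := by
            by_contra hzA
            exact (hanti2 hyA (⟨hz, hzA⟩ : z ∈ S \ A)).1 hyz
          exact main A (S \ A) hAS Set.diff_subset
            (fun w hw => by
              by_cases hwA : w ∈ A
              · exact Or.inl hwA
              · exact Or.inr ⟨hw, hwA⟩)
            hanti2 hBne hxA hyA hzA
        · have hxB : x ∈ S \ A := by
            refine ⟨hx, fun hxA => ?_⟩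
            exact (hanti2 hxA hyB).1 hxy
          have hzB : z ∈ S \ A := by
            refine ⟨hz, fun hzA => ?_⟩
            exact (hanti2 hzA hyB).1 hyz.symm
          exact main (S \ A) A Set.diff_subset hAS
            (fun w hw => by
              by_cases hwA : w ∈ A
              · exact Or.inr hwA
              · exact Or.inl ⟨hw, hwA⟩)
            (fun p hp q hq => ⟨fun h => (hanti2 hq hp).1 h.symm, fun h => (hanti2 hq hp).2 h.symm⟩)
            hAne hxB hyB hzB

end Inductive2

section C1C2

/-- P3 ∪ 2K3 configuration -/
def ConfOut1 (G : SimpleGraph α) (S : Set α) : Prop :=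
  ∃ x y z a1 a2 a3 b1 b2 b3, x ∈ S ∧ y ∈ S ∧ z ∈ S ∧ a1 ∈ S ∧ a2 ∈ S ∧ a3 ∈ S ∧
    b1 ∈ S ∧ b2 ∈ S ∧ b3 ∈ S ∧
    G.Adj x y ∧ G.Adj y z ∧ ¬ G.Adj x z ∧ x ≠ z ∧
    G.Adj a1 a2 ∧ G.Adj a1 a3 ∧ G.Adj a2 a3 ∧ G.Adj b1 b2 ∧ G.Adj b1 b3 ∧ G.Adj b2 b3 ∧
    (∀ p ∈ ({x,y,z} : Set α), ∀ q ∈ ({a1,a2,a3,b1,b2,b3} : Set α), ¬ G.Adj p q ∧ p ≠ q) ∧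
    (∀ p ∈ ({a1,a2,a3} : Set α), ∀ q ∈ ({b1,b2,b3} : Set α), ¬ G.Adj p q ∧ p ≠ q)

/-- K3 ∪ (P3 ⊕ K1) configuration -/
def ConfOut2 (G : SimpleGraph α) (S : Set α) : Prop :=
  ∃ t1 t2 t3 x y z w, t1 ∈ S ∧ t2 ∈ S ∧ t3 ∈ S ∧ x ∈ S ∧ y ∈ S ∧ z ∈ S ∧ w ∈ S ∧
    G.Adj t1 t2 ∧ G.Adj t1 t3 ∧ G.Adj t2 t3 ∧
    G.Adj x y ∧ G.Adj y z ∧ ¬ G.Adj x z ∧ x ≠ z ∧ G.Adj w x ∧ G.Adj w y ∧ G.Adj w z ∧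
    (∀ p ∈ ({t1,t2,t3} : Set α), ∀ q ∈ ({x,y,z,w} : Set α), ¬ G.Adj p q ∧ p ≠ q)

/-- K3 ∪ paw configuration -/
def ConfOut3 (G : SimpleGraph α) (S : Set α) : Prop :=
  ∃ t1 t2 t3 w k e1 e2, t1 ∈ S ∧ t2 ∈ S ∧ t3 ∈ S ∧ w ∈ S ∧ k ∈ S ∧ e1 ∈ S ∧ e2 ∈ S ∧
    G.Adj t1 t2 ∧ G.Adj t1 t3 ∧ G.Adj t2 t3 ∧
    G.Adj w k ∧ G.Adj w e1 ∧ G.Adj w e2 ∧ G.Adj e1 e2 ∧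
    ¬ G.Adj k e1 ∧ ¬ G.Adj k e2 ∧ k ≠ e1 ∧ k ≠ e2 ∧
    (∀ p ∈ ({t1,t2,t3} : Set α), ∀ q ∈ ({w,k,e1,e2} : Set α), ¬ G.Adj p q ∧ p ≠ q)

/-- K1 ⊕ 2K3 configuration -/
def ConfOut4 (G : SimpleGraph α) (S : Set α) : Prop :=
  ∃ a a1 a2 a3 b1 b2 b3, a ∈ S ∧ a1 ∈ S ∧ a2 ∈ S ∧ a3 ∈ S ∧ b1 ∈ S ∧ b2 ∈ S ∧ b3 ∈ S ∧
    G.Adj a1 a2 ∧ G.Adj a1 a3 ∧ G.Adj a2 a3 ∧ G.Adj b1 b2 ∧ G.Adj b1 b3 ∧ G.Adj b2 b3 ∧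
    (∀ p ∈ ({a1,a2,a3} : Set α), ∀ q ∈ ({b1,b2,b3} : Set α), ¬ G.Adj p q ∧ p ≠ q) ∧
    (∀ q ∈ ({a1,a2,a3,b1,b2,b3} : Set α), G.Adj a q)

/-- 2K1 ⊕ 2K2 configuration -/
def ConfOut5 (G : SimpleGraph α) (S : Set α) : Prop :=
  ∃ x x' q1 q2 r1 r2, x ∈ S ∧ x' ∈ S ∧ q1 ∈ S ∧ q2 ∈ S ∧ r1 ∈ S ∧ r2 ∈ S ∧
    ¬ G.Adj x x' ∧ x ≠ x' ∧ G.Adj q1 q2 ∧ G.Adj r1 r2 ∧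
    (∀ p ∈ ({q1,q2} : Set α), ∀ q ∈ ({r1,r2} : Set α), ¬ G.Adj p q ∧ p ≠ q) ∧
    (∀ q ∈ ({q1,q2,r1,r2} : Set α), G.Adj x q ∧ G.Adj x' q)

lemma ConfOut1.mono {S S' : Set α} (h : ConfOut1 G S') (hs : S' ⊆ S) : ConfOut1 G S := by
  obtain ⟨a,b,c,d,e,f,g,i,j,h1,h2,h3,h4,h5,h6,h7,h8,h9,hr⟩ := h
  exact ⟨a,b,c,d,e,f,g,i,j, hs h1, hs h2, hs h3, hs h4, hs h5, hs h6, hs h7, hs h8, hs h9, hr⟩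
lemma ConfOut2.mono {S S' : Set α} (h : ConfOut2 G S') (hs : S' ⊆ S) : ConfOut2 G S := by
  obtain ⟨a,b,c,d,e,f,g,h1,h2,h3,h4,h5,h6,h7,hr⟩ := h
  exact ⟨a,b,c,d,e,f,g, hs h1, hs h2, hs h3, hs h4, hs h5, hs h6, hs h7, hr⟩
lemma ConfOut3.mono {S S' : Set α} (h : ConfOut3 G S') (hs : S' ⊆ S) : ConfOut3 G S := by
  obtain ⟨a,b,c,d,e,f,g,h1,h2,h3,h4,h5,h6,h7,hr⟩ := h
  exact ⟨a,b,c,d,e,f,g, hs h1, hs h2, hs h3, hs h4, hs h5, hs h6, hs h7, hr⟩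
lemma ConfOut4.mono {S S' : Set α} (h : ConfOut4 G S') (hs : S' ⊆ S) : ConfOut4 G S := by
  obtain ⟨a,b,c,d,e,f,g,h1,h2,h3,h4,h5,h6,h7,hr⟩ := h
  exact ⟨a,b,c,d,e,f,g, hs h1, hs h2, hs h3, hs h4, hs h5, hs h6, hs h7, hr⟩
lemma ConfOut5.mono {S S' : Set α} (h : ConfOut5 G S') (hs : S' ⊆ S) : ConfOut5 G S := by
  obtain ⟨a,b,c,d,e,f,h1,h2,h3,h4,h5,h6,hr⟩ := h
  exact ⟨a,b,c,d,e,f, hs h1, hs h2, hs h3, hs h4, hs h5, hs h6, hr⟩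

/-- C2 : a cograph with a triangle and an induced P3 contains a paw, P3 ⊕ K1 or P3 ∪ K3. -/
lemma lemC2 (hP4 : NoP4 G) :
    ∀ n (S : Set α), S.Finite → S.ncard ≤ n → ConfK3 G S → ConfP3 G S →
      ConfPaw G S ∨ ConfP3K1 G S ∨ ConfP3K3 G S := by
  classical
  intro n
  induction n with
  | zero =>
      intro S hfin hcard hK3 _
      exfalso
      obtain ⟨t1, _, _, ht1, _⟩ := hK3
      have : S = ∅ := by rw [← Set.ncard_eq_zero hfin]; omega
      rw [this] at ht1
      exact ht1
  | succ n ih =>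
      intro S hfin hcard hK3 hP3
      obtain ⟨t1, t2, t3, ht1, ht2, ht3, ht12, ht13, ht23⟩ := hK3
      obtain ⟨x, y, z, hx, hy, hz, hxy, hyz, hxz, hnexz⟩ := hP3
      by_cases hconn : ConnS G S
      · obtain ⟨Z, hZS, hZne, hYne, hcross⟩ :=
          seinsche hP4 S.ncard S hfin le_rfl hconn ⟨t1, ht1, t2, ht2, ht12.ne⟩
        -- x and z lie on the same side
        have main : ∀ (P Q : Set α), P ⊆ S → Q ⊆ S → (∀ w ∈ S, w ∈ P ∨ w ∈ Q) →
            (∀ ⦃p⦄, p ∈ P → ∀ ⦃q⦄, q ∈ Q → G.Adj p q) → Q.Nonempty →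
            x ∈ P → z ∈ P →
            ConfPaw G S ∨ ConfP3K1 G S ∨ ConfP3K3 G S := by
          intro P Q hPS hQS hcover hcr hQne hxP hzP
          by_cases hQe : ∃ a ∈ Q, ∃ b ∈ Q, G.Adj a b
          · obtain ⟨b1, hb1, b2, hb2, hb⟩ := hQe
            exact Or.inr (Or.inl ⟨x, b1, z, b2, hPS hxP, hQS hb1, hPS hzP, hQS hb2,
              (hcr hxP hb1).symm.symm, (hcr hzP hb1).symm, hxz, hnexz,
              (hcr hxP hb2).symm, hb.symm, (hcr hzP hb2).symm⟩)
          · push_neg at hQe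
            have hQind : IndS G Q := fun a ha b hb => hQe a ha b hb
            -- the triangle has an edge inside P
            have hedge : ∃ e1 ∈ P, ∃ e2 ∈ P, G.Adj e1 e2 := by
              by_cases h1 : t1 ∈ P
              · by_cases h2 : t2 ∈ P
                · exact ⟨t1, h1, t2, h2, ht12⟩
                · have h2' : t2 ∈ Q := (hcover t2 ht2).resolve_left h2
                  have h3 : t3 ∈ P := by
                    by_cases h3 : t3 ∈ P
                    · exact h3
                    · exact absurd ht23 (hQind h2' ((hcover t3 ht3).resolve_left h3))
                  exact ⟨t1, h1, t3, h3, ht13⟩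
              · have h1' : t1 ∈ Q := (hcover t1 ht1).resolve_left h1
                have h2 : t2 ∈ P := by
                  by_cases h2 : t2 ∈ P
                  · exact h2
                  · exact absurd ht12 (hQind h1' ((hcover t2 ht2).resolve_left h2))
                have h3 : t3 ∈ P := by
                  by_cases h3 : t3 ∈ P
                  · exact h3
                  · exact absurd ht13 (hQind h1' ((hcover t3 ht3).resolve_left h3))
                exact ⟨t2, h2, t3, h3, ht23⟩
            obtain ⟨e1, he1, e2, he2, he⟩ := hedge
            obtain ⟨b0, hb0⟩ := hQne
            by_cases hPp3 : ConfP3 G P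
            · obtain ⟨x', y', z', hx', hy', hz', h1, h2, h3, h4⟩ := hPp3
              exact Or.inr (Or.inl ⟨x', y', z', b0, hPS hx', hPS hy', hPS hz', hQS hb0,
                h1, h2, h3, h4, (hcr hx' hb0).symm, (hcr hy' hb0).symm, (hcr hz' hb0).symm⟩)
            · have hCLP : CLS G P := by
                by_contra hc
                exact hPp3 (not_cls_iff_confP3.1 hc)
              obtain ⟨a, b, c, ha, hb, hc, hab, hac, hbc, hca, hcb⟩ :=
                cluster_k2k1 hCLP he1 he2 he hxP hzP hnexz hxz
              exact Or.inl ⟨b0, c, a, b, hQS hb0, hPS hc, hPS ha, hPS hb,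
                (hcr hc hb0).symm, (hcr ha hb0).symm, (hcr hb hb0).symm, hab,
                fun h => hac h.symm, fun h => hbc h.symm, hca, hcb⟩
        have hxzside : (x ∈ Z ∧ z ∈ Z) ∨ (x ∈ S \ Z ∧ z ∈ S \ Z) := by
          by_cases hxZ : x ∈ Z
          · by_cases hzZ : z ∈ Z
            · exact Or.inl ⟨hxZ, hzZ⟩
            · exact absurd (hcross x hxZ z ⟨hz, hzZ⟩) hxz
          · by_cases hzZ : z ∈ Z
            · exact absurd (hcross z hzZ x ⟨hx, hxZ⟩).symm hxz
            · exact Or.inr ⟨⟨hx, hxZ⟩, ⟨hz, hzZ⟩⟩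
        rcases hxzside with ⟨hxZ, hzZ⟩ | ⟨hxY, hzY⟩
        · exact main Z (S \ Z) hZS Set.diff_subset
            (fun w hw => by
              by_cases hwZ : w ∈ Z
              · exact Or.inl hwZ
              · exact Or.inr ⟨hw, hwZ⟩)
            (fun p hp q hq => hcross p hp q hq) hYne hxZ hzZ
        · exact main (S \ Z) Z Set.diff_subset hZS
            (fun w hw => by
              by_cases hwZ : w ∈ Z
              · exact Or.inr hwZ
              · exact Or.inl ⟨hw, hwZ⟩)
            (fun p hp q hq => (hcross q hq p hp).symm) hZne hxY hzY
      · obtain ⟨A, hAS, hAne, hBne, hanti⟩ := not_conn_split ⟨t1, ht1⟩ hconn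
        have hanti2 : ∀ ⦃p⦄, p ∈ A → ∀ ⦃q⦄, q ∈ S \ A → ¬ G.Adj p q ∧ p ≠ q := by
          intro p hp q hq
          exact ⟨hanti p hp q hq, by rintro rfl; exact hq.2 hp⟩
        -- triangle side
        have htriside : (t1 ∈ A ∧ t2 ∈ A ∧ t3 ∈ A) ∨
            (t1 ∈ S \ A ∧ t2 ∈ S \ A ∧ t3 ∈ S \ A) := by
          by_cases h1 : t1 ∈ A
          · have h2 : t2 ∈ A := by
              by_contra h2
              exact (hanti2 h1 ⟨ht2, h2⟩).1 ht12
            have h3 : t3 ∈ A := by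
              by_contra h3
              exact (hanti2 h1 ⟨ht3, h3⟩).1 ht13
            exact Or.inl ⟨h1, h2, h3⟩
          · have h2 : t2 ∉ A := by
              intro h2
              exact (hanti2 h2 ⟨ht1, h1⟩).1 ht12.symm
            have h3 : t3 ∉ A := by
              intro h3
              exact (hanti2 h3 ⟨ht1, h1⟩).1 ht13.symm
            exact Or.inr ⟨⟨ht1, h1⟩, ⟨ht2, h2⟩, ⟨ht3, h3⟩⟩
        have hp3side : (x ∈ A ∧ y ∈ A ∧ z ∈ A) ∨
            (x ∈ S \ A ∧ y ∈ S \ A ∧ z ∈ S \ A) := by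
          by_cases hyA : y ∈ A
          · have hxA : x ∈ A := by
              by_contra hxA
              exact (hanti2 hyA ⟨hx, hxA⟩).1 hxy.symm
            have hzA : z ∈ A := by
              by_contra hzA
              exact (hanti2 hyA ⟨hz, hzA⟩).1 hyz
            exact Or.inl ⟨hxA, hyA, hzA⟩
          · have hxA : x ∉ A := by
              intro hxA
              exact (hanti2 hxA ⟨hy, hyA⟩).1 hxy
            have hzA : z ∉ A := by
              intro hzA
              exact (hanti2 hzA ⟨hy, hyA⟩).1 hyz.symm
            exact Or.inr ⟨⟨hx, hxA⟩, ⟨hy, hyA⟩, ⟨hz, hzA⟩⟩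
        have recurse : ∀ (P Q : Set α), P ⊆ S → Q.Nonempty → Q ⊆ S →
            (∀ ⦃q⦄, q ∈ Q → q ∉ P) →
            t1 ∈ P → t2 ∈ P → t3 ∈ P → x ∈ P → y ∈ P → z ∈ P →
            ConfPaw G S ∨ ConfP3K1 G S ∨ ConfP3K3 G S := by
          intro P Q hPS hQne hQS hQP h1 h2 h3 h4 h5 h6
          obtain ⟨q0, hq0⟩ := hQne
          have hPcard : P.ncard ≤ n := by
            have := ssub_ncard hfin hPS (hQS hq0) (hQP hq0)
            omega
          rcases ih P (hfin.subset hPS) hPcard ⟨t1,t2,t3,h1,h2,h3,ht12,ht13,ht23⟩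
            ⟨x,y,z,h4,h5,h6,hxy,hyz,hxz,hnexz⟩ with h | h | h
          · exact Or.inl (h.mono hPS)
          · exact Or.inr (Or.inl (h.mono hPS))
          · exact Or.inr (Or.inr (h.mono hPS))
        rcases htriside with ⟨h1, h2, h3⟩ | ⟨h1, h2, h3⟩ <;>
          rcases hp3side with ⟨h4, h5, h6⟩ | ⟨h4, h5, h6⟩
        · exact recurse A (S \ A) hAS hBne Set.diff_subset (fun q hq => hq.2)
            h1 h2 h3 h4 h5 h6
        · -- triangle in A, P3 in S \ A
          refine Or.inr (Or.inr ⟨x, y, z, t1, t2, t3, h4.1, h5.1, h6.1, hAS h1, hAS h2,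
            hAS h3, hxy, hyz, hxz, hnexz, ht12, ht13, ht23, ?_⟩)
          intro p hp q hq
          simp only [Set.mem_insert_iff, Set.mem_singleton_iff] at hp hq
          have hpB : p ∈ S \ A := by rcases hp with rfl | rfl | rfl <;> assumption
          have hqA : q ∈ A := by rcases hq with rfl | rfl | rfl <;> assumption
          have := hanti2 hqA hpB
          exact ⟨fun h => this.1 h.symm, fun h => this.2 h.symm⟩
        · -- triangle in S \ A, P3 in A
          refine Or.inr (Or.inr ⟨x, y, z, t1, t2, t3, hAS h4, hAS h5, hAS h6, h1.1, h2.1,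
            h3.1, hxy, hyz, hxz, hnexz, ht12, ht13, ht23, ?_⟩)
          intro p hp q hq
          simp only [Set.mem_insert_iff, Set.mem_singleton_iff] at hp hq
          have hpA : p ∈ A := by rcases hp with rfl | rfl | rfl <;> assumption
          have hqB : q ∈ S \ A := by rcases hq with rfl | rfl | rfl <;> assumption
          exact hanti2 hpA hqB
        · exact recurse (S \ A) A Set.diff_subset hAne hAS (fun q hq hq' => hq'.2 hq)
            h1 h2 h3 h4 h5 h6

end C1C2

section C1sec

/-- C1 : main structural lemma for the K2 ⊕ D case. -/
lemma lemC1 (hP4 : NoP4 G) :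
    ∀ n (S : Set α), S.Finite → S.ncard ≤ n → MPs G S → ¬ TCs G S → ¬ CLS G S →
      ConfOut1 G S ∨ ConfOut2 G S ∨ ConfOut3 G S ∨ ConfOut4 G S ∨ ConfOut5 G S := by
  classical
  intro n
  induction n with
  | zero =>
      intro S hfin hcard _ hTC _
      exfalso
      have : S = ∅ := by rw [← Set.ncard_eq_zero hfin]; omega
      subst this
      exact hTC ⟨∅, Set.empty_subset _, fun a ha => absurd ha (Set.notMem_empty _),
        fun a ha => absurd ha.1 (Set.notMem_empty _)⟩
  | succ n ih =>
      intro S hfin hcard hMP hTC hCL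
      have hK3 : ConfK3 G S := not_tfs_iff_confK3.1 (fun h => hTC h.tcs)
      obtain ⟨t1, t2, t3, ht1, ht2, ht3, ht12, ht13, ht23⟩ := hK3
      obtain ⟨x, y, z, hx, hy, hz, hxy, hyz, hxz, hnexz⟩ := not_cls_iff_confP3.1 hCL
      by_cases hconn : ConnS G S
      · obtain ⟨Z, hZS, hZne, hYne, hcross⟩ :=
          seinsche hP4 S.ncard S hfin le_rfl hconn ⟨t1, ht1, t2, ht2, ht12.ne⟩
        have hUnion : Z ∪ (S \ Z) = S := Set.union_diff_cancel hZS
        have hMP' : MPs G (Z ∪ (S \ Z)) := by rw [hUnion]; exact hMP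
        have killSP : ∀ (P Q : Set α), (∀ w ∈ S, w ∈ P ∨ w ∈ Q) → P ⊆ S → Q ⊆ S →
            (∀ ⦃p⦄, p ∈ P → ∀ ⦃q⦄, q ∈ Q → G.Adj p q) → SPs G P → ClqS G Q → False := by
          rintro P Q hcover hPS hQS hcr ⟨Q1, hQ1P, hQ1clq, hQ1ind⟩ hQclq
          refine hTC ⟨Q1 ∪ Q, ?_, clq_union_join hQ1clq hQclq
            (fun a ha b hb => hcr (hQ1P ha) hb), ?_⟩
          · rintro w (hw | hw)
            · exact hPS (hQ1P hw)
            · exact hQS hw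
          · refine (hQ1ind.tfs).mono ?_
            rintro w ⟨hwS, hw⟩
            simp only [Set.mem_union, not_or] at hw
            rcases hcover w hwS with hwP | hwQ
            · exact ⟨hwP, hw.1⟩
            · exact absurd hwQ hw.2
        have main : ∀ (P Q : Set α), (∀ w ∈ S, w ∈ P ∨ w ∈ Q) → P ⊆ S → Q ⊆ S →
            P.Nonempty → Q.Nonempty →
            (∀ ⦃p⦄, p ∈ P → ∀ ⦃q⦄, q ∈ Q → G.Adj p q) → IndS G P → CLS G Q →
            ConfOut1 G S ∨ ConfOut2 G S ∨ ConfOut3 G S ∨ ConfOut4 G S ∨ ConfOut5 G S := by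
          intro P Q hcover hPS hQS hPne hQne hcr hIndP hClsQ
          have hQclq' : ¬ ClqS G Q := by
            intro hq
            refine hTC ⟨Q, hQS, hq, ?_⟩
            refine (hIndP.tfs).mono ?_
            rintro w ⟨hwS, hwQ⟩
            exact (hcover w hwS).resolve_right hwQ
          by_cases hP2 : ∃ a ∈ P, ∃ b ∈ P, a ≠ b
          · obtain ⟨x0, hx0, x0', hx0', hnex0⟩ := hP2
            have hSPQ : ¬ SPs G Q := by
              rintro ⟨Q2, hQ2Q, hQ2clq, hQ2ind⟩
              refine hTC ⟨Q2, fun w hw => hQS (hQ2Q hw), hQ2clq, ?_⟩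
              refine (tfs_union_ind hIndP hQ2ind).mono ?_
              rintro w ⟨hwS, hwQ2⟩
              rcases hcover w hwS with hwP | hwQ
              · exact Or.inl hwP
              · exact Or.inr ⟨hwQ, hwQ2⟩
            have h22 : Conf2K2 G Q := by
              by_contra h22
              exact hSPQ (cluster_not_sps hClsQ h22)
            obtain ⟨q1, q2, r1, r2, hq1, hq2, hr1, hr2, hq, hr, n1, n2, n3, n4,
              m1, m2, m3, m4⟩ := h22
            refine Or.inr (Or.inr (Or.inr (Or.inr ⟨x0, x0', q1, q2, r1, r2, hPS hx0,
              hPS hx0', hQS hq1, hQS hq2, hQS hr1, hQS hr2, hIndP hx0 hx0', hnex0,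
              hq, hr, ?_, ?_⟩)))
            · intro p hp q hq'
              simp only [Set.mem_insert_iff, Set.mem_singleton_iff] at hp hq'
              rcases hp with rfl | rfl <;> rcases hq' with rfl | rfl
              · exact ⟨n1, m1⟩
              · exact ⟨n2, m2⟩
              · exact ⟨n3, m3⟩
              · exact ⟨n4, m4⟩
            · intro q hq'
              simp only [Set.mem_insert_iff, Set.mem_singleton_iff] at hq'
              rcases hq' with rfl | rfl | rfl | rfl
              · exact ⟨hcr hx0 hq1, hcr hx0' hq1⟩
              · exact ⟨hcr hx0 hq2, hcr hx0' hq2⟩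
              · exact ⟨hcr hx0 hr1, hcr hx0' hr1⟩
              · exact ⟨hcr hx0 hr2, hcr hx0' hr2⟩
          · push_neg at hP2
            obtain ⟨a, haP⟩ := hPne
            have hPclq : ClqS G P := fun a' ha' b' hb' hne => absurd (hP2 a' ha' b' hb') hne
            have hTCQ : ¬ TCs G Q := by
              rintro ⟨Q2, hQ2Q, hQ2clq, hQ2tf⟩
              refine hTC ⟨Q2 ∪ P, ?_, clq_union_join hQ2clq hPclq
                (fun a' ha' b' hb' => (hcr hb' (hQ2Q ha')).symm), ?_⟩
              · rintro w (hw | hw)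
                · exact hQS (hQ2Q hw)
                · exact hPS hw
              · refine hQ2tf.mono ?_
                rintro w ⟨hwS, hw⟩
                simp only [Set.mem_union, not_or] at hw
                rcases hcover w hwS with hwP | hwQ
                · exact absurd hwP hw.2
                · exact ⟨hwQ, hw.1⟩
            have h23 : Conf2K3 G Q := by
              by_contra h23
              exact hTCQ (cluster_not_tcs hClsQ h23)
            obtain ⟨a1, a2, a3, b1, b2, b3, ha1, ha2, ha3, hb1, hb2, hb3,
              j1, j2, j3, j4, j5, j6, hanti'⟩ := h23
            refine Or.inr (Or.inr (Or.inr (Or.inl ⟨a, a1, a2, a3, b1, b2, b3, hPS haP,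
              hQS ha1, hQS ha2, hQS ha3, hQS hb1, hQS hb2, hQS hb3,
              j1, j2, j3, j4, j5, j6, hanti', ?_⟩)))
            intro q hq'
            simp only [Set.mem_insert_iff, Set.mem_singleton_iff] at hq'
            rcases hq' with rfl | rfl | rfl | rfl | rfl | rfl
            · exact hcr haP ha1
            · exact hcr haP ha2
            · exact hcr haP ha3
            · exact hcr haP hb1
            · exact hcr haP hb2
            · exact hcr haP hb3
        have hcover1 : ∀ w ∈ S, w ∈ Z ∨ w ∈ S \ Z := by
          intro w hw
          by_cases hwZ : w ∈ Z
          · exact Or.inl hwZ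
          · exact Or.inr ⟨hw, hwZ⟩
        have hcover2 : ∀ w ∈ S, w ∈ S \ Z ∨ w ∈ Z := fun w hw => (hcover1 w hw).symm
        rcases mp_join hZne hYne (fun p hp q hq => hcross p hp q hq) hMP' with
          ⟨h1, h2⟩ | ⟨h1, h2⟩ | ⟨h1, h2⟩ | ⟨h1, h2⟩
        · exact main Z (S \ Z) hcover1 hZS Set.diff_subset hZne hYne
            (fun p hp q hq => hcross p hp q hq) h1 h2
        · exact main (S \ Z) Z hcover2 Set.diff_subset hZS hYne hZne
            (fun p hp q hq => (hcross q hq p hp).symm) h1 h2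
        · exact (killSP Z (S \ Z) hcover1 hZS Set.diff_subset
            (fun p hp q hq => hcross p hp q hq) h1 h2).elim
        · exact (killSP (S \ Z) Z hcover2 Set.diff_subset hZS
            (fun p hp q hq => (hcross q hq p hp).symm) h1 h2).elim
      · obtain ⟨A, hAS, hAne, hBne, hanti⟩ := not_conn_split ⟨t1, ht1⟩ hconn
        have hanti2 : ∀ ⦃p⦄, p ∈ A → ∀ ⦃q⦄, q ∈ S \ A → ¬ G.Adj p q ∧ p ≠ q := by
          intro p hp q hq
          exact ⟨hanti p hp q hq, by rintro rfl; exact hq.2 hp⟩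
        have main2 : ∀ (P Q : Set α), (∀ w ∈ S, w ∈ P ∨ w ∈ Q) → P ⊆ S → Q ⊆ S →
            Q.Nonempty → (∀ ⦃p⦄, p ∈ P → ∀ ⦃q⦄, q ∈ Q → ¬ G.Adj p q ∧ p ≠ q) →
            t1 ∈ P → t2 ∈ P → t3 ∈ P →
            ConfOut1 G S ∨ ConfOut2 G S ∨ ConfOut3 G S ∨ ConfOut4 G S ∨ ConfOut5 G S := by
          intro P Q hcover hPS hQS hQne hanti' hta htb htc
          have hQP : ∀ ⦃q⦄, q ∈ Q → q ∉ P := by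
            intro q hq hqP
            exact (hanti' hqP hq).2 rfl
          have combine : ∀ (P' Q' : Set α), P' ⊆ S → Q' ⊆ S →
              (∀ ⦃p⦄, p ∈ P' → ∀ ⦃q⦄, q ∈ Q' → ¬ G.Adj p q ∧ p ≠ q) →
              (∃ s1 s2 s3, s1 ∈ Q' ∧ s2 ∈ Q' ∧ s3 ∈ Q' ∧ G.Adj s1 s2 ∧ G.Adj s1 s3 ∧
                G.Adj s2 s3) →
              (ConfPaw G P' ∨ ConfP3K1 G P' ∨ ConfP3K3 G P') →
              ConfOut1 G S ∨ ConfOut2 G S ∨ ConfOut3 G S ∨ ConfOut4 G S ∨ ConfOut5 G S := by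
            rintro P' Q' hP'S hQ'S hanti'' ⟨s1, s2, s3, hs1, hs2, hs3, hs12, hs13, hs23⟩
              (hpaw | hp3k1 | hp3k3)
            · obtain ⟨w, k, e1, e2, hw, hk, he1, he2, c1, c2, c3, c4, c5, c6, c7, c8⟩ := hpaw
              refine Or.inr (Or.inr (Or.inl ⟨s1, s2, s3, w, k, e1, e2, hQ'S hs1, hQ'S hs2,
                hQ'S hs3, hP'S hw, hP'S hk, hP'S he1, hP'S he2,
                hs12, hs13, hs23, c1, c2, c3, c4, c5, c6, c7, c8, ?_⟩))
              intro p hp q hq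
              simp only [Set.mem_insert_iff, Set.mem_singleton_iff] at hp hq
              have hpQ : p ∈ Q' := by rcases hp with rfl | rfl | rfl <;> assumption
              have hqP : q ∈ P' := by rcases hq with rfl | rfl | rfl | rfl <;> assumption
              have := hanti'' hqP hpQ
              exact ⟨fun h => this.1 h.symm, fun h => this.2 h.symm⟩
            · obtain ⟨x', y', z', w, hx', hy', hz', hw, c1, c2, c3, c4, c5, c6, c7⟩ := hp3k1
              refine Or.inr (Or.inl ⟨s1, s2, s3, x', y', z', w, hQ'S hs1, hQ'S hs2, hQ'S hs3,
                hP'S hx', hP'S hy', hP'S hz', hP'S hw,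
                hs12, hs13, hs23, c1, c2, c3, c4, c5, c6, c7, ?_⟩)
              intro p hp q hq
              simp only [Set.mem_insert_iff, Set.mem_singleton_iff] at hp hq
              have hpQ : p ∈ Q' := by rcases hp with rfl | rfl | rfl <;> assumption
              have hqP : q ∈ P' := by rcases hq with rfl | rfl | rfl | rfl <;> assumption
              have := hanti'' hqP hpQ
              exact ⟨fun h => this.1 h.symm, fun h => this.2 h.symm⟩
            · obtain ⟨x', y', z', u1, u2, u3, hx', hy', hz', hu1, hu2, hu3,
                c1, c2, c3, c4, c5, c6, c7, hantiP⟩ := hp3k3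
              refine Or.inl ⟨x', y', z', u1, u2, u3, s1, s2, s3, hP'S hx', hP'S hy',
                hP'S hz', hP'S hu1, hP'S hu2, hP'S hu3, hQ'S hs1, hQ'S hs2, hQ'S hs3,
                c1, c2, c3, c4, c5, c6, c7, hs12, hs13, hs23, ?_, ?_⟩
              · intro p hp q hq
                have hp0 : p ∈ ({x', y', z'} : Set α) := hp
                simp only [Set.mem_insert_iff, Set.mem_singleton_iff] at hp hq
                have hpP : p ∈ P' := by rcases hp with rfl | rfl | rfl <;> assumption
                rcases hq with rfl | rfl | rfl | rfl | rfl | rfl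
                · exact hantiP p hp0 _ (by simp)
                · exact hantiP p hp0 _ (by simp)
                · exact hantiP p hp0 _ (by simp)
                · exact hanti'' hpP hs1
                · exact hanti'' hpP hs2
                · exact hanti'' hpP hs3
              · intro p hp q hq
                simp only [Set.mem_insert_iff, Set.mem_singleton_iff] at hp hq
                have hpP : p ∈ P' := by rcases hp with rfl | rfl | rfl <;> assumption
                have hqQ : q ∈ Q' := by rcases hq with rfl | rfl | rfl <;> assumption
                exact hanti'' hpP hqQ
          by_cases hQ3 : ∃ s1 ∈ Q, ∃ s2 ∈ Q, ∃ s3 ∈ Q,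
              G.Adj s1 s2 ∧ G.Adj s1 s3 ∧ G.Adj s2 s3
          · obtain ⟨s1, hs1, s2, hs2, s3, hs3, hs12, hs13, hs23⟩ := hQ3
            have hp3side : (x ∈ P ∧ y ∈ P ∧ z ∈ P) ∨ (x ∈ Q ∧ y ∈ Q ∧ z ∈ Q) := by
              rcases hcover y hy with hyP | hyQ
              · refine Or.inl ⟨?_, hyP, ?_⟩
                · rcases hcover x hx with h | h
                  · exact h
                  · exact absurd hxy.symm (hanti' hyP h).1
                · rcases hcover z hz with h | h
                  · exact h
                  · exact absurd hyz (hanti' hyP h).1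
              · refine Or.inr ⟨?_, hyQ, ?_⟩
                · rcases hcover x hx with h | h
                  · exact absurd hxy (hanti' h hyQ).1
                  · exact h
                · rcases hcover z hz with h | h
                  · exact absurd hyz.symm (hanti' h hyQ).1
                  · exact h
            rcases hp3side with ⟨h4, h5, h6⟩ | ⟨h4, h5, h6⟩
            · exact combine P Q hPS hQS hanti' ⟨s1, s2, s3, hs1, hs2, hs3, hs12, hs13, hs23⟩
                (lemC2 hP4 P.ncard P (hfin.subset hPS) le_rfl
                  ⟨t1, t2, t3, hta, htb, htc, ht12, ht13, ht23⟩
                  ⟨x, y, z, h4, h5, h6, hxy, hyz, hxz, hnexz⟩)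
            · exact combine Q P hQS hPS
                (fun p hp q hq => ⟨fun h => (hanti' hq hp).1 h.symm,
                  fun h => (hanti' hq hp).2 h.symm⟩)
                ⟨t1, t2, t3, hta, htb, htc, ht12, ht13, ht23⟩
                (lemC2 hP4 Q.ncard Q (hfin.subset hQS) le_rfl
                  ⟨s1, s2, s3, hs1, hs2, hs3, hs12, hs13, hs23⟩
                  ⟨x, y, z, h4, h5, h6, hxy, hyz, hxz, hnexz⟩)
          · have hQTF : TFS G Q := by
              intro a ha b hb c hc h1 h2 h3
              exact hQ3 ⟨a, ha, b, hb, c, hc, h1, h3, h2⟩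
            have hTCP : ¬ TCs G P := by
              rintro ⟨Q1, hQ1P, hQ1clq, hQ1tf⟩
              refine hTC ⟨Q1, fun w hw => hPS (hQ1P hw), hQ1clq, ?_⟩
              refine (tfs_union_anti hQ1tf hQTF
                (fun p hp q hq => (hanti' hp.1 hq).1)).mono ?_
              rintro w ⟨hwS, hwQ1⟩
              rcases hcover w hwS with hwP | hwQ
              · exact Or.inl ⟨hwP, hwQ1⟩
              · exact Or.inr hwQ
            by_cases hCLP : CLS G P
            · have h23 : Conf2K3 G P := by
                by_contra h23
                exact hTCP (cluster_not_tcs hCLP h23)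
              obtain ⟨a1, a2, a3, b1, b2, b3, ha1, ha2, ha3, hb1, hb2, hb3,
                j1, j2, j3, j4, j5, j6, hantiC⟩ := h23
              -- the P3 must lie inside Q
              have hp3Q : x ∈ Q ∧ y ∈ Q ∧ z ∈ Q := by
                rcases hcover y hy with hyP | hyQ
                · exfalso
                  have hxP : x ∈ P := by
                    rcases hcover x hx with h | h
                    · exact h
                    · exact absurd hxy.symm (hanti' hyP h).1
                  have hzP : z ∈ P := by
                    rcases hcover z hz with h | h
                    · exact h
                    · exact absurd hyz (hanti' hyP h).1
                  exact hxz (hCLP hxP hyP hzP hxy hyz hnexz)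
                · refine ⟨?_, hyQ, ?_⟩
                  · rcases hcover x hx with h | h
                    · exact absurd hxy (hanti' h hyQ).1
                    · exact h
                  · rcases hcover z hz with h | h
                    · exact absurd hyz.symm (hanti' h hyQ).1
                    · exact h
              obtain ⟨hxQ, hyQ, hzQ⟩ := hp3Q
              refine Or.inl ⟨x, y, z, a1, a2, a3, b1, b2, b3, hx, hy, hz, hPS ha1,
                hPS ha2, hPS ha3, hPS hb1, hPS hb2, hPS hb3,
                hxy, hyz, hxz, hnexz, j1, j2, j3, j4, j5, j6, ?_, hantiC⟩
              intro p hp q hq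
              simp only [Set.mem_insert_iff, Set.mem_singleton_iff] at hp hq
              have hpQ : p ∈ Q := by rcases hp with rfl | rfl | rfl <;> assumption
              have hqP : q ∈ P := by
                rcases hq with rfl | rfl | rfl | rfl | rfl | rfl <;> assumption
              have := hanti' hqP hpQ
              exact ⟨fun h => this.1 h.symm, fun h => this.2 h.symm⟩
            · obtain ⟨q0, hq0⟩ := hQne
              have hPcard : P.ncard ≤ n := by
                have := ssub_ncard hfin hPS (hQS hq0) (hQP hq0)
                omega
              rcases ih P (hfin.subset hPS) hPcard (hMP.mono hPS) hTCP hCLP with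
                h | h | h | h | h
              · exact Or.inl (h.mono hPS)
              · exact Or.inr (Or.inl (h.mono hPS))
              · exact Or.inr (Or.inr (Or.inl (h.mono hPS)))
              · exact Or.inr (Or.inr (Or.inr (Or.inl (h.mono hPS))))
              · exact Or.inr (Or.inr (Or.inr (Or.inr (h.mono hPS))))
        have htriside : (t1 ∈ A ∧ t2 ∈ A ∧ t3 ∈ A) ∨
            (t1 ∈ S \ A ∧ t2 ∈ S \ A ∧ t3 ∈ S \ A) := by
          by_cases h1 : t1 ∈ A
          · have h2 : t2 ∈ A := by
              by_contra h2
              exact (hanti2 h1 ⟨ht2, h2⟩).1 ht12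
            have h3 : t3 ∈ A := by
              by_contra h3
              exact (hanti2 h1 ⟨ht3, h3⟩).1 ht13
            exact Or.inl ⟨h1, h2, h3⟩
          · have h2 : t2 ∉ A := by
              intro h2
              exact (hanti2 h2 ⟨ht1, h1⟩).1 ht12.symm
            have h3 : t3 ∉ A := by
              intro h3
              exact (hanti2 h3 ⟨ht1, h1⟩).1 ht13.symm
            exact Or.inr ⟨⟨ht1, h1⟩, ⟨ht2, h2⟩, ⟨ht3, h3⟩⟩
        rcases htriside with ⟨h1, h2, h3⟩ | ⟨h1, h2, h3⟩
        · exact main2 A (S \ A)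
            (fun w hw => by
              by_cases hwA : w ∈ A
              · exact Or.inl hwA
              · exact Or.inr ⟨hw, hwA⟩)
            hAS Set.diff_subset hBne hanti2 h1 h2 h3
        · exact main2 (S \ A) A
            (fun w hw => by
              by_cases hwA : w ∈ A
              · exact Or.inr hwA
              · exact Or.inl ⟨hw, hwA⟩)
            Set.diff_subset hAS hAne
            (fun p hp q hq => ⟨fun h => (hanti2 hq hp).1 h.symm,
              fun h => (hanti2 hq hp).2 h.symm⟩)
            h1 h2 h3

end C1sec

section Bridges

lemma contains_H1_of {P Q : Set α} (v : α) (h : ConfC4 G P) {d d' : α} (hd : d ∈ Q)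
    (hd' : d' ∈ Q) (hnd : ¬ G.Adj d d') (hned : d ≠ d')
    (hcr : ∀ p ∈ P, ∀ q ∈ Q, G.Adj p q)
    (hvP : ∀ p ∈ P, G.Adj v p) (hvQ : ∀ q ∈ Q, G.Adj v q) : Contains G H1 := by
  obtain ⟨p, q, r, s, hp, hq, hr, hs, npq, nrs, apr, aps, aqr, aqs, epq, ers⟩ := h
  exact contains_H1 p q r s d d' v epq npq ers nrs hned hnd
    ((hvQ d hd).symm) ((hvQ d' hd').symm)
    (hcr r hr d hd) (hcr r hr d' hd') ((hvP r hr).symm)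
    (hcr s hs d hd) (hcr s hs d' hd') ((hvP s hs).symm)
    apr aps (hcr p hp d hd) (hcr p hp d' hd') ((hvP p hp).symm)
    aqr aqs (hcr q hq d hd) (hcr q hq d' hd') ((hvP q hq).symm)

lemma contains_H2_of (v p1 p2 p3 : α) {P : Set α} (h : Conf2K2 G P)
    (ha : G.Adj p1 p2) (hb : G.Adj p2 p3) (hc : ¬ G.Adj p1 p3) (hd : p1 ≠ p3)
    (hv1 : G.Adj v p1) (hv2 : G.Adj v p2) (hv3 : G.Adj v p3)
    (hvP : ∀ q ∈ P, G.Adj v q) (h1P : ∀ q ∈ P, G.Adj p1 q) (h2P : ∀ q ∈ P, G.Adj p2 q)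
    (h3P : ∀ q ∈ P, G.Adj p3 q) : Contains G H2 := by
  obtain ⟨q1, q2, r1, r2, m1, m2, m3, m4, aq, ar, n1, n2, n3, n4, e1, e2, e3, e4⟩ := h
  exact contains_H2 p1 p2 p3 v q1 q2 r1 r2 ha hb hc hd aq ar n1 e1 n2 e2 n3 e3 n4 e4
    (hvP q1 m1) (hvP q2 m2) (hvP r1 m3) (hvP r2 m4)
    hv1.symm (h1P q1 m1) (h1P q2 m2) (h1P r1 m3) (h1P r2 m4)
    hv2.symm (h2P q1 m1) (h2P q2 m2) (h2P r1 m3) (h2P r2 m4)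
    hv3.symm (h3P q1 m1) (h3P q2 m2) (h3P r1 m3) (h3P r2 m4)

lemma contains_H4_of (p1 p2 p3 : α) {P : Set α} (h : ConfK2P3 G P)
    (ha : G.Adj p1 p2) (hb : G.Adj p2 p3) (hc : ¬ G.Adj p1 p3) (hd : p1 ≠ p3)
    (h1P : ∀ q ∈ P, G.Adj p1 q) (h2P : ∀ q ∈ P, G.Adj p2 q)
    (h3P : ∀ q ∈ P, G.Adj p3 q) : Contains G H4 := by
  obtain ⟨k1, k2, x, y, z, m1, m2, m3, m4, m5, hk, axy, ayz, nxz, nexz, hA⟩ := h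
  exact contains_H4 p1 p2 p3 k1 k2 x y z ha hb hc hd hk axy ayz nxz nexz
    (hA k1 (by simp) x (by simp)).1 (hA k1 (by simp) x (by simp)).2
    (hA k1 (by simp) y (by simp)).1 (hA k1 (by simp) y (by simp)).2
    (hA k1 (by simp) z (by simp)).1 (hA k1 (by simp) z (by simp)).2
    (hA k2 (by simp) x (by simp)).1 (hA k2 (by simp) x (by simp)).2
    (hA k2 (by simp) y (by simp)).1 (hA k2 (by simp) y (by simp)).2
    (hA k2 (by simp) z (by simp)).1 (hA k2 (by simp) z (by simp)).2
    (h1P k1 m1) (h1P k2 m2) (h1P x m3) (h1P y m4) (h1P z m5)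
    (h2P k1 m1) (h2P k2 m2) (h2P x m3) (h2P y m4) (h2P z m5)
    (h3P k1 m1) (h3P k2 m2) (h3P x m3) (h3P y m4) (h3P z m5)

lemma contains_H5_of (v : α) {P Q : Set α} (hk : ConfK2K1 G P) (h22 : Conf2K2 G Q)
    (hcr : ∀ p ∈ P, ∀ q ∈ Q, G.Adj p q)
    (hvP : ∀ p ∈ P, G.Adj v p) (hvQ : ∀ q ∈ Q, G.Adj v q) : Contains G H5 := by
  obtain ⟨s1, s2, s3, m1, m2, m3, a12, n13, n23, e31, e32⟩ := hk
  obtain ⟨q1, q2, r1, r2, mm1, mm2, mm3, mm4, aq, ar, n1, n2, n3, n4, e1, e2, e3, e4⟩ := h22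
  exact contains_H5 s1 s2 s3 v q1 q2 r1 r2 a12 n13 e31.symm n23 e32.symm aq ar
    n1 e1 n2 e2 n3 e3 n4 e4
    (hvQ q1 mm1) (hvQ q2 mm2) (hvQ r1 mm3) (hvQ r2 mm4)
    ((hvP s1 m1).symm) (hcr s1 m1 q1 mm1) (hcr s1 m1 q2 mm2) (hcr s1 m1 r1 mm3)
    (hcr s1 m1 r2 mm4)
    ((hvP s2 m2).symm) (hcr s2 m2 q1 mm1) (hcr s2 m2 q2 mm2) (hcr s2 m2 r1 mm3)
    (hcr s2 m2 r2 mm4)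
    ((hvP s3 m3).symm) (hcr s3 m3 q1 mm1) (hcr s3 m3 q2 mm2) (hcr s3 m3 r1 mm3)
    (hcr s3 m3 r2 mm4)

lemma contains_H13_of (v u : α) (hvu : G.Adj v u) {P : Set α} (h : ConfOut1 G P)
    (hvP : ∀ p ∈ P, G.Adj v p) (huP : ∀ p ∈ P, G.Adj u p) : Contains G H13 := by
  obtain ⟨x, y, z, a1, a2, a3, b1, b2, b3, m1, m2, m3, m4, m5, m6, m7, m8, m9,
    c1, c2, c3, c4, j1, j2, j3, j4, j5, j6, hA1, hA2⟩ := h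
  exact contains_H13 v u x y z a1 a2 a3 b1 b2 b3 hvu c1 c2 c3 c4 j1 j2 j3 j4 j5 j6
    (hA2 a1 (by simp) b1 (by simp)).1 (hA2 a1 (by simp) b1 (by simp)).2
    (hA2 a1 (by simp) b2 (by simp)).1 (hA2 a1 (by simp) b2 (by simp)).2
    (hA2 a1 (by simp) b3 (by simp)).1 (hA2 a1 (by simp) b3 (by simp)).2
    (hA2 a2 (by simp) b1 (by simp)).1 (hA2 a2 (by simp) b1 (by simp)).2
    (hA2 a2 (by simp) b2 (by simp)).1 (hA2 a2 (by simp) b2 (by simp)).2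
    (hA2 a2 (by simp) b3 (by simp)).1 (hA2 a2 (by simp) b3 (by simp)).2
    (hA2 a3 (by simp) b1 (by simp)).1 (hA2 a3 (by simp) b1 (by simp)).2
    (hA2 a3 (by simp) b2 (by simp)).1 (hA2 a3 (by simp) b2 (by simp)).2
    (hA2 a3 (by simp) b3 (by simp)).1 (hA2 a3 (by simp) b3 (by simp)).2
    (hA1 x (by simp) a1 (by simp)).1 (hA1 x (by simp) a1 (by simp)).2
    (hA1 x (by simp) a2 (by simp)).1 (hA1 x (by simp) a2 (by simp)).2
    (hA1 x (by simp) a3 (by simp)).1 (hA1 x (by simp) a3 (by simp)).2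
    (hA1 x (by simp) b1 (by simp)).1 (hA1 x (by simp) b1 (by simp)).2
    (hA1 x (by simp) b2 (by simp)).1 (hA1 x (by simp) b2 (by simp)).2
    (hA1 x (by simp) b3 (by simp)).1 (hA1 x (by simp) b3 (by simp)).2
    (hA1 y (by simp) a1 (by simp)).1 (hA1 y (by simp) a1 (by simp)).2
    (hA1 y (by simp) a2 (by simp)).1 (hA1 y (by simp) a2 (by simp)).2
    (hA1 y (by simp) a3 (by simp)).1 (hA1 y (by simp) a3 (by simp)).2
    (hA1 y (by simp) b1 (by simp)).1 (hA1 y (by simp) b1 (by simp)).2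
    (hA1 y (by simp) b2 (by simp)).1 (hA1 y (by simp) b2 (by simp)).2
    (hA1 y (by simp) b3 (by simp)).1 (hA1 y (by simp) b3 (by simp)).2
    (hA1 z (by simp) a1 (by simp)).1 (hA1 z (by simp) a1 (by simp)).2
    (hA1 z (by simp) a2 (by simp)).1 (hA1 z (by simp) a2 (by simp)).2
    (hA1 z (by simp) a3 (by simp)).1 (hA1 z (by simp) a3 (by simp)).2
    (hA1 z (by simp) b1 (by simp)).1 (hA1 z (by simp) b1 (by simp)).2
    (hA1 z (by simp) b2 (by simp)).1 (hA1 z (by simp) b2 (by simp)).2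
    (hA1 z (by simp) b3 (by simp)).1 (hA1 z (by simp) b3 (by simp)).2
    (hvP x m1) (hvP y m2) (hvP z m3) (hvP a1 m4) (hvP a2 m5) (hvP a3 m6)
    (hvP b1 m7) (hvP b2 m8) (hvP b3 m9)
    (huP x m1) (huP y m2) (huP z m3) (huP a1 m4) (huP a2 m5) (huP a3 m6)
    (huP b1 m7) (huP b2 m8) (huP b3 m9)

lemma contains_H14_of (v u : α) (hvu : G.Adj v u) {P : Set α} (h : ConfOut2 G P)
    (hvP : ∀ p ∈ P, G.Adj v p) (huP : ∀ p ∈ P, G.Adj u p) : Contains G H14 := by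
  obtain ⟨t1, t2, t3, x, y, z, w, m1, m2, m3, m4, m5, m6, m7,
    j1, j2, j3, c1, c2, c3, c4, d1, d2, d3, hA⟩ := h
  exact contains_H14 v u t1 t2 t3 x y z w hvu j1 j2 j3 c1 c2 c3 c4 d1.symm d2.symm d3.symm
    (hA t1 (by simp) x (by simp)).1 (hA t1 (by simp) x (by simp)).2
    (hA t1 (by simp) y (by simp)).1 (hA t1 (by simp) y (by simp)).2
    (hA t1 (by simp) z (by simp)).1 (hA t1 (by simp) z (by simp)).2
    (hA t1 (by simp) w (by simp)).1 (hA t1 (by simp) w (by simp)).2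
    (hA t2 (by simp) x (by simp)).1 (hA t2 (by simp) x (by simp)).2
    (hA t2 (by simp) y (by simp)).1 (hA t2 (by simp) y (by simp)).2
    (hA t2 (by simp) z (by simp)).1 (hA t2 (by simp) z (by simp)).2
    (hA t2 (by simp) w (by simp)).1 (hA t2 (by simp) w (by simp)).2
    (hA t3 (by simp) x (by simp)).1 (hA t3 (by simp) x (by simp)).2
    (hA t3 (by simp) y (by simp)).1 (hA t3 (by simp) y (by simp)).2
    (hA t3 (by simp) z (by simp)).1 (hA t3 (by simp) z (by simp)).2
    (hA t3 (by simp) w (by simp)).1 (hA t3 (by simp) w (by simp)).2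
    (hvP t1 m1) (hvP t2 m2) (hvP t3 m3) (hvP x m4) (hvP y m5) (hvP z m6) (hvP w m7)
    (huP t1 m1) (huP t2 m2) (huP t3 m3) (huP x m4) (huP y m5) (huP z m6) (huP w m7)

lemma contains_H15_of (v u : α) (hvu : G.Adj v u) {P : Set α} (h : ConfOut3 G P)
    (hvP : ∀ p ∈ P, G.Adj v p) (huP : ∀ p ∈ P, G.Adj u p) : Contains G H15 := by
  obtain ⟨t1, t2, t3, w, k, e1, e2, m1, m2, m3, m4, m5, m6, m7,
    j1, j2, j3, c1, c2, c3, c4, c5, c6, c7, c8, hA⟩ := h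
  exact contains_H15 v u t1 t2 t3 w k e1 e2 hvu j1 j2 j3 c4 c5 c7 c6 c8 c1 c2 c3
    (hA t1 (by simp) w (by simp)).1 (hA t1 (by simp) w (by simp)).2
    (hA t1 (by simp) k (by simp)).1 (hA t1 (by simp) k (by simp)).2
    (hA t1 (by simp) e1 (by simp)).1 (hA t1 (by simp) e1 (by simp)).2
    (hA t1 (by simp) e2 (by simp)).1 (hA t1 (by simp) e2 (by simp)).2
    (hA t2 (by simp) w (by simp)).1 (hA t2 (by simp) w (by simp)).2
    (hA t2 (by simp) k (by simp)).1 (hA t2 (by simp) k (by simp)).2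
    (hA t2 (by simp) e1 (by simp)).1 (hA t2 (by simp) e1 (by simp)).2
    (hA t2 (by simp) e2 (by simp)).1 (hA t2 (by simp) e2 (by simp)).2
    (hA t3 (by simp) w (by simp)).1 (hA t3 (by simp) w (by simp)).2
    (hA t3 (by simp) k (by simp)).1 (hA t3 (by simp) k (by simp)).2
    (hA t3 (by simp) e1 (by simp)).1 (hA t3 (by simp) e1 (by simp)).2
    (hA t3 (by simp) e2 (by simp)).1 (hA t3 (by simp) e2 (by simp)).2
    (hvP t1 m1) (hvP t2 m2) (hvP t3 m3) (hvP w m4) (hvP k m5) (hvP e1 m6) (hvP e2 m7)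
    (huP t1 m1) (huP t2 m2) (huP t3 m3) (huP w m4) (huP k m5) (huP e1 m6) (huP e2 m7)

lemma contains_H17_of (x1 x2 x3 : α) {P : Set α} (h : Conf2K3 G P)
    (e1 : G.Adj x1 x2) (e2 : G.Adj x1 x3) (e3 : G.Adj x2 x3)
    (hx1P : ∀ p ∈ P, G.Adj x1 p) (hx2P : ∀ p ∈ P, G.Adj x2 p)
    (hx3P : ∀ p ∈ P, G.Adj x3 p) : Contains G H17 := by
  obtain ⟨a1, a2, a3, b1, b2, b3, m1, m2, m3, m4, m5, m6, j1, j2, j3, j4, j5, j6, hA⟩ := h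
  exact contains_H17 x1 x2 x3 a1 a2 a3 b1 b2 b3 e1 e2 e3 j1 j2 j3 j4 j5 j6
    (hA a1 (by simp) b1 (by simp)).1 (hA a1 (by simp) b1 (by simp)).2
    (hA a1 (by simp) b2 (by simp)).1 (hA a1 (by simp) b2 (by simp)).2
    (hA a1 (by simp) b3 (by simp)).1 (hA a1 (by simp) b3 (by simp)).2
    (hA a2 (by simp) b1 (by simp)).1 (hA a2 (by simp) b1 (by simp)).2
    (hA a2 (by simp) b2 (by simp)).1 (hA a2 (by simp) b2 (by simp)).2
    (hA a2 (by simp) b3 (by simp)).1 (hA a2 (by simp) b3 (by simp)).2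
    (hA a3 (by simp) b1 (by simp)).1 (hA a3 (by simp) b1 (by simp)).2
    (hA a3 (by simp) b2 (by simp)).1 (hA a3 (by simp) b2 (by simp)).2
    (hA a3 (by simp) b3 (by simp)).1 (hA a3 (by simp) b3 (by simp)).2
    (hx1P a1 m1) (hx1P a2 m2) (hx1P a3 m3) (hx1P b1 m4) (hx1P b2 m5) (hx1P b3 m6)
    (hx2P a1 m1) (hx2P a2 m2) (hx2P a3 m3) (hx2P b1 m4) (hx2P b2 m5) (hx2P b3 m6)
    (hx3P a1 m1) (hx3P a2 m2) (hx3P a3 m3) (hx3P b1 m4) (hx3P b2 m5) (hx3P b3 m6)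

end Bridges

section Interface

lemma noP4_of_cograph (hcog : IsCograph G) : NoP4 G := by
  intro a b c d hab hbc hcd hac hbd had
  have hac' : a ≠ c := by rintro rfl; exact had hcd
  have hbd' : b ≠ d := by rintro rfl; exact had hab
  have had' : a ≠ d := by rintro rfl; exact hac hcd.symm
  exact hcog (EmbIn.contains (embIn_P4 (S := (Set.univ : Set α)) trivial trivial trivial
    trivial hab hbc hcd hac hbd had hac' hbd' had'))

lemma tfs_cliqueFree {S : Set α} (h : TFS G S) : (G.induce S).CliqueFree 3 := by
  classical
  intro s hs
  obtain ⟨a, b, c, hab, hac, hbc, -⟩ := is3Clique_iff.1 hs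
  exact h a.prop b.prop c.prop hab hbc.symm.symm (by exact hac)
    |>.elim

lemma cls_not_contains_p3 {S : Set α} (h : CLS G S) :
    ¬ Contains (G.induce S) (pathGraph 3) := by
  rintro ⟨f⟩
  have h01 : (pathGraph 3).Adj 0 1 := by simp [pathGraph_adj]
  have h12 : (pathGraph 3).Adj 1 2 := by simp [pathGraph_adj]
  have h02 : ¬ (pathGraph 3).Adj 0 2 := by simp [pathGraph_adj]
  have hxy : G.Adj (f 0).val (f 1).val := f.map_rel_iff.2 h01
  have hyz : G.Adj (f 1).val (f 2).val := f.map_rel_iff.2 h12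
  have hne : (f 0).val ≠ (f 2).val := by
    intro he
    exact absurd (f.injective (Subtype.ext he)) (by decide)
  exact h02 (f.map_rel_iff.1 (h (f 0).prop (f 1).prop (f 2).prop hxy hyz hne))

lemma partitionable_of {T : Set α} (hT : TFS G T) (hC : CLS G Tᶜ) : Partitionable G := by
  refine ⟨T, tfs_cliqueFree hT, cls_not_contains_p3 hC⟩

lemma partitionable_extract {W : Set α} (h : Partitionable (G.induce W)) :
    ∃ T ⊆ W, TFS G T ∧ CLS G (W \ T) := by
  classical
  obtain ⟨A, h3, hA⟩ := h
  refine ⟨Subtype.val '' A, ?_, ?_, ?_⟩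
  · rintro x ⟨⟨x, hxW⟩, _, rfl⟩
    exact hxW
  · rintro a ⟨⟨a, haW⟩, haA, rfl⟩ b ⟨⟨b, hbW⟩, hbA, rfl⟩ c ⟨⟨c, hcW⟩, hcA, rfl⟩ hab hbc hac
    refine h3 {(⟨⟨a, haW⟩, haA⟩ : ↥A), ⟨⟨b, hbW⟩, hbA⟩, ⟨⟨c, hcW⟩, hcA⟩}
      (is3Clique_triple_iff.2 ⟨?_, ?_, ?_⟩)
    · exact hab
    · exact hac
    · exact hbc
  · intro a ha b hb c hc hab hbc hne
    by_contra hac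
    have haA : (⟨a, ha.1⟩ : ↥W) ∉ A := fun hmem => ha.2 ⟨⟨a, ha.1⟩, hmem, rfl⟩
    have hbA : (⟨b, hb.1⟩ : ↥W) ∉ A := fun hmem => hb.2 ⟨⟨b, hb.1⟩, hmem, rfl⟩
    have hcA : (⟨c, hc.1⟩ : ↥W) ∉ A := fun hmem => hc.2 ⟨⟨c, hc.1⟩, hmem, rfl⟩
    refine hA (EmbIn.contains (embIn_P3
      (X := (G.induce W).induce (Aᶜ : Set ↥W))
      (x := ⟨⟨a, ha.1⟩, haA⟩) (y := ⟨⟨b, hb.1⟩, hbA⟩) (z := ⟨⟨c, hc.1⟩, hcA⟩)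
      (S := Set.univ) trivial trivial trivial ?_ ?_ ?_ ?_))
    · exact hab
    · exact hbc
    · exact hac
    · intro he
      apply hne
      have := congrArg (fun (t : ↥(Aᶜ : Set ↥W)) => (t.val : α)) he
      exact this

end Interface

end PartAux
open PartAux

theorem stmt_18 {α : Type*} [Fintype α] (G : SimpleGraph α) (hcog : IsCograph G)
    (hnp : ¬ Partitionable G)
    (hmin : ∀ A : Set α, A ≠ Set.univ → Partitionable (G.induce A))
    (v : α) (hv : ∀ w, w ≠ v → G.Adj v w)
    (hconn : (G.induce ({v}ᶜ : Set α)).Connected) :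
    Contains G H1 ∨ Contains G H2 ∨ Contains G H4 ∨ Contains G H5 ∨
      Contains G H13 ∨ Contains G H14 ∨ Contains G H15 ∨ Contains G H17 := by
  classical
  set W : Set α := ({v}ᶜ : Set α) with hWdef
  have hvW : v ∉ W := by simp [hWdef]
  have hWiff : ∀ w : α, w ∈ W ↔ w ≠ v := fun w => by simp [hWdef]
  have hadjv : ∀ w ∈ W, G.Adj v w := fun w hw => hv w ((hWiff w).1 hw)
  have hP4 : NoP4 G := noP4_of_cograph hcog
  have hnpS : ∀ T : Set α, TFS G T → CLS G Tᶜ → False :=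
    fun T hT hC => hnp (partitionable_of hT hC)
  -- the two "kill" principles
  have K1' : ∀ T C : Set α, T ⊆ W → (∀ w ∈ W, w ∈ T ∨ w ∈ C) → TFS G T →
      ClqS G C → False := by
    intro T C hTW hcov hT hC
    refine hnpS T hT (ClqS.cls ?_)
    intro x hx y hy hne
    by_cases hxv : x = v
    · subst hxv
      exact hv y (fun h => hne h.symm)
    · by_cases hyv : y = v
      · subst hyv
        exact (hv x hxv).symm
      · have hxW : x ∈ W := (hWiff x).2 hxv
        have hyW : y ∈ W := (hWiff y).2 hyv
        exact hC ((hcov x hxW).resolve_left hx) ((hcov y hyW).resolve_left hy) hne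
  have K2' : ∀ I C : Set α, I ⊆ W → (∀ w ∈ W, w ∈ I ∨ w ∈ C) → IndS G I →
      CLS G C → False := by
    intro I C hIW hcov hI hC
    have hIv : TFS G (I ∪ {v}) := tfs_union_ind hI (fun x hx y hy hadj => by
      rcases hx
      rcases hy
      exact G.loopless.irrefl _ hadj)
    refine hnpS (I ∪ {v}) hIv (hC.mono ?_)
    intro z hz
    simp only [Set.mem_compl_iff, Set.mem_union, Set.mem_singleton_iff, not_or] at hz
    exact (hcov z ((hWiff z).2 hz.2)).resolve_left hz.1
  -- universal vertices of W and the rest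
  set U : Set α := {u | u ∈ W ∧ ∀ w ∈ W, w ≠ u → G.Adj u w} with hUdef
  set D : Set α := W \ U with hDdef
  have hUW : U ⊆ W := fun u hu => hu.1
  have hDW : D ⊆ W := fun d hd => hd.1
  have hUadj : ∀ u ∈ U, ∀ w ∈ W, w ≠ u → G.Adj u w := fun u hu => hu.2
  have hUclq : ClqS G U := fun a ha b hb hne => hUadj a ha b (hUW hb) hne.symm
  have hneDU : ∀ d ∈ D, ∀ u' ∈ U, d ≠ u' := fun d hd u' hu' h => by
    rw [h] at hd
    exact hd.2 hu'
  have hDnn : ∀ x ∈ D, ∃ y ∈ D, y ≠ x ∧ ¬ G.Adj x y := by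
    intro x hx
    have hnu : ¬ ∀ w ∈ W, w ≠ x → G.Adj x w := fun h => hx.2 ⟨hx.1, h⟩
    push_neg at hnu
    obtain ⟨w, hwW, hwx, hnadj⟩ := hnu
    refine ⟨w, ⟨hwW, fun hwU => ?_⟩, hwx, hnadj⟩
    exact hnadj (hUadj w hwU x (hDW hx) (fun h => hwx h.symm)).symm
  -- the triangle-free / cluster partition of W
  have hWproper : W ≠ Set.univ := fun h => hvW (h.symm ▸ Set.mem_univ v)
  obtain ⟨T, hTW, hTF, hCLS⟩ := partitionable_extract (G := G) (hmin W hWproper)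
  have hTcov : ∀ w ∈ W, w ∈ T ∨ w ∈ W \ T := fun w hw => by
    by_cases h : w ∈ T
    · exact Or.inl h
    · exact Or.inr ⟨hw, h⟩
  -- if the cluster side is a clique we get a contradiction
  have killCclq : ClqS G (W \ T) → False := by
    intro hclq
    refine K1' (D ∩ T) ((W \ T) ∪ (U ∩ T)) (fun z hz => hDW hz.1) ?_
      (hTF.mono Set.inter_subset_right) ?_
    · intro w hw
      by_cases hwT : w ∈ T
      · by_cases hwD : w ∈ D
        · exact Or.inl ⟨hwD, hwT⟩
        · have hwU : w ∈ U := by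
            by_contra hc
            exact hwD ⟨hw, hc⟩
          exact Or.inr (Or.inr ⟨hwU, hwT⟩)
      · exact Or.inr (Or.inl ⟨hw, hwT⟩)
    · refine clq_union_join hclq (hUclq.mono Set.inter_subset_left) ?_
      intro c hc u'' hu''
      refine (hUadj u'' hu''.1 c hc.1 ?_).symm
      intro h
      exact hc.2 (by rw [h]; exact hu''.2)
  by_cases hDJ : ∃ D1 ⊆ D, D1.Nonempty ∧ (D \ D1).Nonempty ∧
      ∀ x ∈ D1, ∀ y ∈ D \ D1, G.Adj x y
  · -- CASE I : D is a join D1 ⊕ D2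
    obtain ⟨P0, hP0D, hP0ne, hQ0ne, hcr0⟩ := hDJ
    have mainI : ∀ P Q : Set α, P ⊆ D → Q ⊆ D → P.Nonempty → Q.Nonempty →
        (∀ d ∈ D, d ∈ P ∨ d ∈ Q) → (∀ q ∈ Q, q ∉ P) →
        (∀ p ∈ P, ∀ q ∈ Q, G.Adj p q) →
        (∀ x ∈ P, ∃ y ∈ P, y ≠ x ∧ ¬ G.Adj x y) →
        (∀ x ∈ Q, ∃ y ∈ Q, y ≠ x ∧ ¬ G.Adj x y) →
        (W \ T ⊆ P) →
        Contains G H1 ∨ Contains G H2 ∨ Contains G H4 ∨ Contains G H5 ∨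
          Contains G H13 ∨ Contains G H14 ∨ Contains G H15 ∨ Contains G H17 := by
      intro P Q hPD hQD hPne hQne hcovPQ hdisj hcrPQ hnnP hnnQ hCP
      have hPW : P ⊆ W := fun p hp => hDW (hPD hp)
      have hQW : Q ⊆ W := fun q hq => hDW (hQD hq)
      have hQT : ∀ q ∈ Q, q ∈ T := by
        intro q hq
        rcases hTcov q (hQW hq) with h | h
        · exact h
        · exact absurd (hCP h) (hdisj q hq)
      have hUT : ∀ u' ∈ U, u' ∈ T := by
        intro u' hu'
        rcases hTcov u' (hUW hu') with h | h
        · exact h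
        · exact absurd hu' (hPD (hCP h)).2
      obtain ⟨q0, hq0⟩ := hQne
      obtain ⟨q1, hq1, hq1ne, hq1nadj⟩ := hnnQ q0 hq0
      obtain ⟨a0, ha0⟩ := hPne
      obtain ⟨a1, ha1, ha1ne, ha1nadj⟩ := hnnP a0 ha0
      -- nonadjacent pair facts in P
      have hvP : ∀ p ∈ P, G.Adj v p := fun p hp => hadjv p (hPW hp)
      have hvQ : ∀ q ∈ Q, G.Adj v q := fun q hq => hadjv q (hQW hq)
      have hcovW : ∀ w ∈ W, w ∈ U ∨ w ∈ P ∨ w ∈ Q := by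
        intro w hw
        by_cases hwU : w ∈ U
        · exact Or.inl hwU
        · exact Or.inr (hcovPQ w ⟨hw, hwU⟩)
      by_cases hPT : ∃ p ∈ P, p ∈ T
      · -- branch (b2)
        obtain ⟨p0, hp0P, hp0T⟩ := hPT
        have hUno : ∀ u' ∈ U, False := by
          intro u' hu'
          exact hTF (hUT u' hu') hp0T (hQT q0 hq0)
            (hUadj u' hu' p0 (hPW hp0P) (hneDU p0 (hPD hp0P) u' hu'))
            (hcrPQ p0 hp0P q0 hq0)
            (hUadj u' hu' q0 (hQW hq0) (hneDU q0 (hQD hq0) u' hu'))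
        have hIndQ : IndS G Q := by
          intro x hx y hy hadj
          exact hTF (hQT x hx) (hQT y hy) hp0T hadj
            (hcrPQ p0 hp0P y hy).symm (hcrPQ p0 hp0P x hx).symm
        have hSPP : ¬ SPs G P := by
          rintro ⟨Q1, hQ1P, hQ1clq, hQ1ind⟩
          refine K1' ((P \ Q1) ∪ Q) Q1 ?_ ?_ (tfs_union_ind hQ1ind hIndQ) hQ1clq
          · rintro z (hz | hz)
            · exact hPW hz.1
            · exact hQW hz
          · intro w hw
            rcases hcovW w hw with hwU | hwP | hwQ
            · exact absurd hwU (fun h => hUno w h)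
            · by_cases hwQ1 : w ∈ Q1
              · exact Or.inr hwQ1
              · exact Or.inl (Or.inl ⟨hwP, hwQ1⟩)
            · exact Or.inl (Or.inr hwQ)
        have hCLP' : ¬ CLS G P := by
          intro hc
          refine K2' Q P hQW ?_ hIndQ hc
          intro w hw
          rcases hcovW w hw with hwU | hwP | hwQ
          · exact absurd hwU (fun h => hUno w h)
          · exact Or.inr hwP
          · exact Or.inl hwQ
        rcases lemR hP4 P.ncard P (Set.toFinite P) le_rfl hSPP hCLP' with hC4 | hKP | h2b
        · exact Or.inl (contains_H1_of v hC4 hq0 hq1 hq1nadj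
            (fun h => hq1ne h.symm) hcrPQ hvP hvQ)
        · refine Or.inr (Or.inr (Or.inl (contains_H4_of q0 v q1 hKP
            ((hvQ q0 hq0).symm) (hvQ q1 hq1) ?_ ?_ ?_ ?_ ?_)))
          · exact hq1nadj
          · intro h
            exact hq1ne h.symm
          · exact fun q hq => (hcrPQ q hq q0 hq0).symm
          · exact fun q hq => hvP q hq
          · exact fun q hq => (hcrPQ q hq q1 hq1).symm
        · obtain ⟨a, b, c, d, e, ma, mb, mc, md, me, hab, hcd, w1, w2, w3, w4,
            e1, e2, e3, e4, f1, f2, f3, f4⟩ := h2b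
          have h22 : Conf2K2 G ({a, b, c, d} : Set α) :=
            ⟨a, b, c, d, by simp, by simp, by simp, by simp, hab, hcd,
              w1, w2, w3, w4, e1, e2, e3, e4⟩
          have hsubP : ∀ q ∈ ({a, b, c, d} : Set α), q ∈ P := by
            intro q hq
            simp only [Set.mem_insert_iff, Set.mem_singleton_iff] at hq
            rcases hq with rfl | rfl | rfl | rfl <;> assumption
          refine Or.inr (Or.inl (contains_H2_of v q0 e q1 h22
            ((hcrPQ e me q0 hq0).symm) (hcrPQ e me q1 hq1)
            hq1nadj (fun h => hq1ne h.symm)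
            (hvQ q0 hq0) (hvP e me) (hvQ q1 hq1)
            (fun q hq => hvP q (hsubP q hq))
            (fun q hq => (hcrPQ q (hsubP q hq) q0 hq0).symm) ?_
            (fun q hq => (hcrPQ q (hsubP q hq) q1 hq1).symm)))
          intro q hq
          simp only [Set.mem_insert_iff, Set.mem_singleton_iff] at hq
          rcases hq with rfl | rfl | rfl | rfl
          · exact f1
          · exact f2
          · exact f3
          · exact f4
      · -- P ∩ T = ∅ : P is exactly the cluster side
        push_neg at hPT
        have hCLP : CLS G P := hCLS.mono (fun p hp => ⟨hPW hp, hPT p hp⟩)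
        have hTFQ : TFS G Q := hTF.mono hQT
        by_cases hUex : ∃ u', u' ∈ U
        · -- branch (b1) : a universal vertex exists
          obtain ⟨u, hu⟩ := hUex
          have hIndQ : IndS G Q := by
            intro x hx y hy hadj
            exact hTF (hUT u hu) (hQT x hx) (hQT y hy)
              (hUadj u hu x (hQW hx) (hneDU x (hQD hx) u hu)) hadj
              (hUadj u hu y (hQW hy) (hneDU y (hQD hy) u hu))
          have hSPP : ¬ SPs G P := by
            rintro ⟨Q1, hQ1P, hQ1clq, hQ1ind⟩
            refine K1' ((P \ Q1) ∪ Q) (Q1 ∪ U) ?_ ?_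
              (tfs_union_ind hQ1ind hIndQ) ?_
            · rintro z (hz | hz)
              · exact hPW hz.1
              · exact hQW hz
            · intro w hw
              rcases hcovW w hw with hwU | hwP | hwQ
              · exact Or.inr (Or.inr hwU)
              · by_cases hwQ1 : w ∈ Q1
                · exact Or.inr (Or.inl hwQ1)
                · exact Or.inl (Or.inl ⟨hwP, hwQ1⟩)
              · exact Or.inl (Or.inr hwQ)
            · refine clq_union_join hQ1clq hUclq ?_
              intro p hp u' hu'
              exact (hUadj u' hu' p (hPW (hQ1P hp)) (hneDU p (hPD (hQ1P hp)) u' hu')).symm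
          have h22 : Conf2K2 G P := by
            by_contra h22
            exact hSPP (cluster_not_sps hCLP h22)
          refine Or.inr (Or.inl (contains_H2_of v q0 u q1 h22
            ((hUadj u hu q0 (hQW hq0) (hneDU q0 (hQD hq0) u hu)).symm)
            (hUadj u hu q1 (hQW hq1) (hneDU q1 (hQD hq1) u hu))
            hq1nadj (fun h => hq1ne h.symm)
            (hvQ q0 hq0) (hadjv u (hUW hu)) (hvQ q1 hq1)
            hvP (fun q hq => (hcrPQ q hq q0 hq0).symm)
            (fun q hq => hUadj u hu q (hPW hq) (hneDU q (hPD hq) u hu))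
            (fun q hq => (hcrPQ q hq q1 hq1).symm)))
        · -- branch (b3) : no universal vertex
          have hUno : ∀ u' ∈ U, False := fun u' hu' => hUex ⟨u', hu'⟩
          have hcovW' : ∀ w ∈ W, w ∈ P ∨ w ∈ Q := by
            intro w hw
            rcases hcovW w hw with hwU | h
            · exact absurd hwU (fun h => hUno w h)
            · exact h
          have hNIndQ : ¬ IndS G Q := by
            intro hind
            refine K2' Q P hQW ?_ hind hCLP
            intro w hw
            exact (hcovW' w hw).symm
          obtain ⟨e1, he1, e2, he2, headj⟩ := not_ind_iff_edge.1 hNIndQ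
          by_cases hIndP : IndS G P
          · -- P independent : analyse Q
            have hNCLQ : ¬ CLS G Q := by
              intro hc
              refine K2' P Q hPW ?_ hIndP hc
              intro w hw
              exact hcovW' w hw
            have hSPQ : ¬ SPs G Q := by
              rintro ⟨Q2, hQ2Q, hQ2clq, hQ2ind⟩
              refine K1' (P ∪ (Q \ Q2)) Q2 ?_ ?_ (tfs_union_ind hIndP hQ2ind) hQ2clq
              · rintro z (hz | hz)
                · exact hPW hz
                · exact hQW hz.1
              · intro w hw
                rcases hcovW' w hw with hwP | hwQ
                · exact Or.inl (Or.inl hwP)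
                · by_cases hwQ2 : w ∈ Q2
                  · exact Or.inr hwQ2
                  · exact Or.inl (Or.inr ⟨hwQ, hwQ2⟩)
            rcases lemS hP4 Q.ncard Q (Set.toFinite Q) le_rfl hTFQ hSPQ hNCLQ with
              hC4 | hKP
            · exact Or.inl (contains_H1_of v hC4 ha0 ha1 ha1nadj
                (fun h => ha1ne h.symm) (fun q hq p hp => (hcrPQ p hp q hq).symm) hvQ hvP)
            · refine Or.inr (Or.inr (Or.inl (contains_H4_of a0 v a1 hKP
                ((hvP a0 ha0).symm) (hvP a1 ha1)
                ha1nadj (fun h => ha1ne h.symm)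
                (fun q hq => hcrPQ a0 ha0 q hq) hvQ
                (fun q hq => hcrPQ a1 ha1 q hq))))
          · obtain ⟨f1, hf1, f2, hf2, hfadj⟩ := not_ind_iff_edge.1 hIndP
            by_cases hSPP : SPs G P
            · have hSPQ : ¬ SPs G Q := by
                rintro ⟨Q2, hQ2Q, hQ2clq, hQ2ind⟩
                obtain ⟨Q1, hQ1P, hQ1clq, hQ1ind⟩ := hSPP
                refine K1' ((P \ Q1) ∪ (Q \ Q2)) (Q1 ∪ Q2) ?_ ?_
                  (tfs_union_ind hQ1ind hQ2ind) ?_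
                · rintro z (hz | hz)
                  · exact hPW hz.1
                  · exact hQW hz.1
                · intro w hw
                  rcases hcovW' w hw with hwP | hwQ
                  · by_cases hwQ1 : w ∈ Q1
                    · exact Or.inr (Or.inl hwQ1)
                    · exact Or.inl (Or.inl ⟨hwP, hwQ1⟩)
                  · by_cases hwQ2 : w ∈ Q2
                    · exact Or.inr (Or.inr hwQ2)
                    · exact Or.inl (Or.inr ⟨hwQ, hwQ2⟩)
                · exact clq_union_join hQ1clq hQ2clq
                    (fun p hp q hq => hcrPQ p (hQ1P hp) q (hQ2Q hq))
              have h2K2orC4 : Conf2K2 G Q ∨ ConfC4 G Q := by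
                by_contra hc
                push_neg at hc
                exact hSPQ (split_thm hP4 Q.ncard Q (Set.toFinite Q) le_rfl hc.1 hc.2)
              have hKK : ConfK2K1 G P :=
                cluster_k2k1 hCLP hf1 hf2 hfadj ha0 ha1 (fun h => ha1ne h.symm)
                  ha1nadj
              rcases h2K2orC4 with h22 | hC4
              · exact Or.inr (Or.inr (Or.inr (Or.inl
                  (contains_H5_of v hKK h22 hcrPQ hvP hvQ))))
              · exact Or.inl (contains_H1_of v hC4 ha0 ha1 ha1nadj
                  (fun h => ha1ne h.symm) (fun q hq p hp => (hcrPQ p hp q hq).symm) hvQ hvP)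
            · have h22P : Conf2K2 G P := by
                by_contra h22
                exact hSPP (cluster_not_sps hCLP h22)
              rcases tf_k2k1_or_c4 hTFQ he1 he2 headj hnnQ with hKK | hC4
              · exact Or.inr (Or.inr (Or.inr (Or.inl (contains_H5_of v hKK h22P
                  (fun q hq p hp => (hcrPQ p hp q hq).symm) hvQ hvP))))
              · exact Or.inl (contains_H1_of v hC4 ha0 ha1 ha1nadj
                  (fun h => ha1ne h.symm) (fun q hq p hp => (hcrPQ p hp q hq).symm) hvQ hvP)
    -- determine the cluster side's position
    have hcr0' : ∀ y ∈ D \ P0, ∀ x ∈ P0, G.Adj y x := fun y hy x hx => (hcr0 x hx y hy).symm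
    have hcov0 : ∀ d ∈ D, d ∈ P0 ∨ d ∈ D \ P0 := by
      intro d hd
      by_cases h : d ∈ P0
      · exact Or.inl h
      · exact Or.inr ⟨hd, h⟩
    have hnn1 : ∀ x ∈ P0, ∃ y ∈ P0, y ≠ x ∧ ¬ G.Adj x y := by
      intro x hx
      obtain ⟨y, hyD, hyne, hynadj⟩ := hDnn x (hP0D hx)
      refine ⟨y, ?_, hyne, hynadj⟩
      by_contra hyP
      exact hynadj (hcr0 x hx y ⟨hyD, hyP⟩)
    have hnn2 : ∀ x ∈ D \ P0, ∃ y ∈ D \ P0, y ≠ x ∧ ¬ G.Adj x y := by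
      intro x hx
      obtain ⟨y, hyD, hyne, hynadj⟩ := hDnn x hx.1
      refine ⟨y, ⟨hyD, fun hyP => hynadj (hcr0 y hyP x hx).symm⟩, hyne, hynadj⟩
    by_cases hCU : ∃ c ∈ W \ T, c ∈ U
    · -- cluster side contains a universal vertex : it is a clique : contradiction
      exfalso
      obtain ⟨c0, hc0C, hc0U⟩ := hCU
      refine killCclq ?_
      intro x hx y hy hne
      by_cases hxc : x = c0
      · subst hxc
        exact hUadj x hc0U y hy.1 hne.symm
      · by_cases hyc : y = c0
        · subst hyc
          exact (hUadj y hc0U x hx.1 hxc).symm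
        · exact hCLS hx hc0C hy
            ((hUadj c0 hc0U x hx.1 hxc).symm)
            (hUadj c0 hc0U y hy.1 hyc) hne
    · push_neg at hCU
      have hCDsub : ∀ c ∈ W \ T, c ∈ D := fun c hc => ⟨hc.1, hCU c hc⟩
      by_cases h1 : ∃ c ∈ W \ T, c ∈ P0
      · by_cases h2 : ∃ c ∈ W \ T, c ∈ D \ P0
        · -- cluster side meets both : it is a clique
          exfalso
          obtain ⟨c1, hc1C, hc1P⟩ := h1
          obtain ⟨c2, hc2C, hc2Q⟩ := h2
          refine killCclq ?_
          intro x hx y hy hne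
          rcases hcov0 x (hCDsub x hx) with hxP | hxQ <;>
            rcases hcov0 y (hCDsub y hy) with hyP | hyQ
          · exact hCLS hx hc2C hy (hcr0 x hxP c2 hc2Q) (hcr0 y hyP c2 hc2Q).symm hne
          · exact hcr0 x hxP y hyQ
          · exact (hcr0 y hyP x hxQ).symm
          · exact hCLS hx hc1C hy (hcr0 c1 hc1P x hxQ).symm (hcr0 c1 hc1P y hyQ) hne
        · -- cluster side inside P0
          push_neg at h2
          have hCP : W \ T ⊆ P0 := by
            intro c hc
            rcases hcov0 c (hCDsub c hc) with h | h
            · exact h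
            · exact absurd h (h2 c hc)
          exact mainI P0 (D \ P0) hP0D Set.diff_subset hP0ne hQ0ne hcov0
            (fun q hq => hq.2) hcr0 hnn1 hnn2 hCP
      · -- cluster side inside D \ P0
        push_neg at h1
        have hCP : W \ T ⊆ D \ P0 := by
          intro c hc
          rcases hcov0 c (hCDsub c hc) with h | h
          · exact absurd h (h1 c hc)
          · exact h
        exact mainI (D \ P0) P0 Set.diff_subset hP0D hQ0ne hP0ne
          (fun d hd => (hcov0 d hd).symm) (fun q hq hq' => hq'.2 hq) hcr0' hnn2 hnn1 hCP
  · -- CASE II : D has no join split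
    have hDne : D.Nonempty := by
      rw [Set.nonempty_iff_ne_empty]
      intro h
      refine K1' ∅ W (Set.empty_subset _) (fun w hw => Or.inr hw)
        (fun x hx => absurd hx (Set.notMem_empty _)) ?_
      intro a ha b hb hne
      have haU : a ∈ U := by
        by_contra hc
        have : a ∈ D := ⟨ha, hc⟩
        rw [h] at this
        exact this
      exact hUadj a haU b hb hne.symm
    obtain ⟨d0, hd0⟩ := hDne
    obtain ⟨d1, hd1, hd1ne, hd1nadj⟩ := hDnn d0 hd0
    have hDnc : ¬ ConnS G D := by
      intro hc
      exact hDJ (seinsche hP4 D.ncard D (Set.toFinite D) le_rfl hc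
        ⟨d0, hd0, d1, hd1, fun h => hd1ne h.symm⟩)
    have hUne : U.Nonempty := by
      rw [Set.nonempty_iff_ne_empty]
      intro h
      apply hDnc
      have hDWeq : D = W := by
        rw [hDdef, h]
        simp
      rw [hDWeq]
      exact hconn
    obtain ⟨u, huU⟩ := hUne
    by_cases hCD : (W \ T) ⊆ D
    · have hUT : ∀ u' ∈ U, u' ∈ T := by
        intro u' hu'
        by_contra hc
        exact (hCD ⟨hUW hu', hc⟩).2 hu'
      have hTCD : ¬ TCs G D := by
        rintro ⟨Q, hQD, hQclq, hQtf⟩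
        refine K1' (D \ Q) (Q ∪ U) (fun z hz => hDW hz.1) ?_ hQtf ?_
        · intro w hw
          by_cases hwU : w ∈ U
          · exact Or.inr (Or.inr hwU)
          · by_cases hwQ : w ∈ Q
            · exact Or.inr (Or.inl hwQ)
            · exact Or.inl ⟨⟨hw, hwU⟩, hwQ⟩
        · refine clq_union_join hQclq hUclq ?_
          intro q hq u' hu'
          exact (hUadj u' hu' q (hDW (hQD hq)) (hneDU q (hQD hq) u' hu')).symm
      by_cases hU2 : ∃ u1 ∈ U, ∃ u2 ∈ U, u1 ≠ u2
      · obtain ⟨u1, hu1, u2, hu2, hne12⟩ := hU2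
        have hDC : ∀ d ∈ D, d ∈ W \ T := by
          intro d hd
          by_contra hc
          have hdT : d ∈ T := (hTcov d (hDW hd)).resolve_right hc
          exact hTF (hUT u1 hu1) (hUT u2 hu2) hdT (hUclq hu1 hu2 hne12)
            (hUadj u2 hu2 d (hDW hd) (hneDU d hd u2 hu2))
            (hUadj u1 hu1 d (hDW hd) (hneDU d hd u1 hu1))
        have hCLD : CLS G D := hCLS.mono hDC
        have h23 : Conf2K3 G D := by
          by_contra h23
          exact hTCD (cluster_not_tcs hCLD h23)
        exact Or.inr (Or.inr (Or.inr (Or.inr (Or.inr (Or.inr (Or.inr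
          (contains_H17_of v u1 u2 h23 (hadjv u1 (hUW hu1)) (hadjv u2 (hUW hu2))
            (hUclq hu1 hu2 hne12)
            (fun p hp => hadjv p (hDW hp))
            (fun p hp => hUadj u1 hu1 p (hDW hp) (hneDU p hp u1 hu1))
            (fun p hp => hUadj u2 hu2 p (hDW hp) (hneDU p hp u2 hu2)))))))))
      · push_neg at hU2
        have hUu : ∀ u' ∈ U, u' = u := fun u' hu' => hU2 u' hu' u huU
        have hMPD : MPs G D := by
          refine ⟨D \ (W \ T), fun z hz => hz.1, ?_, ?_⟩
          · intro a ha b hb hadj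
            have haT : a ∈ T := (hTcov a (hDW ha.1)).resolve_right (fun h => ha.2 h)
            have hbT : b ∈ T := (hTcov b (hDW hb.1)).resolve_right (fun h => hb.2 h)
            exact hTF (hUT u huU) haT hbT
              (hUadj u huU a (hDW ha.1) (hneDU a ha.1 u huU)) hadj
              (hUadj u huU b (hDW hb.1) (hneDU b hb.1 u huU))
          · refine hCLS.mono ?_
            rintro z ⟨hzD, hz⟩
            by_cases hzc : z ∈ W \ T
            · exact hzc
            · exact absurd ⟨hzD, hzc⟩ hz
        have hCLD' : ¬ CLS G D := by
          intro hc
          refine K2' {u} D (fun z hz => by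
            rw [Set.mem_singleton_iff] at hz
            rw [hz]
            exact hUW huU) ?_ ?_ hc
          · intro w hw
            by_cases hwD : w ∈ D
            · exact Or.inr hwD
            · have hwU : w ∈ U := by
                by_contra hcc
                exact hwD ⟨hw, hcc⟩
              exact Or.inl (by rw [Set.mem_singleton_iff]; exact hUu w hwU)
          · intro x hx y hy hadj
            rw [Set.mem_singleton_iff] at hx hy
            rw [hx, hy] at hadj
            exact G.loopless.irrefl u hadj
        have hvuadj : G.Adj v u := hadjv u (hUW huU)
        have hvD : ∀ p ∈ D, G.Adj v p := fun p hp => hadjv p (hDW hp)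
        have huD : ∀ p ∈ D, G.Adj u p :=
          fun p hp => hUadj u huU p (hDW hp) (hneDU p hp u huU)
        rcases lemC1 hP4 D.ncard D (Set.toFinite D) le_rfl hMPD hTCD hCLD' with
          h | h | h | h | h
        · exact Or.inr (Or.inr (Or.inr (Or.inr (Or.inl
            (contains_H13_of v u hvuadj h hvD huD)))))
        · exact Or.inr (Or.inr (Or.inr (Or.inr (Or.inr (Or.inl
            (contains_H14_of v u hvuadj h hvD huD))))))
        · exact Or.inr (Or.inr (Or.inr (Or.inr (Or.inr (Or.inr (Or.inl
            (contains_H15_of v u hvuadj h hvD huD)))))))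
        · obtain ⟨a, a1, a2, a3, b1, b2, b3, ma, m1, m2, m3, m4, m5, m6,
            j1, j2, j3, j4, j5, j6, hanti, hadj6⟩ := h
          have hsub6 : ∀ p ∈ ({a1, a2, a3, b1, b2, b3} : Set α), p ∈ D := by
            intro p hp
            simp only [Set.mem_insert_iff, Set.mem_singleton_iff] at hp
            rcases hp with rfl | rfl | rfl | rfl | rfl | rfl <;> assumption
          have h23 : Conf2K3 G ({a1, a2, a3, b1, b2, b3} : Set α) :=
            ⟨a1, a2, a3, b1, b2, b3, by simp, by simp, by simp, by simp, by simp,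
              by simp, j1, j2, j3, j4, j5, j6, hanti⟩
          exact Or.inr (Or.inr (Or.inr (Or.inr (Or.inr (Or.inr (Or.inr
            (contains_H17_of v u a h23 hvuadj (hvD a ma) (huD a ma)
              (fun p hp => hvD p (hsub6 p hp))
              (fun p hp => huD p (hsub6 p hp))
              hadj6)))))))
        · obtain ⟨x, x', q1, q2, r1, r2, mx, mx', mq1, mq2, mr1, mr2,
            hnxx, hnexx, haq, har, hA, hXadj⟩ := h
          have hsub4 : ∀ p ∈ ({q1, q2, r1, r2} : Set α), p ∈ D := by
            intro p hp
            simp only [Set.mem_insert_iff, Set.mem_singleton_iff] at hp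
            rcases hp with rfl | rfl | rfl | rfl <;> assumption
          have h22 : Conf2K2 G ({q1, q2, r1, r2} : Set α) :=
            ⟨q1, q2, r1, r2, by simp, by simp, by simp, by simp, haq, har,
              (hA q1 (by simp) r1 (by simp)).1, (hA q1 (by simp) r2 (by simp)).1,
              (hA q2 (by simp) r1 (by simp)).1, (hA q2 (by simp) r2 (by simp)).1,
              (hA q1 (by simp) r1 (by simp)).2, (hA q1 (by simp) r2 (by simp)).2,
              (hA q2 (by simp) r1 (by simp)).2, (hA q2 (by simp) r2 (by simp)).2⟩
          exact Or.inr (Or.inl (contains_H2_of v x u x' h22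
            (huD x mx).symm (huD x' mx') hnxx hnexx
            (hvD x mx) hvuadj (hvD x' mx')
            (fun q hq => hvD q (hsub4 q hq))
            (fun q hq => (hXadj q hq).1)
            (fun q hq => huD q (hsub4 q hq))
            (fun q hq => (hXadj q hq).2)))
    · exfalso
      have hc0 : ∃ c0 ∈ W \ T, c0 ∉ D := by
        by_contra h
        push_neg at h
        exact hCD h
      obtain ⟨c0, hc0C, hc0D⟩ := hc0
      have hc0U : c0 ∈ U := by
        by_contra h
        exact hc0D ⟨hc0C.1, h⟩
      refine killCclq ?_
      intro x hx y hy hne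
      by_cases hxc : x = c0
      · subst hxc
        exact hUadj x hc0U y hy.1 hne.symm
      · by_cases hyc : y = c0
        · subst hyc
          exact (hUadj y hc0U x hx.1 hxc).symm
        · exact hCLS hx hc0C hy
            ((hUadj c0 hc0U x hx.1 hxc).symm)
            (hUadj c0 hc0U y hy.1 hyc) hne
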